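/- arXiv:1411.2319 — 18 statements merged into one kernel-verified Lean document; each statement's English description precedes it below -/
import Mathlib

section
/- Let n ≥ 2 be an integer, r₀ > 0, and let φ : [r₀,∞) → ℝ be differentiable and satisfy the translator profile ODE φ'(r) = (1+φ(r)²)(1 − (n−1)φ(r)/r) for all r ≥ r₀. Then for every r ≥ r₀, writing E(r) = exp(−(n−1)∫_{r₀}^{r} (1+φ(s)²)/s ds), one has the upper bound φ(r) ≤ (r/(n−1))·(1 − E(r)) + φ(r₀)·E(r). -/
open Set MeasureTheory intervalIntegral

/-- **Upper bound from monotonicity for the translator profile ODE.**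
If `φ` solves `φ'(r) = (1+φ(r)²)(1 − (n−1)φ(r)/r)` on `[r₀, ∞)` with `r₀ > 0`, then,
with `E(r) = e^{−(n−1)∫_{r₀}^r (1+φ(s)²)/s ds}`, one has
`φ(r) ≤ (r/(n−1))(1 − E(r)) + φ(r₀) E(r)` for all `r ≥ r₀`. -/
theorem translator_profile_upper_bound
    (n : ℕ) (hn : 2 ≤ n) (r₀ : ℝ) (hr₀ : 0 < r₀) (φ : ℝ → ℝ)
    (hode : ∀ r, r₀ ≤ r →
      HasDerivAt φ ((1 + φ r ^ 2) * (1 - ((n : ℝ) - 1) * φ r / r)) r) :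
    ∀ r, r₀ ≤ r →
      φ r ≤ (r / ((n : ℝ) - 1)) *
              (1 - Real.exp (-((n : ℝ) - 1) * ∫ s in r₀..r, (1 + φ s ^ 2) / s))
            + φ r₀ * Real.exp (-((n : ℝ) - 1) * ∫ s in r₀..r, (1 + φ s ^ 2) / s) := by
  intro r hr
  set c : ℝ := (n : ℝ) - 1 with hc
  have hn2 : (2 : ℝ) ≤ (n : ℝ) := by exact_mod_cast hn
  have hc1 : (1 : ℝ) ≤ c := by simp only [hc]; linarith
  have hcpos : (0 : ℝ) < c := lt_of_lt_of_le one_pos hc1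
  set f : ℝ → ℝ := fun s => (1 + φ s ^ 2) / s with hfdef
  have hφcont : ∀ x ∈ Ici r₀, ContinuousAt φ x := fun x hx => (hode x hx).continuousAt
  have hfcont : ∀ x ∈ Ici r₀, ContinuousAt f x := by
    intro x hx
    have hxne : x ≠ 0 := ne_of_gt (lt_of_lt_of_le hr₀ hx)
    exact ((continuousAt_const.add ((hφcont x hx).pow 2)).div continuousAt_id hxne)
  have hint : ∀ b, r₀ ≤ b → IntervalIntegrable f volume r₀ b := by
    intro b hb
    apply ContinuousOn.intervalIntegrable
    intro x hx
    rw [uIcc_of_le hb] at hx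
    exact (hfcont x hx.1).continuousWithinAt
  set I : ℝ → ℝ := fun x => c * ∫ s in r₀..x, f s with hIdef
  have hInonneg : ∀ x, r₀ ≤ x → 0 ≤ I x := by
    intro x hx
    apply mul_nonneg hcpos.le
    apply intervalIntegral.integral_nonneg hx
    intro s hs
    have hs0 : 0 < s := lt_of_lt_of_le hr₀ hs.1
    positivity
  have hIderiv : ∀ x ∈ Ioi r₀, HasDerivAt I (c * f x) x := by
    intro x hx
    have hx' : r₀ ≤ x := le_of_lt hx
    have h1 : HasDerivAt (fun u => ∫ s in r₀..u, f s) (f x) x := by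
      apply intervalIntegral.integral_hasDerivAt_right (hint x hx')
      · exact ContinuousOn.stronglyMeasurableAtFilter isOpen_Ioi
          (fun y hy => (hfcont y (le_of_lt hy)).continuousWithinAt) x hx
      · exact hfcont x hx'
    exact h1.const_mul c
  set h : ℝ → ℝ := fun x => (φ x - x / c) * Real.exp (I x) + x / c with hhdef
  -- h is antitone on Icc r₀ r
  have hIcont : ContinuousOn I (Icc r₀ r) := by
    apply ContinuousOn.mul continuousOn_const
    have := intervalIntegral.continuousOn_primitive_interval'
      (μ := volume) (hint r hr) (a := r₀) (left_mem_uIcc)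
    rw [uIcc_of_le hr] at this
    exact this
  have hhcont : ContinuousOn h (Icc r₀ r) := by
    apply ContinuousOn.add
    · apply ContinuousOn.mul
      · exact ContinuousOn.sub (fun x hx => (hφcont x hx.1).continuousWithinAt)
          ((continuousOn_id).div_const c)
      · exact hIcont.rexp
    · exact (continuousOn_id).div_const c
  have hhderiv : ∀ x ∈ Ioo r₀ r, HasDerivAt h ((1 - Real.exp (I x)) / c) x := by
    intro x hx
    have hx' : r₀ ≤ x := le_of_lt hx.1
    have hx0 : (0 : ℝ) < x := lt_of_lt_of_le hr₀ hx'
    have hd1 : HasDerivAt (fun y => φ y - y / c)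
        ((1 + φ x ^ 2) * (1 - c * φ x / x) - 1 / c) x :=
      (hode x hx').sub ((hasDerivAt_id x).div_const c)
    have hd2 : HasDerivAt (fun y => Real.exp (I y)) (c * f x * Real.exp (I x)) x := by
      have := (hIderiv x hx.1).exp
      convert this using 1; ring
    have hd3 : HasDerivAt h
        (((1 + φ x ^ 2) * (1 - c * φ x / x) - 1 / c) * Real.exp (I x)
          + (φ x - x / c) * (c * f x * Real.exp (I x)) + 1 / c) x :=
      (hd1.mul hd2).add ((hasDerivAt_id x).div_const c)
    convert hd3 using 1
    simp only [hfdef]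
    field_simp
    ring
  have hanti : AntitoneOn h (Icc r₀ r) := by
    have hint' : interior (Icc r₀ r) = Ioo r₀ r := interior_Icc
    apply antitoneOn_of_deriv_nonpos (convex_Icc r₀ r) hhcont
    · rw [hint']
      exact fun x hx => ((hhderiv x hx).differentiableAt).differentiableWithinAt
    · rw [hint']
      intro x hx
      rw [(hhderiv x hx).deriv]
      apply div_nonpos_of_nonpos_of_nonneg _ hcpos.le
      have : (1 : ℝ) ≤ Real.exp (I x) := Real.one_le_exp (hInonneg x (le_of_lt hx.1))
      linarith
  have hmem₀ : r₀ ∈ Icc r₀ r := ⟨le_refl _, hr⟩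
  have hmemr : r ∈ Icc r₀ r := ⟨hr, le_refl _⟩
  have key : h r ≤ h r₀ := hanti hmem₀ hmemr hr
  have hI0 : I r₀ = 0 := by simp [hIdef]
  have hhr₀ : h r₀ = φ r₀ := by simp [hhdef, hI0]
  rw [hhr₀] at key
  -- key : (φ r - r/c) * exp (I r) + r/c ≤ φ r₀
  have hEpos : 0 < Real.exp (-(I r)) := Real.exp_pos _
  have key2 : (φ r - r / c) * Real.exp (I r) ≤ φ r₀ - r / c := by
    simp only [hhdef] at key; linarith
  have key3 : φ r - r / c ≤ (φ r₀ - r / c) * Real.exp (-(I r)) := by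
    have := mul_le_mul_of_nonneg_right key2 hEpos.le
    rwa [mul_assoc, ← Real.exp_add, add_neg_cancel, Real.exp_zero, mul_one] at this
  have hEeq : Real.exp (-((n : ℝ) - 1) * ∫ s in r₀..r, (1 + φ s ^ 2) / s)
      = Real.exp (-(I r)) := by
    congr 1
    simp only [hIdef, hfdef, hc]
    ring
  rw [hEeq]
  have : (r / c) * (1 - Real.exp (-(I r))) + φ r₀ * Real.exp (-(I r))
      = r / c + (φ r₀ - r / c) * Real.exp (-(I r)) := by ring
  simp only [hc] at this ⊢
  rw [this]
  simp only [hc] at key3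
  linarith
end

section
/- Let n ≥ 2 be an integer, r₀ > 0, and let φ : [r₀,∞) → ℝ be differentiable and satisfy the translator profile ODE φ'(r) = (1+φ(r)²)(1 − (n−1)φ(r)/r) for all r ≥ r₀. If φ(r₀) ≤ 0, then for all r ∈ [r₀,∞): φ(r₀) ≤ φ(r) ≤ r/(n−1), and φ'(r) ≥ 0. -/
/-- **Global bounds for the translator profile ODE.**
If `φ` solves `φ'(r) = (1+φ(r)²)(1 − (n−1)φ(r)/r)` on `[r₀, ∞)` with `r₀ > 0` and
`φ(r₀) ≤ 0`, then for all `r ≥ r₀`: `φ(r₀) ≤ φ(r) ≤ r/(n−1)` and `φ'(r) ≥ 0`. -/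
theorem translator_profile_global_bounds
    (n : ℕ) (hn : 2 ≤ n) (r₀ : ℝ) (hr₀ : 0 < r₀) (φ : ℝ → ℝ)
    (hode : ∀ r, r₀ ≤ r →
      HasDerivAt φ ((1 + φ r ^ 2) * (1 - ((n : ℝ) - 1) * φ r / r)) r)
    (hφr₀ : φ r₀ ≤ 0) :
    ∀ r, r₀ ≤ r →
      φ r₀ ≤ φ r ∧ φ r ≤ r / ((n : ℝ) - 1) ∧
        0 ≤ (1 + φ r ^ 2) * (1 - ((n : ℝ) - 1) * φ r / r) := by
  set k : ℝ := (n : ℝ) - 1 with hkdef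
  have hk : (1 : ℝ) ≤ k := by
    have : (2 : ℝ) ≤ (n : ℝ) := by exact_mod_cast hn
    simp [hkdef]; linarith
  have hk0 : (0 : ℝ) < k := by linarith
  set ψ : ℝ → ℝ := fun r => r / k - φ r with hψdef
  have hψr₀ : 0 < ψ r₀ := by
    have : 0 < r₀ / k := div_pos hr₀ hk0
    simp only [hψdef]; linarith
  -- barrier: ψ > 0 on [r₀, ∞)
  have hbar : ∀ r, r₀ ≤ r → 0 < ψ r := by
    by_contra h
    push_neg at h
    obtain ⟨R, hRr₀, hψR⟩ := h
    set S : Set ℝ := {s | s ∈ Set.Icc r₀ R ∧ ψ s ≤ 0} with hSdef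
    have hSne : S.Nonempty := ⟨R, ⟨hRr₀, le_refl R⟩, hψR⟩
    have hSbdd : BddBelow S := ⟨r₀, fun s hs => hs.1.1⟩
    set c : ℝ := sInf S with hcdef
    have hcr₀ : r₀ ≤ c := le_csInf hSne fun s hs => hs.1.1
    have hcR : c ≤ R := csInf_le hSbdd ⟨⟨hRr₀, le_refl R⟩, hψR⟩
    have hcont : ContinuousAt ψ c := by
      have := (hode c hcr₀).continuousAt
      exact (continuousAt_id.div_const k).sub this
    have hcmem : c ∈ closure S := by
      rw [hcdef]
      exact csInf_mem_closure hSne hSbdd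
    have hψc_le : ψ c ≤ 0 := by
      have hne : (nhdsWithin c S).NeBot := mem_closure_iff_nhdsWithin_neBot.mp hcmem
      have hev : ∀ᶠ s in nhdsWithin c S, ψ s ≤ 0 := by
        filter_upwards [self_mem_nhdsWithin] with s hs
        exact hs.2
      exact le_of_tendsto (hcont.continuousWithinAt.tendsto) hev
    have hr₀c : r₀ < c := by
      rcases lt_or_eq_of_le hcr₀ with h | h
      · exact h
      · exact absurd hψc_le (by rw [← h]; linarith)
    -- ψ > 0 on [r₀, c)
    have hpos : ∀ s, r₀ ≤ s → s < c → 0 < ψ s := by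
      intro s hs hsc
      by_contra hcon
      push_neg at hcon
      have : s ∈ S := ⟨⟨hs, le_trans hsc.le hcR⟩, hcon⟩
      exact absurd (csInf_le hSbdd this) (not_le.mpr hsc)
    -- ψ c = 0
    have hψc : ψ c = 0 := by
      have hge : 0 ≤ ψ c := by
        have hne : (nhdsWithin c (Set.Ico r₀ c)).NeBot := by
          apply mem_closure_iff_nhdsWithin_neBot.mp
          rw [closure_Ico (ne_of_lt hr₀c)]
          exact ⟨hr₀c.le, le_refl c⟩
        have hev : ∀ᶠ s in nhdsWithin c (Set.Ico r₀ c), 0 ≤ ψ s := by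
          filter_upwards [self_mem_nhdsWithin] with s hs
          exact (hpos s hs.1 hs.2).le
        exact ge_of_tendsto (hcont.continuousWithinAt.tendsto) hev
      linarith
    have hφc : φ c = c / k := by
      have : c / k - φ c = 0 := hψc
      linarith
    have hc0 : (0 : ℝ) < c := lt_trans hr₀ hr₀c
    -- ψ' c = 1/k
    have hψ' : HasDerivAt ψ (1 / k) c := by
      have h1 : HasDerivAt (fun r : ℝ => r / k) (1 / k) c := (hasDerivAt_id c).div_const k
      have h2 := hode c hcr₀
      have hval : (1 + φ c ^ 2) * (1 - k * φ c / c) = 0 := by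
        rw [hφc]
        field_simp
        ring
      have := h1.sub h2
      rw [hval, sub_zero] at this
      exact this
    -- slope argument
    have hslope := hasDerivAt_iff_tendsto_slope.mp hψ'
    have hev : ∀ᶠ s in nhdsWithin c {c}ᶜ, 0 < slope ψ c s :=
      hslope.eventually (eventually_gt_nhds (by positivity))
    have hlt : nhdsWithin c (Set.Iio c) ≤ nhdsWithin c {c}ᶜ :=
      nhdsWithin_mono c fun x hx => ne_of_lt hx
    have hev2 : ∀ᶠ s in nhdsWithin c (Set.Iio c), 0 < slope ψ c s := hev.filter_mono hlt
    have hev3 : ∀ᶠ s in nhdsWithin c (Set.Iio c), r₀ < s :=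
      eventually_nhdsWithin_of_eventually_nhds (eventually_gt_nhds hr₀c)
    have hne : (nhdsWithin c (Set.Iio c)).NeBot := by
      exact nhdsLT_neBot c
    obtain ⟨s, hs1, hs2, hs3⟩ := (hev2.and (hev3.and self_mem_nhdsWithin)).exists
    -- hs1 : 0 < slope ψ c s, hs2 : r₀ < s, hs3 : s ∈ Iio c
    have hsc : s < c := hs3
    have : slope ψ c s = ψ s / (s - c) := by
      rw [slope_def_field, hψc]; ring
    rw [this] at hs1
    have hneg : ψ s < 0 := by
      by_contra hcon
      push_neg at hcon
      have : ψ s / (s - c) ≤ 0 := div_nonpos_of_nonneg_of_nonpos hcon (by linarith)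
      linarith
    exact absurd (hpos s hs2.le hsc) (not_lt.mpr hneg.le)
  -- from barrier: φ' > 0 on [r₀,∞)
  have hderiv_pos : ∀ r, r₀ ≤ r →
      0 < (1 + φ r ^ 2) * (1 - k * φ r / r) := by
    intro r hr
    have hr0 : (0 : ℝ) < r := lt_of_lt_of_le hr₀ hr
    have h1 : φ r < r / k := by
      have := hbar r hr
      simp only [hψdef] at this; linarith
    have h2 : k * φ r / r < 1 := by
      rw [div_lt_one hr0]
      calc k * φ r < k * (r / k) := by exact (mul_lt_mul_iff_right₀ hk0).mpr h1
        _ = r := by field_simp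
    have h3 : (0:ℝ) < 1 + φ r ^ 2 := by positivity
    exact mul_pos h3 (by linarith)
  -- monotone
  have hmono : MonotoneOn φ (Set.Ici r₀) := by
    apply monotoneOn_of_deriv_nonneg (convex_Ici r₀)
    · intro x hx
      exact ((hode x hx).continuousAt).continuousWithinAt
    · intro x hx
      rw [interior_Ici] at hx
      exact (hode x hx.le).differentiableAt.differentiableWithinAt
    · intro x hx
      rw [interior_Ici] at hx
      rw [(hode x hx.le).deriv]
      exact (hderiv_pos x hx.le).le
  intro r hr
  refine ⟨hmono (Set.self_mem_Ici) hr hr, ?_, (hderiv_pos r hr).le⟩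
  have := hbar r hr
  simp only [hψdef] at this; linarith
end

section
/- Let n ≥ 2 be an integer, r₀ > 0, and let φ : [r₀,∞) → ℝ be differentiable and satisfy the translator profile ODE φ'(r) = (1+φ(r)²)(1 − (n−1)φ(r)/r) for all r ≥ r₀, with φ(r₀) ≤ 0. Then there exists a sequence (r_k) with r_k → ∞ such that (n−1)·φ(r_k)/r_k → 1 as k → ∞. -/
open Filter Set Real

/-- Barrier lemma: the solution stays strictly below the line `r/(n-1)`. -/
private lemma translator_barrier
    (n : ℕ) (hn : 2 ≤ n) (r₀ : ℝ) (hr₀ : 0 < r₀) (φ : ℝ → ℝ)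
    (hode : ∀ r, r₀ ≤ r →
      HasDerivAt φ ((1 + φ r ^ 2) * (1 - ((n : ℝ) - 1) * φ r / r)) r)
    (hφr₀ : φ r₀ ≤ 0) :
    ∀ r, r₀ ≤ r → ((n : ℝ) - 1) * φ r < r := by
  have hc1 : (1:ℝ) ≤ (n : ℝ) - 1 := by
    have : (2:ℝ) ≤ (n:ℝ) := by exact_mod_cast hn
    linarith
  set c : ℝ := (n : ℝ) - 1 with hc
  have hc0 : 0 < c := lt_of_lt_of_le one_pos hc1
  by_contra h
  push_neg at h
  obtain ⟨r₂, hr₂, hle⟩ := h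
  set g : ℝ → ℝ := fun r => c * φ r - r with hg
  set S : Set ℝ := {r | r₀ ≤ r ∧ r ≤ c * φ r} with hSdef
  have hS : S.Nonempty := ⟨r₂, hr₂, hle⟩
  have hbdd : BddBelow S := ⟨r₀, fun x hx => hx.1⟩
  set r₁ := sInf S with hr₁def
  have hr₁_ge : r₀ ≤ r₁ := le_csInf hS (fun x hx => hx.1)
  have hr₁_pos : 0 < r₁ := lt_of_lt_of_le hr₀ hr₁_ge
  have hcont : ContinuousAt g r₁ :=
    ((continuousAt_const.mul (hode r₁ hr₁_ge).continuousAt).sub continuousAt_id)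
  -- `g r₁ ≥ 0`
  have hmem : 0 ≤ g r₁ := by
    have hcl : r₁ ∈ closure S := csInf_mem_closure hS hbdd
    obtain ⟨u, hu_mem, hu_tend⟩ := mem_closure_iff_seq_limit.1 hcl
    have htend : Tendsto (fun k => g (u k)) atTop (nhds (g r₁)) :=
      hcont.tendsto.comp hu_tend
    exact ge_of_tendsto' htend (fun k => sub_nonneg.2 (hu_mem k).2)
  -- `r₀ < r₁`
  have hr₁_gt : r₀ < r₁ := by
    rcases lt_or_eq_of_le hr₁_ge with h | h
    · exact h
    · exfalso
      have : 0 ≤ c * φ r₀ - r₀ := by rw [h]; exact hmem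
      have hle0 : c * φ r₀ ≤ 0 := mul_nonpos_of_nonneg_of_nonpos hc0.le hφr₀
      linarith
  -- strict negativity before `r₁`
  have hlt : ∀ r, r₀ ≤ r → r < r₁ → g r < 0 := by
    intro r hr hrlt
    have hnot : r ∉ S := fun hmem' => absurd (csInf_le hbdd hmem') (not_le.2 hrlt)
    have : ¬ (r ≤ c * φ r) := fun hle' => hnot ⟨hr, hle'⟩
    simpa [hg] using sub_neg.2 (not_le.1 this)
  -- derivative of g at r₁ is ≤ -1
  set D : ℝ := (1 + φ r₁ ^ 2) * (1 - c * φ r₁ / r₁) with hD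
  have hgder : HasDerivAt g (c * D - 1) r₁ :=
    ((hode r₁ hr₁_ge).const_mul c).sub (hasDerivAt_id r₁)
  have hDneg : c * D - 1 < 0 := by
    have h1 : r₁ ≤ c * φ r₁ := by
      have := hmem; simp only [hg] at this; linarith
    have h2 : (1:ℝ) ≤ c * φ r₁ / r₁ := (one_le_div hr₁_pos).2 h1
    have h3 : D ≤ 0 := by
      apply mul_nonpos_of_nonneg_of_nonpos
      · positivity
      · linarith
    nlinarith
  -- one-sided slope argument: slopes from the left are nonnegative
  have hslope : Tendsto (slope g r₁) (nhdsWithin r₁ (Iio r₁)) (nhds (c * D - 1)) :=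
    (hasDerivAt_iff_tendsto_slope.1 hgder).mono_left
      (nhdsWithin_mono _ (fun x hx => ne_of_lt hx))
  have hev : ∀ᶠ x in nhdsWithin r₁ (Iio r₁), 0 ≤ slope g r₁ x := by
    filter_upwards [Ioo_mem_nhdsLT_of_mem ⟨hr₁_gt, le_refl r₁⟩] with x hx
    have hx1 : g x < 0 := hlt x hx.1.le hx.2
    have hnum : g x - g r₁ < 0 := by linarith
    have hden : x - r₁ < 0 := sub_neg.2 hx.2
    rw [slope_def_field]
    exact (div_pos_of_neg_of_neg hnum hden).le
  have : 0 ≤ c * D - 1 := ge_of_tendsto hslope hev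
  linarith

/-- Escape lemma: the ratio exceeds `1 - ε` at arbitrarily large `r`. -/
private lemma translator_escape
    (n : ℕ) (hn : 2 ≤ n) (r₀ : ℝ) (hr₀ : 0 < r₀) (φ : ℝ → ℝ)
    (hode : ∀ r, r₀ ≤ r →
      HasDerivAt φ ((1 + φ r ^ 2) * (1 - ((n : ℝ) - 1) * φ r / r)) r)
    (R : ℝ) (hR : r₀ ≤ R) (ε : ℝ) (hε : 0 < ε) :
    ∃ r, R ≤ r ∧ 1 - ε < ((n : ℝ) - 1) * φ r / r := by
  by_contra h
  push_neg at h
  set c : ℝ := (n : ℝ) - 1 with hc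
  set f : ℝ → ℝ := fun r => Real.arctan (φ r) with hf
  have hder : ∀ x, R ≤ x → HasDerivAt f (1 - c * φ x / x) x := by
    intro x hx
    have h1 := (Real.hasDerivAt_arctan (φ x)).comp x (hode x (le_trans hR hx))
    have hne : (1:ℝ) + φ x ^ 2 ≠ 0 := by positivity
    rw [one_div, inv_mul_cancel_left₀ hne] at h1
    exact h1
  have hcont : ContinuousOn f (Ici R) :=
    fun x hx => (hder x hx).continuousAt.continuousWithinAt
  have hdiff : DifferentiableOn ℝ f (interior (Ici R)) := by
    intro x hx
    rw [interior_Ici] at hx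
    exact ((hder x (le_of_lt hx)).differentiableAt).differentiableWithinAt
  have hbound : ∀ x ∈ interior (Ici R), ε ≤ deriv f x := by
    intro x hx
    rw [interior_Ici] at hx
    rw [(hder x (le_of_lt hx)).deriv]
    have := h x (le_of_lt hx)
    linarith
  have key := (convex_Ici R).mul_sub_le_image_sub_of_le_deriv hcont hdiff hbound
  have hyR : R ≤ R + Real.pi / ε := by
    have : 0 < Real.pi / ε := div_pos Real.pi_pos hε
    linarith
  have h1 : ε * (R + Real.pi / ε - R) ≤ f (R + Real.pi / ε) - f R :=
    key R (self_mem_Ici) _ hyR hyR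
  have h2 : ε * (R + Real.pi / ε - R) = Real.pi := by
    field_simp
    ring
  set y : ℝ := R + Real.pi / ε
  have h3 : f y < Real.pi / 2 := Real.arctan_lt_pi_div_two _
  have h4 : -(Real.pi / 2) < f R := Real.neg_pi_div_two_lt_arctan _
  linarith

/-- **Subsequential linear growth for the translator profile ODE.**
If `φ` solves `φ'(r) = (1+φ(r)²)(1 − (n−1)φ(r)/r)` on `[r₀, ∞)` with `r₀ > 0` and
`φ(r₀) ≤ 0`, then there is a sequence `r_k → ∞` with `(n−1)φ(r_k)/r_k → 1`. -/
theorem translator_profile_subsequential_growth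
    (n : ℕ) (hn : 2 ≤ n) (r₀ : ℝ) (hr₀ : 0 < r₀) (φ : ℝ → ℝ)
    (hode : ∀ r, r₀ ≤ r →
      HasDerivAt φ ((1 + φ r ^ 2) * (1 - ((n : ℝ) - 1) * φ r / r)) r)
    (hφr₀ : φ r₀ ≤ 0) :
    ∃ r : ℕ → ℝ, Tendsto r atTop atTop ∧
      Tendsto (fun k => ((n : ℝ) - 1) * φ (r k) / r k) atTop (nhds 1) := by
  have hbar := translator_barrier n hn r₀ hr₀ φ hode hφr₀
  have hex : ∀ k : ℕ, ∃ r, max r₀ (k : ℝ) ≤ r ∧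
      1 - 1 / ((k : ℝ) + 1) < ((n : ℝ) - 1) * φ r / r := by
    intro k
    exact translator_escape n hn r₀ hr₀ φ hode (max r₀ (k : ℝ)) (le_max_left _ _)
      (1 / ((k : ℝ) + 1)) (by positivity)
  choose r hr1 hr2 using hex
  have hrge : ∀ k : ℕ, r₀ ≤ r k := fun k => (le_max_left _ _).trans (hr1 k)
  refine ⟨r, ?_, ?_⟩
  · exact tendsto_atTop_mono (fun k => (le_max_right _ _).trans (hr1 k))
      tendsto_natCast_atTop_atTop
  · have hlow : Tendsto (fun k : ℕ => 1 - 1 / ((k : ℝ) + 1)) atTop (nhds 1) := by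
      have h0 : Tendsto (fun k : ℕ => 1 / ((k : ℝ) + 1)) atTop (nhds 0) :=
        tendsto_one_div_add_atTop_nhds_zero_nat
      simpa using tendsto_const_nhds.sub h0
    apply tendsto_of_tendsto_of_tendsto_of_le_of_le hlow tendsto_const_nhds
    · intro k; exact (hr2 k).le
    · intro k
      have hpos : 0 < r k := lt_of_lt_of_le hr₀ (hrge k)
      exact le_of_lt ((div_lt_one hpos).2 (hbar (r k) (hrge k)))
end

section
/- Let n ≥ 2 be an integer, R* > 0, and let φ : [R*,∞) → ℝ be differentiable and satisfy the translator profile ODE φ'(r) = (1+φ(r)²)(1 − (n−1)φ(r)/r) for all r ≥ R*, with φ(R*) = 0. Then for every r ≥ R* the partial-integration identity holds: φ(r) = (1/(n−1))·[ r − R*·exp(−(n−1)∫_{R*}^{r} (1+φ(s)²)/s ds) ] − (1/(n−1))·∫_{R*}^{r} exp(−(n−1)∫_{t}^{r} (1+φ(s)²)/s ds) dt. -/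
/-- **Partial-integration identity for the translator profile ODE.**
If `φ` solves `φ'(r) = (1+φ(r)²)(1 − (n−1)φ(r)/r)` on `[R*, ∞)` with `R* > 0` and
`φ(R*) = 0`, then for all `r ≥ R*`:
`φ(r) = (1/(n−1))[r − R* e^{−(n−1)∫_{R*}^r (1+φ²)/s ds}]
        − (1/(n−1)) ∫_{R*}^r e^{−(n−1)∫_t^r (1+φ²)/s ds} dt`. -/
theorem translator_profile_partial_integration
    (n : ℕ) (hn : 2 ≤ n) (Rs : ℝ) (hRs : 0 < Rs) (φ : ℝ → ℝ)
    (hode : ∀ r, Rs ≤ r →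
      HasDerivAt φ ((1 + φ r ^ 2) * (1 - ((n : ℝ) - 1) * φ r / r)) r)
    (hφRs : φ Rs = 0) :
    ∀ r, Rs ≤ r →
      φ r =
        (1 / ((n : ℝ) - 1)) *
            (r - Rs * Real.exp (-((n : ℝ) - 1) * ∫ s in Rs..r, (1 + φ s ^ 2) / s))
          - (1 / ((n : ℝ) - 1)) *
            ∫ t in Rs..r, Real.exp (-((n : ℝ) - 1) * ∫ s in t..r, (1 + φ s ^ 2) / s) := by
  intro r hr
  set c : ℝ := (n : ℝ) - 1 with hcdef
  have hn2 : (2 : ℝ) ≤ (n : ℝ) := by exact_mod_cast hn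
  have hc0 : 0 < c := by rw [hcdef]; linarith
  have hcne : c ≠ 0 := ne_of_gt hc0
  set g : ℝ → ℝ := fun s => (1 + φ (max s Rs) ^ 2) / max s Rs with hgdef
  have hφcont : ∀ t, Rs ≤ t → ContinuousAt φ t := fun t ht => (hode t ht).continuousAt
  have hgcont : Continuous g := by
    rw [continuous_iff_continuousAt]
    intro x
    have hmax : ContinuousAt (fun s : ℝ => max s Rs) x :=
      (continuous_id.max continuous_const).continuousAt
    have h1 : ContinuousAt (fun s : ℝ => φ (max s Rs)) x := by
      show ContinuousAt (φ ∘ fun s : ℝ => max s Rs) x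
      exact ContinuousAt.comp (x := x) (g := φ) (f := fun s : ℝ => max s Rs) (hφcont _ (le_max_right x Rs)) hmax
    have h2 : (max x Rs) ≠ 0 := ne_of_gt (lt_of_lt_of_le hRs (le_max_right x Rs))
    exact (continuousAt_const.add (h1.pow 2)).div hmax h2
  have hgeq : ∀ s, Rs ≤ s → g s = (1 + φ s ^ 2) / s := by
    intro s hs; simp [hgdef, max_eq_left hs]
  set a : ℝ → ℝ := fun u => ∫ s in Rs..u, g s with hadef
  have ha : ∀ t : ℝ, HasDerivAt a (g t) t := by
    intro t
    exact intervalIntegral.integral_hasDerivAt_right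
      (hgcont.intervalIntegrable _ _)
      (hgcont.stronglyMeasurable.stronglyMeasurableAtFilter)
      hgcont.continuousAt
  have hacont : Continuous a := by
    rw [continuous_iff_continuousAt]; exact fun t => (ha t).continuousAt
  -- the integrating-factor function
  set F : ℝ → ℝ := fun t => Real.exp (c * a t) * (c * φ t - t) with hFdef
  have hF : ∀ t ∈ Set.uIcc Rs r, HasDerivAt F (-Real.exp (c * a t)) t := by
    intro t ht
    rw [Set.uIcc_of_le hr] at ht
    have htRs : Rs ≤ t := ht.1
    have ht0 : (0 : ℝ) < t := lt_of_lt_of_le hRs htRs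
    have h1 : HasDerivAt (fun u => Real.exp (c * a u)) (Real.exp (c * a t) * (c * g t)) t :=
      ((ha t).const_mul c).exp
    have h2 : HasDerivAt (fun u => c * φ u - u)
        (c * ((1 + φ t ^ 2) * (1 - c * φ t / t)) - 1) t :=
      ((hode t htRs).const_mul c).sub (hasDerivAt_id t)
    have h3 := h1.mul h2
    refine h3.congr_deriv ?_
    rw [hgeq t htRs]
    field_simp
    ring
  have hint : IntervalIntegrable (fun t => -Real.exp (c * a t)) MeasureTheory.volume Rs r :=
    ((Real.continuous_exp.comp (continuous_const.mul hacont)).neg).intervalIntegrable _ _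
  have hFTC := intervalIntegral.integral_eq_sub_of_hasDerivAt hF hint
  rw [intervalIntegral.integral_neg] at hFTC
  have haRs : a Rs = 0 := intervalIntegral.integral_same
  have hFRs : F Rs = -Rs := by simp [hFdef, haRs, hφRs]
  have key : (∫ t in Rs..r, Real.exp (c * a t))
      = -(Real.exp (c * a r) * (c * φ r - r)) - Rs := by
    have h : F r = Real.exp (c * a r) * (c * φ r - r) := rfl
    rw [h, hFRs] at hFTC
    linarith
  -- rewrite the inner integrals
  have hsub : ∀ t ∈ Set.uIcc Rs r, (∫ s in t..r, (1 + φ s ^ 2) / s) = a r - a t := by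
    intro t ht
    rw [Set.uIcc_of_le hr] at ht
    have h1 : (∫ s in t..r, (1 + φ s ^ 2) / s) = ∫ s in t..r, g s := by
      apply intervalIntegral.integral_congr
      intro s hs
      rw [Set.uIcc_of_le ht.2] at hs
      exact (hgeq s (le_trans ht.1 hs.1)).symm
    rw [h1, hadef]
    rw [intervalIntegral.integral_interval_sub_left
      (hgcont.intervalIntegrable Rs r) (hgcont.intervalIntegrable Rs t)]
  have haRsr : (∫ s in Rs..r, (1 + φ s ^ 2) / s) = a r := by
    have := hsub Rs (Set.left_mem_uIcc)
    rw [this, haRs, sub_zero]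
  have houter : (∫ t in Rs..r, Real.exp (-c * ∫ s in t..r, (1 + φ s ^ 2) / s))
      = Real.exp (-(c * a r)) * ∫ t in Rs..r, Real.exp (c * a t) := by
    rw [← intervalIntegral.integral_const_mul]
    apply intervalIntegral.integral_congr
    intro t ht
    dsimp only
    rw [hsub t ht, ← Real.exp_add]
    congr 1
    ring
  rw [haRsr, houter, key]
  have hexp : Real.exp (-c * a r) = (Real.exp (c * a r))⁻¹ := by
    rw [← Real.exp_neg]; ring_nf
  rw [show (-(c * a r)) = -c * a r by ring, hexp]
  have hE := Real.exp_ne_zero (c * a r)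
  field_simp
  ring
end

section
/- Let n ≥ 2 be an integer, R* > 0, and let φ : [R*,∞) → ℝ be differentiable and satisfy the translator profile ODE φ'(r) = (1+φ(r)²)(1 − (n−1)φ(r)/r) for all r ≥ R*, with φ(R*) = 0. Then for every r ≥ R*: φ(r) ≥ (r−R*)/(n−1) − √((n−1)/2) · ( ∫_{R*}^{r} t/(1+φ(t)²) dt )^{1/2}. -/
open Filter Set intervalIntegral

lemma posPart_sq_hasDerivAt {f : ℝ → ℝ} {f' x : ℝ} (hf : HasDerivAt f f' x) :
    HasDerivAt (fun y => max (f y) 0 ^ 2) (2 * max (f x) 0 * f') x := by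
  rcases lt_trichotomy (f x) 0 with h | h | h
  · have h1 : ∀ᶠ y in nhds x, max (f y) 0 ^ 2 = (0 : ℝ) := by
      filter_upwards [hf.continuousAt.eventually_lt_const h] with y hy
      simp [max_eq_right hy.le]
    have h2 : HasDerivAt (fun _ : ℝ => (0 : ℝ)) 0 x := hasDerivAt_const x 0
    have := h2.congr_of_eventuallyEq (h1.mono fun y hy => hy)
    simpa [max_eq_right h.le] using this
  · -- f x = 0 case
    have key : Tendsto (slope (fun y => max (f y) 0 ^ 2) x) (nhdsWithin x {x}ᶜ) (nhds 0) := by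
      have hs : Tendsto (slope f x) (nhdsWithin x {x}ᶜ) (nhds f') :=
        hasDerivAt_iff_tendsto_slope.mp hf
      have hv : Tendsto (fun y => |f y|) (nhdsWithin x {x}ᶜ) (nhds 0) := by
        have := (hf.continuousAt.tendsto.mono_left nhdsWithin_le_nhds :
          Tendsto f (nhdsWithin x {x}ᶜ) (nhds (f x)))
        rw [h] at this
        simpa using this.abs
      have hb : Tendsto (fun y => |slope f x y| * |f y|) (nhdsWithin x {x}ᶜ) (nhds 0) := by
        simpa using (hs.abs.mul hv)
      apply squeeze_zero_norm' _ hb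
      filter_upwards [self_mem_nhdsWithin] with y hy
      have hyx : y ≠ x := hy
      have e1 : slope (fun y => max (f y) 0 ^ 2) x y = max (f y) 0 ^ 2 / (y - x) := by
        rw [slope_def_field, h]
        norm_num
      have e2 : slope f x y = f y / (y - x) := by rw [slope_def_field, h, sub_zero]
      rw [e1, e2, Real.norm_eq_abs, abs_div, abs_div, div_mul_eq_mul_div]
      have h2 : |max (f y) 0 ^ 2| ≤ |f y| * |f y| := by
        rw [abs_of_nonneg (by positivity : (0:ℝ) ≤ max (f y) 0 ^ 2), abs_mul_abs_self]
        rcases le_total (f y) 0 with h' | h'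
        · rw [max_eq_right h']; nlinarith
        · rw [max_eq_left h']; nlinarith
      gcongr
    have := hasDerivAt_iff_tendsto_slope.mpr key
    simpa [h] using this
  · have h1 : ∀ᶠ y in nhds x, max (f y) 0 ^ 2 = f y ^ 2 := by
      filter_upwards [hf.continuousAt.eventually_const_lt h] with y hy
      simp [max_eq_left hy.le]
    have h2 : HasDerivAt (fun y => f y ^ 2) (2 * f x ^ 1 * f') x := hf.pow 2
    have := h2.congr_of_eventuallyEq (h1.mono fun y hy => hy)
    have heq : 2 * f x ^ 1 * f' = 2 * max (f x) 0 * f' := by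
      rw [max_eq_left h.le]; ring
    rw [← heq]; exact this

lemma aux_num (N t d Q Rs : ℝ) (hN1 : 1 ≤ N) (ht0 : 0 < t) (hD : 0 < d)
    (hQ0 : 0 ≤ Q) (hRs : 0 < Rs) :
    0 ≤ N ^ 2 * t ^ 2 / 2 - 2 * d * t * (1 + Q) + 2 * N * d * (1 + Q) ^ 2 * (N * d + Rs) := by
  have hN0 : (0:ℝ) < N := lt_of_lt_of_le one_pos hN1
  have h1 : 2 * (N * d * (1 + Q)) ^ 2 ≤ 2 * N * d * (1 + Q) ^ 2 * (N * d + Rs) := by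
    nlinarith [mul_nonneg (mul_nonneg (mul_nonneg hN0.le hD.le) (sq_nonneg (1 + Q))) hRs.le]
  have h2 : 2 * d * t * (1 + Q) ≤ 2 * t * (N * d * (1 + Q)) := by
    nlinarith [mul_pos (mul_pos hD ht0) (by positivity : (0:ℝ) < 1 + Q)]
  have h3 : t ^ 2 ≤ N ^ 2 * t ^ 2 := by
    nlinarith [mul_nonneg (by nlinarith : (0:ℝ) ≤ N ^ 2 - 1) (sq_nonneg t)]
  have h4 : 0 ≤ t ^ 2 - 4 * t * (N * d * (1 + Q)) + 4 * (N * d * (1 + Q)) ^ 2 := by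
    nlinarith [sq_nonneg (t - 2 * (N * d * (1 + Q)))]
  linarith [h1, h2, h3, h4]

set_option maxHeartbeats 1000000 in
/-- **Cauchy–Schwarz lower bound for the translator profile ODE.**
If `φ` solves `φ'(r) = (1+φ(r)²)(1 − (n−1)φ(r)/r)` on `[R*, ∞)` with `R* > 0` and
`φ(R*) = 0`, then for all `r ≥ R*`:
`φ(r) ≥ (r−R*)/(n−1) − √((n−1)/2) (∫_{R*}^r t/(1+φ(t)²) dt)^{1/2}`. -/
theorem translator_profile_cauchy_schwarz_bound
    (n : ℕ) (hn : 2 ≤ n) (Rs : ℝ) (hRs : 0 < Rs) (φ : ℝ → ℝ)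
    (hode : ∀ r, Rs ≤ r →
      HasDerivAt φ ((1 + φ r ^ 2) * (1 - ((n : ℝ) - 1) * φ r / r)) r)
    (hφRs : φ Rs = 0) :
    ∀ r, Rs ≤ r →
      (r - Rs) / ((n : ℝ) - 1)
          - Real.sqrt (((n : ℝ) - 1) / 2) *
              Real.sqrt (∫ t in Rs..r, t / (1 + φ t ^ 2)) ≤ φ r := by
  intro r hr
  set N : ℝ := (n : ℝ) - 1 with hNdef
  have hn2 : (2 : ℝ) ≤ (n : ℝ) := by exact_mod_cast hn
  have hN1 : (1 : ℝ) ≤ N := by simp only [hNdef]; linarith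
  have hN0 : (0 : ℝ) < N := lt_of_lt_of_le one_pos hN1
  -- continuous extension of φ
  set ψ : ℝ → ℝ := fun t => φ (max t Rs) with hψdef
  have hψφ : ∀ t, Rs ≤ t → ψ t = φ t := by
    intro t ht; simp [hψdef, max_eq_left ht]
  have hψc : Continuous ψ := by
    rw [continuous_iff_continuousAt]
    intro t
    have h1 : ContinuousAt (fun s : ℝ => max s Rs) t :=
      (continuous_id.max continuous_const).continuousAt
    exact ContinuousAt.comp (g := φ) (hode _ (le_max_right t Rs)).continuousAt h1
  set f : ℝ → ℝ := fun t => t / (1 + ψ t ^ 2) with hfdef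
  have hfc : Continuous f := by
    apply continuous_id.div (by continuity)
    intro t; positivity
  set B : ℝ → ℝ := fun t => ∫ s in Rs..t, f s with hBdef
  have hBd : ∀ t : ℝ, HasDerivAt B (f t) t := fun t =>
    (hfc.integral_hasStrictDerivAt Rs t).hasDerivAt
  set D : ℝ → ℝ := fun t => (t - Rs) / N - φ t with hDdef
  have hDd : ∀ t, Rs ≤ t →
      HasDerivAt D (1 / N - (1 + φ t ^ 2) * (1 - N * φ t / t)) t := by
    intro t ht
    have h1 : HasDerivAt (fun s : ℝ => (s - Rs) / N) (1 / N) t := by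
      simpa using ((hasDerivAt_id t).sub_const Rs).div_const N
    exact h1.sub (hode t ht)
  set W : ℝ → ℝ := fun t => N / 2 * B t - max (D t) 0 ^ 2 with hWdef
  have hWd : ∀ t, Rs ≤ t → HasDerivAt W
      (N / 2 * f t - 2 * max (D t) 0 * (1 / N - (1 + φ t ^ 2) * (1 - N * φ t / t))) t := by
    intro t ht
    exact ((hBd t).const_mul (N / 2)).sub (posPart_sq_hasDerivAt (hDd t ht))
  -- monotonicity
  have hmono : MonotoneOn W (Icc Rs r) := by
    apply monotoneOn_of_deriv_nonneg (convex_Icc Rs r)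
    · intro t ht
      exact (hWd t ht.1).continuousAt.continuousWithinAt
    · intro t ht
      rw [interior_Icc] at ht
      exact ((hWd t ht.1.le).differentiableAt).differentiableWithinAt
    · intro t ht
      rw [interior_Icc] at ht
      have htRs : Rs < t := ht.1
      have ht0 : (0 : ℝ) < t := lt_trans hRs htRs
      rw [(hWd t htRs.le).deriv]
      have hft : f t = t / (1 + φ t ^ 2) := by rw [hfdef]; simp [hψφ t htRs.le]
      rw [hft]
      rcases le_or_gt (D t) 0 with hD | hD
      · rw [max_eq_right hD]
        have : (0:ℝ) ≤ N / 2 * (t / (1 + φ t ^ 2)) := by positivity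
        simpa using this
      · rw [max_eq_left hD.le]
        set d := D t with hd
        set Q := φ t ^ 2 with hQ
        have hQ0 : (0 : ℝ) ≤ Q := sq_nonneg _
        have hode_rw : 1 - N * φ t / t = (N * d + Rs) / t := by
          have : φ t = (t - Rs) / N - d := by rw [hd, hDdef]; ring
          rw [this]
          field_simp
          ring
        rw [hode_rw]
        have hpos : (0 : ℝ) < N * t * (1 + Q) := by positivity
        have hprod : (N / 2 * (t / (1 + Q)) -
            2 * d * (1 / N - (1 + Q) * ((N * d + Rs) / t))) * (N * t * (1 + Q)) =
            N ^ 2 * t ^ 2 / 2 - 2 * d * t * (1 + Q) + 2 * N * d * (1 + Q) ^ 2 * (N * d + Rs) := by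
          field_simp
          ring
        have hnum : 0 ≤ N ^ 2 * t ^ 2 / 2 - 2 * d * t * (1 + Q)
            + 2 * N * d * (1 + Q) ^ 2 * (N * d + Rs) :=
          aux_num N t d Q Rs hN1 ht0 hD hQ0 hRs
        have := (mul_nonneg_iff_of_pos_right hpos).mp (hprod ▸ hnum)
        linarith [this]
  have hWRs : W Rs = 0 := by
    simp [hWdef, hBdef, hDdef, integral_same, hφRs]
  have hkey : max (D r) 0 ^ 2 ≤ N / 2 * B r := by
    have := hmono (left_mem_Icc.mpr hr) (right_mem_Icc.mpr hr) hr
    rw [hWRs] at this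
    simp only [hWdef] at this
    linarith
  have hint_eq : (∫ t in Rs..r, t / (1 + φ t ^ 2)) = B r := by
    rw [hBdef]
    apply intervalIntegral.integral_congr
    intro t ht
    rw [uIcc_of_le hr] at ht
    simp [hfdef, hψφ t ht.1]
  have hmax : max (D r) 0 ≤ Real.sqrt (N / 2) * Real.sqrt (B r) := by
    rw [← Real.sqrt_mul (by positivity : (0:ℝ) ≤ N / 2)]
    calc max (D r) 0 = Real.sqrt (max (D r) 0 ^ 2) :=
          (Real.sqrt_sq (le_max_right _ _)).symm
      _ ≤ Real.sqrt (N / 2 * B r) := Real.sqrt_le_sqrt hkey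
  have hDle : D r ≤ max (D r) 0 := le_max_left _ _
  have : D r = (r - Rs) / N - φ r := rfl
  rw [hint_eq]
  have := hDle.trans hmax
  simp only [hDdef] at this
  linarith
end

section
/- Let n ≥ 2 be an integer, R* > 0, and let φ : [R*,∞) → ℝ be differentiable and satisfy the translator profile ODE φ'(r) = (1+φ(r)²)(1 − (n−1)φ(r)/r) for all r ≥ R*, with φ(R*) = 0. Set α_n = 1 − 1/√(2(n−1)). Then for every r ≥ R*: φ(r) ≥ α_n·(r−R*)/(n−1) ≥ (r−R*)/(4(n−1)); and if moreover n ≥ 3, then φ(r) ≥ (r−R*)/(2(n−1)). -/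
set_option maxHeartbeats 1000000 in
/-- **First linear lower bound for the translator profile ODE.**
If `φ` solves `φ'(r) = (1+φ(r)²)(1 − (n−1)φ(r)/r)` on `[R*, ∞)` with `R* > 0` and
`φ(R*) = 0`, and `αₙ = 1 − 1/√(2(n−1))`, then for all `r ≥ R*`:
`φ(r) ≥ αₙ(r−R*)/(n−1) ≥ (r−R*)/(4(n−1))`, and if `n ≥ 3` also
`φ(r) ≥ (r−R*)/(2(n−1))`. -/
theorem translator_profile_linear_lower_bound
    (n : ℕ) (hn : 2 ≤ n) (Rs : ℝ) (hRs : 0 < Rs) (φ : ℝ → ℝ)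
    (hode : ∀ r, Rs ≤ r →
      HasDerivAt φ ((1 + φ r ^ 2) * (1 - ((n : ℝ) - 1) * φ r / r)) r)
    (hφRs : φ Rs = 0)
    (α : ℝ) (hα : α = 1 - 1 / Real.sqrt (2 * ((n : ℝ) - 1))) :
    ∀ r, Rs ≤ r →
      α * (r - Rs) / ((n : ℝ) - 1) ≤ φ r ∧
      (r - Rs) / (4 * ((n : ℝ) - 1)) ≤ α * (r - Rs) / ((n : ℝ) - 1) ∧
      (3 ≤ n → (r - Rs) / (2 * ((n : ℝ) - 1)) ≤ φ r) := by
  have hn' : (2 : ℝ) ≤ (n : ℝ) := by exact_mod_cast hn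
  set N : ℝ := (n : ℝ) - 1 with hNdef
  have hN1 : (1 : ℝ) ≤ N := by simp [hNdef]; linarith
  have hNpos : 0 < N := lt_of_lt_of_le one_pos hN1
  set s : ℝ := Real.sqrt (2 * N) with hsdef
  have h2N : (2 : ℝ) ≤ 2 * N := by linarith
  have hspos : 0 < s := Real.sqrt_pos.2 (by linarith)
  have hs_sq : s ^ 2 = 2 * N := Real.sq_sqrt (by linarith)
  have hs1 : 1 < s := by nlinarith [hs_sq, hspos]
  have hsn : s < (n : ℝ) := by
    have h : 2 * N < (n : ℝ) ^ 2 := by nlinarith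
    nlinarith [hs_sq, hspos]
  have hα1 : α = 1 - 1 / s := by rw [hα, hsdef]
  have hαs : α * s = s - 1 := by rw [hα1]; field_simp
  have hαpos : 0 < α := by
    rw [hα1]
    have : 1 / s < 1 := by rw [div_lt_one hspos]; exact hs1
    linarith
  have hα14 : (1 : ℝ) / 4 ≤ α := by
    have hs43 : (4 : ℝ) / 3 ≤ s := by nlinarith [hs_sq, hspos, sq_nonneg (s - 4/3)]
    have : 1 / s ≤ 3 / 4 := by
      rw [div_le_iff₀ hspos]; linarith
    rw [hα1]; linarith
  set c : ℝ := α / N with hcdef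
  have hcpos : 0 < c := div_pos hαpos hNpos
  have hc_lt : c < 1 - α := by
    have h1 : 1 - α = 1 / s := by rw [hα1]; ring
    rw [h1, hcdef, div_lt_div_iff₀ hNpos hspos]
    nlinarith [hαs, hsn]
  intro r hr
  have hrRs : 0 ≤ r - Rs := by linarith
  have key : ∀ x ∈ Set.Icc Rs r, c * (x - Rs) ≤ φ x := by
    have hf : ContinuousOn (fun x => c * (x - Rs)) (Set.Icc Rs r) := by fun_prop
    have hf' : ∀ x ∈ Set.Ico Rs r,
        HasDerivWithinAt (fun x => c * (x - Rs)) c (Set.Ici x) x := fun x _ => by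
      simpa using (((hasDerivAt_id x).sub_const Rs).const_mul c).hasDerivWithinAt
    have ha : c * (Rs - Rs) ≤ φ Rs := by simp [hφRs]
    have hB : ContinuousOn φ (Set.Icc Rs r) := fun x hx =>
      ((hode x hx.1).continuousAt).continuousWithinAt
    have hB' : ∀ x ∈ Set.Ico Rs r,
        HasDerivWithinAt φ ((1 + φ x ^ 2) * (1 - N * φ x / x)) (Set.Ici x) x :=
      fun x hx => (hode x hx.1).hasDerivWithinAt
    have bound : ∀ x ∈ Set.Ico Rs r, c * (x - Rs) = φ x →
        c < (1 + φ x ^ 2) * (1 - N * φ x / x) := by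
      intro x hx heq
      have hxRs : Rs ≤ x := hx.1
      have hx0 : 0 < x := lt_of_lt_of_le hRs hxRs
      have hφx : φ x = c * (x - Rs) := heq.symm
      have hφnn : 0 ≤ φ x := by
        rw [hφx]; exact mul_nonneg hcpos.le (by linarith)
      have hNc : N * c = α := by rw [hcdef]; field_simp
      have hfrac : N * φ x / x ≤ α := by
        rw [div_le_iff₀ hx0, hφx]
        nlinarith [hNc, hαpos, hRs]
      have h1 : 1 - α ≤ 1 - N * φ x / x := by linarith
      have hone : (1 : ℝ) ≤ 1 + φ x ^ 2 := by nlinarith [sq_nonneg (φ x)]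
      have h1α : (0 : ℝ) ≤ 1 - α := le_of_lt (by linarith [hc_lt, hcpos])
      have hmm := mul_le_mul hone h1 h1α (by linarith)
      calc c < 1 - α := hc_lt
        _ = 1 * (1 - α) := (one_mul _).symm
        _ ≤ (1 + φ x ^ 2) * (1 - N * φ x / x) := hmm
    exact image_le_of_deriv_right_lt_deriv_boundary' hf hf' ha hB hB' bound
  have hmain : α * (r - Rs) / N ≤ φ r := by
    have heq : α * (r - Rs) / N = c * (r - Rs) := by rw [hcdef]; ring
    rw [heq]
    exact key r ⟨hr, le_refl r⟩
  refine ⟨hmain, ?_, ?_⟩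
  · rw [div_le_div_iff₀ (by positivity) hNpos]
    nlinarith [mul_nonneg (mul_nonneg hrRs hNpos.le)
      (by linarith : (0:ℝ) ≤ 4 * α - 1)]
  · intro hn3
    have hα12 : (1 : ℝ) / 2 ≤ α := by
      have hn3' : (3 : ℝ) ≤ (n : ℝ) := by exact_mod_cast hn3
      have hs2 : (2 : ℝ) ≤ s := by nlinarith [hs_sq, hspos, sq_nonneg (s - 2)]
      have h12 : 1 / s ≤ 1 / 2 := by
        rw [div_le_div_iff₀ hspos (by norm_num)]; linarith
      rw [hα1]; linarith
    have h2 : (r - Rs) / (2 * N) ≤ α * (r - Rs) / N := by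
      rw [div_le_div_iff₀ (by positivity) hNpos]
      nlinarith [mul_nonneg (mul_nonneg hrRs hNpos.le)
        (by linarith : (0:ℝ) ≤ 2 * α - 1)]
    linarith
end

section
/- Let n ≥ 2 be an integer, R* > 0, and let φ : [R*,∞) → ℝ be differentiable and satisfy the translator profile ODE φ'(r) = (1+φ(r)²)(1 − (n−1)φ(r)/r) for all r ≥ R*, with φ(R*) = 0. Set α_n = 1 − 1/√(2(n−1)) and V(r) = ∫_{R*}^{r} φ(t) dt. Then for every r ≥ R*: V(r) ≥ (α_n/(2(n−1)))·(r−R*)². -/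
/-- **Quadratic lower bound for the height function of the translator profile.**
If `φ` solves `φ'(r) = (1+φ(r)²)(1 − (n−1)φ(r)/r)` on `[R*, ∞)` with `R* > 0` and
`φ(R*) = 0`, `αₙ = 1 − 1/√(2(n−1))` and `V(r) = ∫_{R*}^r φ`, then for all `r ≥ R*`:
`V(r) ≥ (αₙ/(2(n−1)))(r−R*)²`. -/
theorem translator_profile_height_quadratic_bound
    (n : ℕ) (hn : 2 ≤ n) (Rs : ℝ) (hRs : 0 < Rs) (φ : ℝ → ℝ)
    (hode : ∀ r, Rs ≤ r →
      HasDerivAt φ ((1 + φ r ^ 2) * (1 - ((n : ℝ) - 1) * φ r / r)) r)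
    (hφRs : φ Rs = 0)
    (α : ℝ) (hα : α = 1 - 1 / Real.sqrt (2 * ((n : ℝ) - 1)))
    (V : ℝ → ℝ) (hV : ∀ r, V r = ∫ t in Rs..r, φ t) :
    ∀ r, Rs ≤ r →
      α / (2 * ((n : ℝ) - 1)) * (r - Rs) ^ 2 ≤ V r := by
  intro r hr
  have hn1 : (1 : ℝ) ≤ (n : ℝ) - 1 := by
    have : (2 : ℝ) ≤ (n : ℝ) := by exact_mod_cast hn
    linarith
  have hn1pos : (0 : ℝ) < (n : ℝ) - 1 := by linarith
  set s : ℝ := Real.sqrt (2 * ((n : ℝ) - 1)) with hsdef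
  have hs1 : 1 < s := by
    rw [show (1 : ℝ) = Real.sqrt 1 from Real.sqrt_one.symm]
    exact Real.sqrt_lt_sqrt (by norm_num) (by linarith)
  have hspos : (0 : ℝ) < s := by linarith
  have hsq : s ^ 2 = 2 * ((n : ℝ) - 1) := Real.sq_sqrt (by linarith)
  have hsn : s < (n : ℝ) := by
    nlinarith [hsq, hspos, hn1pos, sq_nonneg ((n : ℝ) - 1)]
  have hαpos : 0 < α := by
    rw [hα]
    have : 1 / s < 1 := by rw [div_lt_one hspos]; exact hs1
    linarith
  have hα1 : α < 1 := by
    rw [hα]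
    have : 0 < 1 / s := by positivity
    linarith
  set m : ℝ := α / ((n : ℝ) - 1) with hm
  have hmpos : 0 < m := div_pos hαpos hn1pos
  have hnm : ((n : ℝ) - 1) * m = α := by
    rw [hm]; field_simp
  -- key inequality: m < 1 - α
  have key : m < 1 - α := by
    have h1α : 1 - α = 1 / s := by rw [hα]; ring
    rw [hm, h1α, div_lt_div_iff₀ hn1pos hspos, hα]
    have hαs : (1 - 1 / s) * s = s - 1 := by field_simp
    rw [hαs]
    linarith
  -- comparison: φ x ≥ m * (x - Rs) on [Rs, r]
  have lower : ∀ x ∈ Set.Icc Rs r, m * (x - Rs) ≤ φ x := by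
    intro x hx
    refine image_le_of_deriv_right_lt_deriv_boundary'
      (f := fun x => m * (x - Rs)) (f' := fun _ => m)
      (B := φ) (B' := fun x => (1 + φ x ^ 2) * (1 - ((n : ℝ) - 1) * φ x / x))
      (a := Rs) (b := r) ?_ ?_ ?_ ?_ ?_ ?_ hx
    · exact (continuous_const.mul (continuous_id.sub continuous_const)).continuousOn
    · intro x hx
      have := ((hasDerivWithinAt_id x (Set.Ici x)).sub_const Rs).const_mul m
      simpa using this
    · simp [hφRs]
    · exact fun x hx => (hode x hx.1).continuousAt.continuousWithinAt
    · exact fun x hx => (hode x hx.1).hasDerivWithinAt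
    · intro x hx heq
      have hx0 : 0 < x := lt_of_lt_of_le hRs hx.1
      have hφx : φ x = m * (x - Rs) := heq.symm
      have hφnn : 0 ≤ φ x := by
        rw [hφx]
        have : 0 ≤ x - Rs := by linarith [hx.1]
        positivity
      have hfrac : ((n : ℝ) - 1) * φ x / x ≤ α := by
        rw [div_le_iff₀ hx0, hφx]
        nlinarith [hx.1, hαpos.le]
      have h1 : (0:ℝ) ≤ φ x ^ 2 := sq_nonneg _
      nlinarith [mul_nonneg h1 (sub_nonneg.2 hfrac), hfrac, key, h1]
  -- integrate the lower bound
  have hcont : ContinuousOn φ (Set.Icc Rs r) :=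
    fun x hx => (hode x hx.1).continuousAt.continuousWithinAt
  have hintφ : IntervalIntegrable φ MeasureTheory.volume Rs r :=
    ContinuousOn.intervalIntegrable_of_Icc hr hcont
  have hintl : IntervalIntegrable (fun t => m * (t - Rs)) MeasureTheory.volume Rs r :=
    (continuous_const.mul (continuous_id.sub continuous_const)).intervalIntegrable Rs r
  have hle : (∫ t in Rs..r, m * (t - Rs)) ≤ ∫ t in Rs..r, φ t :=
    intervalIntegral.integral_mono_on hr hintl hintφ lower
  have hcalc : (∫ t in Rs..r, m * (t - Rs)) = m * (r - Rs) ^ 2 / 2 := by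
    rw [intervalIntegral.integral_const_mul]
    have h1 : (∫ t in Rs..r, (t - Rs)) = (r - Rs) ^ 2 / 2 := by
      rw [intervalIntegral.integral_sub (continuous_id'.intervalIntegrable _ _) intervalIntegrable_const,
        integral_id, intervalIntegral.integral_const, smul_eq_mul]
      ring
    rw [h1]
    ring
  rw [hV r]
  have : α / (2 * ((n : ℝ) - 1)) * (r - Rs) ^ 2 = m * (r - Rs) ^ 2 / 2 := by
    rw [hm, div_mul_eq_mul_div, div_mul_eq_mul_div, div_div, mul_comm ((n : ℝ) - 1) 2]
  rw [this, ← hcalc]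
  exact hle
end

section
/- Let n ≥ 2 be an integer, R* > 0, and let φ : [R*,∞) → ℝ be differentiable and satisfy the translator profile ODE φ'(r) = (1+φ(r)²)(1 − (n−1)φ(r)/r) for all r ≥ R*, with φ(R*) = 0. Set α_n = 1 − 1/√(2(n−1)) and β_n = α_n/(n−1). Then for every r ≥ R*: ∫_{R*}^{r} t/(1+φ(t)²) dt ≤ log(1 + β_n²(r−R*)²)/(2β_n²) + (R*/β_n)·arctan(β_n(r−R*)). -/
set_option maxHeartbeats 1000000 in
/-- **Logarithmic bound on the weighted integral for the translator profile.**
If `φ` solves `φ'(r) = (1+φ(r)²)(1 − (n−1)φ(r)/r)` on `[R*, ∞)` with `R* > 0` and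
`φ(R*) = 0`, `αₙ = 1 − 1/√(2(n−1))`, `βₙ = αₙ/(n−1)`, then for all `r ≥ R*`:
`∫_{R*}^r t/(1+φ(t)²) dt ≤ log(1+βₙ²(r−R*)²)/(2βₙ²) + (R*/βₙ) arctan(βₙ(r−R*))`. -/
theorem translator_profile_weighted_integral_bound
    (n : ℕ) (hn : 2 ≤ n) (Rs : ℝ) (hRs : 0 < Rs) (φ : ℝ → ℝ)
    (hode : ∀ r, Rs ≤ r →
      HasDerivAt φ ((1 + φ r ^ 2) * (1 - ((n : ℝ) - 1) * φ r / r)) r)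
    (hφRs : φ Rs = 0)
    (α β : ℝ) (hα : α = 1 - 1 / Real.sqrt (2 * ((n : ℝ) - 1)))
    (hβ : β = α / ((n : ℝ) - 1)) :
    ∀ r, Rs ≤ r →
      (∫ t in Rs..r, t / (1 + φ t ^ 2)) ≤
        Real.log (1 + β ^ 2 * (r - Rs) ^ 2) / (2 * β ^ 2)
          + (Rs / β) * Real.arctan (β * (r - Rs)) := by
  intro r hr
  -- basic constants
  have hm : (1 : ℝ) ≤ (n : ℝ) - 1 := by
    have : (2 : ℝ) ≤ (n : ℝ) := by exact_mod_cast hn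
    linarith
  have hm0 : (0 : ℝ) < (n : ℝ) - 1 := by linarith
  set m : ℝ := (n : ℝ) - 1 with hmdef
  have hs0 : (0 : ℝ) < Real.sqrt (2 * m) := Real.sqrt_pos.2 (by linarith)
  have hs1 : (1 : ℝ) < Real.sqrt (2 * m) := by
    have h1 : (1 : ℝ) < 2 * m := by linarith
    calc (1 : ℝ) = Real.sqrt 1 := by simp
    _ < Real.sqrt (2 * m) := Real.sqrt_lt_sqrt (by norm_num) h1
  have hα_pos : 0 < α := by
    rw [hα]
    have : 1 / Real.sqrt (2 * m) < 1 := by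
      rw [div_lt_one hs0]; exact hs1
    linarith
  have hα_lt : α < 1 := by
    rw [hα]
    have : 0 < 1 / Real.sqrt (2 * m) := by positivity
    linarith
  have hβ_pos : 0 < β := by rw [hβ]; positivity
  -- key: β < 1 - α
  have hs_le : Real.sqrt (2 * m) ≤ m + 1 := by
    have h2 : 2 * m ≤ (m + 1) ^ 2 := by nlinarith
    calc Real.sqrt (2 * m) ≤ Real.sqrt ((m + 1) ^ 2) := Real.sqrt_le_sqrt h2
    _ = m + 1 := by rw [Real.sqrt_sq (by linarith)]
  have hβ_le : β ≤ 1 - α := by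
    have h1α : 1 - α = 1 / Real.sqrt (2 * m) := by rw [hα]; ring
    rw [hβ, h1α]
    rw [div_le_div_iff₀ hm0 hs0]
    have : α * Real.sqrt (2 * m) ≤ 1 * (m + 1) := by
      have := mul_le_mul hα_lt.le hs_le (le_of_lt hs0) (by norm_num)
      linarith
    have hα' : α = 1 - 1 / Real.sqrt (2 * m) := hα
    have h1 : α * Real.sqrt (2 * m) = Real.sqrt (2 * m) - 1 := by
      rw [hα']
      field_simp
    rw [h1]
    nlinarith [Real.sq_sqrt (show (0:ℝ) ≤ 2 * m by linarith), hs1]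
  -- lower bound: β * (t - Rs) ≤ φ t on [Rs, r]
  have hφcont : ∀ x ∈ Set.Icc Rs r, ContinuousAt φ x := fun x hx =>
    (hode x hx.1).continuousAt
  have key : ∀ t ∈ Set.Icc Rs r, β * (t - Rs) ≤ φ t := by
    intro t ht
    refine image_le_of_deriv_right_lt_deriv_boundary'
      (f := fun x => β * (x - Rs)) (f' := fun _ => β)
      (a := Rs) (b := r)
      (by fun_prop)
      (fun x _ => by simpa using ((hasDerivWithinAt_id x _).sub_const Rs).const_mul β)
      (by simp [hφRs])
      (fun x hx => (hφcont x hx).continuousWithinAt)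
      (fun x hx => (hode x hx.1).hasDerivWithinAt)
      ?_ ht
    intro x hx heq
    -- at touching points: β < φ'(x)
    have hx0 : 0 < x := lt_of_lt_of_le hRs hx.1
    have hφx : φ x = β * (x - Rs) := heq.symm
    have hφnn : 0 ≤ φ x := by
      rw [hφx]
      exact mul_nonneg hβ_pos.le (by linarith [hx.1])
    have hfrac : m * φ x / x ≤ α := by
      rw [hφx]
      rw [div_le_iff₀ hx0]
      have h1 : β * (x - Rs) ≤ β * x := by nlinarith
      have h2 : m * (β * x) = α * x := by
        rw [hβ]; field_simp
      nlinarith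
    have h1φ : 1 ≤ 1 + φ x ^ 2 := by nlinarith
    have hα1 : 1 - m * φ x / x ∈ Set.Icc (1 - α) 1 := by
      constructor
      · linarith
      · have : 0 ≤ m * φ x / x := by positivity
        linarith
    have hge : 1 - α < (1 + φ x ^ 2) * (1 - m * φ x / x) := by
      rcases eq_or_lt_of_le hφnn with h0 | h0
      · rw [← h0]
        simp
        linarith
      · have hp2 : 0 < φ x ^ 2 := by positivity
        nlinarith [hα1.1, mul_pos hp2 (show (0:ℝ) < 1 - α by linarith)]
    calc β ≤ 1 - α := hβ_le
    _ < (1 + φ x ^ 2) * (1 - m * φ x / x) := hge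
  -- antiderivative of the comparison integrand
  set F : ℝ → ℝ := fun t =>
    Real.log (1 + β ^ 2 * (t - Rs) ^ 2) / (2 * β ^ 2)
      + (Rs / β) * Real.arctan (β * (t - Rs)) with hF
  have hFderiv : ∀ t : ℝ, HasDerivAt F (t / (1 + β ^ 2 * (t - Rs) ^ 2)) t := by
    intro t
    have hpos : 0 < 1 + β ^ 2 * (t - Rs) ^ 2 := by positivity
    have hinner : HasDerivAt (fun t : ℝ => 1 + β ^ 2 * (t - Rs) ^ 2)
        (β ^ 2 * (2 * (t - Rs))) t := by
      have h1 : HasDerivAt (fun t : ℝ => (t - Rs) ^ 2) (2 * (t - Rs) ^ 1 * 1) t :=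
        ((hasDerivAt_id t).sub_const Rs).pow 2
      have := (h1.const_mul (β ^ 2)).const_add 1
      simpa [mul_comm, mul_assoc, mul_left_comm] using this
    have hlog : HasDerivAt (fun t : ℝ => Real.log (1 + β ^ 2 * (t - Rs) ^ 2))
        (β ^ 2 * (2 * (t - Rs)) / (1 + β ^ 2 * (t - Rs) ^ 2)) t :=
      hinner.log (ne_of_gt hpos)
    have hatan : HasDerivAt (fun t : ℝ => Real.arctan (β * (t - Rs)))
        (β / (1 + (β * (t - Rs)) ^ 2)) t := by
      have hlin : HasDerivAt (fun t : ℝ => β * (t - Rs)) β t := by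
        simpa using ((hasDerivAt_id t).sub_const Rs).const_mul β
      have := (Real.hasDerivAt_arctan (β * (t - Rs))).comp t hlin
      simpa [div_eq_mul_inv, mul_comm] using hlin.arctan
    have hsum := (hlog.div_const (2 * β ^ 2)).add (hatan.const_mul (Rs / β))
    refine hsum.congr_deriv ?_
    have hβ2 : β ^ 2 ≠ 0 := by positivity
    have hb : (β * (t - Rs)) ^ 2 = β ^ 2 * (t - Rs) ^ 2 := by ring
    rw [hb]
    field_simp
    ring
  -- compute the comparison integral
  have hcontg : Continuous fun t : ℝ => t / (1 + β ^ 2 * (t - Rs) ^ 2) := by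
    apply Continuous.div continuous_id (by fun_prop)
    intro t; positivity
  have hφCO : ContinuousOn φ (Set.Icc Rs r) := fun x hx =>
    (hφcont x hx).continuousWithinAt
  have hcontf : ContinuousOn (fun t => t / (1 + φ t ^ 2)) (Set.Icc Rs r) := by
    apply ContinuousOn.div continuousOn_id
    · exact continuousOn_const.add (hφCO.pow 2)
    · intro t _; positivity
  have hint : (∫ t in Rs..r, t / (1 + β ^ 2 * (t - Rs) ^ 2)) = F r - F Rs := by
    apply intervalIntegral.integral_eq_sub_of_hasDerivAt
      (fun t _ => hFderiv t)
    exact hcontg.intervalIntegrable Rs r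
  have hFRs : F Rs = 0 := by simp [hF]
  -- monotone comparison of integrals
  have hmono : (∫ t in Rs..r, t / (1 + φ t ^ 2)) ≤
      ∫ t in Rs..r, t / (1 + β ^ 2 * (t - Rs) ^ 2) := by
    apply intervalIntegral.integral_mono_on hr
    · exact (hcontf.mono (by rw [Set.uIcc_of_le hr])).intervalIntegrable
    · exact hcontg.intervalIntegrable Rs r
    · intro x hx
      have hb := key x hx
      have hx0 : 0 ≤ x := le_of_lt (lt_of_lt_of_le hRs hx.1)
      have hden : 1 + β ^ 2 * (x - Rs) ^ 2 ≤ 1 + φ x ^ 2 := by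
        have h2 : 0 ≤ β * (x - Rs) := mul_nonneg hβ_pos.le (by linarith [hx.1])
        nlinarith
      exact div_le_div_of_nonneg_left hx0 (by positivity) hden
  calc (∫ t in Rs..r, t / (1 + φ t ^ 2)) ≤
      ∫ t in Rs..r, t / (1 + β ^ 2 * (t - Rs) ^ 2) := hmono
  _ = F r - F Rs := hint
  _ = F r := by rw [hFRs]; ring
  _ = _ := by rw [hF]
end

section
/- Let n ≥ 2 be an integer, R* > 0, and let φ : [R*,∞) → ℝ be differentiable and satisfy the translator profile ODE φ'(r) = (1+φ(r)²)(1 − (n−1)φ(r)/r) for all r ≥ R*, with φ(R*) = 0. Set α_n = 1 − 1/√(2(n−1)) and β_n = α_n/(n−1). Then for every r ≥ R*: φ(r) ≥ (r−R*)/(n−1) − √((n−1)/2) · ( log(1 + β_n²(r−R*)²)/(2β_n²) + πR*/(2β_n) )^{1/2}. -/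
private lemma translator_aux_contact1 (m β α Rs s : ℝ) (hRs : 0 < Rs) (hs : 0 ≤ s)
    (hβpos : 0 < β) (hβ1 : β < 1) (hαpos : 0 < α) (hα1 : α < 1)
    (hβα : β ≤ 1 - α) (hmβ : m * β = α) :
    β < (1 + (β*s)^2) * (1 - m*(β*s)/(Rs+s)) := by
  have hy0 : 0 < Rs + s := by linarith
  rcases hs.lt_or_eq with hspos | hzero
  · have hrw : m * (β * s) / (Rs + s) = α * (s / (Rs + s)) := by
      rw [show m * (β * s) / (Rs + s) = (m*β) * (s/(Rs+s)) by ring, hmβ]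
    rw [hrw]
    have hty : s / (Rs + s) < 1 := by rw [div_lt_one hy0]; linarith
    have hty0 : 0 < s / (Rs + s) := div_pos hspos hy0
    have hc : 1 - α < 1 - α * (s/(Rs+s)) := by nlinarith only [hty, hty0, hαpos]
    have hc0 : 0 < 1 - α * (s/(Rs+s)) := by linarith only [hc, hα1]
    have hq := mul_nonneg (sq_nonneg (β*s)) hc0.le
    nlinarith only [hq, hc, hβα]
  · rw [← hzero]
    norm_num
    linarith

private lemma translator_aux_T (a q X m s : ℝ) (ha : 0 < a) (hq : 0 < q) (hX : 0 < X)
    (ham : a * a = m/2) :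
    a * (1/(2*q) * (s/X)) = m*s/(4*(a*q)*X) := by
  have e : a * (1/(2*q) * (s/X)) = (a*s)/(2*(q*X)) := by ring
  rw [e, div_eq_div_iff (by positivity) (by positivity)]
  linear_combination (4*s*q*X) * ham

private lemma translator_aux_core (m u s Rs β : ℝ) (hm : 1 ≤ m) (hRs : 0 < Rs)
    (hspos : 0 < s) (hu : 0 < u) :
    1/m < (1 + β^2*s^2) * ((Rs + m*u)/(Rs+s)) + m*s/(4*u*(1 + β^2*s^2)) := by
  have hm0 : 0 < m := by linarith
  have hy0 : 0 < Rs + s := by linarith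
  have hX0 : (0:ℝ) < 1 + β^2*s^2 := by positivity
  have hXpos : (0:ℝ) ≤ β^2*s^2 := by positivity
  set c := Real.sqrt (s*(Rs+s)) with hc_def
  have hc2 : c^2 = s*(Rs+s) := Real.sq_sqrt (by positivity)
  have hc0 : 0 ≤ c := Real.sqrt_nonneg _
  have hcs : s < c := by
    have h1 : s^2 < s*(Rs+s) := by nlinarith only [hspos, hRs]
    nlinarith only [hc2, hc0, h1, hspos]
  have e1 : (1 + β^2*s^2) * ((Rs + m*u)/(Rs+s)) + m*s/(4*u*(1 + β^2*s^2))
      = ((1 + β^2*s^2)*(Rs + m*u)*(4*u*(1 + β^2*s^2)) + m*s*(Rs+s))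
        / ((Rs+s)*(4*u*(1 + β^2*s^2))) := by
    field_simp
  rw [e1, div_lt_div_iff₀ hm0 (by positivity)]
  have hc2m : m^2*c^2 = m^2*(s*(Rs+s)) := by rw [hc2]
  have k1 : 4*m^2*u^2*(1 + β^2*s^2)^2 + m^2*(s*(Rs+s)) ≥ 4*m^2*u*(1 + β^2*s^2)*c := by
    linarith only [sq_nonneg (2*m*u*(1 + β^2*s^2) - m*c), hc2m]
  have hsc : s < m^2*c := by
    have h1 : (0:ℝ) ≤ (m^2 - 1)*c := mul_nonneg (by nlinarith only [hm]) hc0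
    linarith only [h1, hcs]
  have k2 : 4*u*(1 + β^2*s^2)*s < 4*m^2*u*(1 + β^2*s^2)*c := by
    have h4 : (0:ℝ) < 4*u*(1 + β^2*s^2) := by positivity
    have := mul_lt_mul_of_pos_left hsc h4
    nlinarith only [this]
  have hm1X : (1:ℝ) ≤ m*(1 + β^2*s^2) := by nlinarith only [mul_nonneg hm0.le hXpos, hm]
  have k3 : 4*u*(1 + β^2*s^2)*Rs ≤ 4*m*u*(1 + β^2*s^2)^2*Rs := by
    have h5 := mul_nonneg (mul_nonneg (show (0:ℝ) ≤ 4*u*Rs by positivity)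
      (show (0:ℝ) ≤ 1 + β^2*s^2 by positivity)) (sub_nonneg.mpr hm1X)
    nlinarith only [h5]
  nlinarith only [k1, k2, k3]

set_option maxHeartbeats 1000000 in
/-- **Refined logarithmic lower bound for the translator profile ODE.**
If `φ` solves `φ'(r) = (1+φ(r)²)(1 − (n−1)φ(r)/r)` on `[R*, ∞)` with `R* > 0` and
`φ(R*) = 0`, `αₙ = 1 − 1/√(2(n−1))`, `βₙ = αₙ/(n−1)`, then for all `r ≥ R*`:
`φ(r) ≥ (r−R*)/(n−1) − √((n−1)/2) (log(1+βₙ²(r−R*)²)/(2βₙ²) + πR*/(2βₙ))^{1/2}`. -/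
theorem translator_profile_refined_log_bound
    (n : ℕ) (hn : 2 ≤ n) (Rs : ℝ) (hRs : 0 < Rs) (φ : ℝ → ℝ)
    (hode : ∀ r, Rs ≤ r →
      HasDerivAt φ ((1 + φ r ^ 2) * (1 - ((n : ℝ) - 1) * φ r / r)) r)
    (hφRs : φ Rs = 0)
    (α β : ℝ) (hα : α = 1 - 1 / Real.sqrt (2 * ((n : ℝ) - 1)))
    (hβ : β = α / ((n : ℝ) - 1)) :
    ∀ r, Rs ≤ r →
      (r - Rs) / ((n : ℝ) - 1)
        - Real.sqrt (((n : ℝ) - 1) / 2) *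
            Real.sqrt (Real.log (1 + β ^ 2 * (r - Rs) ^ 2) / (2 * β ^ 2)
              + Real.pi * Rs / (2 * β)) ≤ φ r := by
  intro r hr
  have hn' : (2:ℝ) ≤ (n:ℝ) := by exact_mod_cast hn
  set m : ℝ := (n:ℝ) - 1 with hmdef
  have hm : 1 ≤ m := by simp only [hmdef]; linarith
  have hm0 : 0 < m := by linarith
  have hsq2 : (1:ℝ) < Real.sqrt (2*m) := by
    rw [show (1:ℝ) = Real.sqrt 1 by simp]
    exact Real.sqrt_lt_sqrt (by norm_num) (by linarith)
  have hspos : (0:ℝ) < Real.sqrt (2*m) := lt_trans one_pos hsq2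
  have hαpos : 0 < α := by
    rw [hα]
    have : 1 / Real.sqrt (2*m) < 1 := by rw [div_lt_one hspos]; exact hsq2
    linarith
  have hα1 : α < 1 := by
    rw [hα]
    have : 0 < 1 / Real.sqrt (2*m) := by positivity
    linarith
  have hβpos : 0 < β := by rw [hβ]; positivity
  have hβ1 : β < 1 := by
    rw [hβ, div_lt_one hm0]; linarith
  have hβ0 : β ≠ 0 := ne_of_gt hβpos
  have hmβ : m * β = α := by rw [hβ]; field_simp
  have hβα : β ≤ 1 - α := by
    have hs2 : Real.sqrt (2*m) ^ 2 = 2*m := Real.sq_sqrt (by linarith)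
    have key : α * Real.sqrt (2*m) ≤ 1 * m := by
      rw [hα]
      have h1 : (1 - 1/Real.sqrt (2*m)) * Real.sqrt (2*m) = Real.sqrt (2*m) - 1 := by
        field_simp
      rw [h1, one_mul]
      nlinarith only [sq_nonneg (Real.sqrt (2*m) - 1), hs2]
    have h1α : 1 - α = 1 / Real.sqrt (2*m) := by rw [hα]; ring
    rw [hβ, h1α, div_le_div_iff₀ hm0 hspos]
    exact key
  -- Lemma 1: linear lower barrier
  have lin : ∀ x, Rs ≤ x → β * (x - Rs) ≤ φ x := by
    intro x hx
    have main : ∀ z ∈ Set.Icc Rs x, (fun y => β * (y - Rs)) z ≤ φ z := by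
      intro z hz
      refine image_le_of_deriv_right_lt_deriv_boundary'
        (f := fun y => β * (y - Rs)) (f' := fun _ => β)
        (B := φ) (B' := fun y => (1 + φ y ^ 2) * (1 - m * φ y / y))
        ?_ ?_ ?_ ?_ ?_ ?_ hz
      · exact (continuous_const.mul (continuous_id.sub continuous_const)).continuousOn
      · intro y _
        simpa using ((((hasDerivAt_id y).sub_const Rs).const_mul β).hasDerivWithinAt :
          HasDerivWithinAt _ (β * 1) (Set.Ici y) y)
      · simp [hφRs]
      · exact fun y hy => (hode y hy.1).continuousAt.continuousWithinAt
      · exact fun y hy => (hode y hy.1).hasDerivWithinAt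
      · intro y hy heq
        obtain ⟨hy1, _⟩ := hy
        obtain ⟨s, rfl⟩ : ∃ s, y = Rs + s := ⟨y - Rs, by ring⟩
        have hs0 : 0 ≤ s := by linarith
        simp only [add_sub_cancel_left] at heq ⊢
        rw [← heq]
        exact translator_aux_contact1 m β α Rs s hRs hs0 hβpos hβ1 hαpos hα1 hβα hmβ
    simpa using main x ⟨hx, le_refl x⟩
  -- Setup for Lemma 2
  set Lf : ℝ → ℝ := fun y => Real.log (1 + β^2*(y - Rs)^2)/(2*β^2) + Real.pi*Rs/(2*β)
    with hLf
  have hargpos : ∀ y : ℝ, (0:ℝ) < 1 + β^2*(y - Rs)^2 := fun y => by positivity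
  have hLpos : ∀ y : ℝ, 0 < Lf y := by
    intro y
    have h1 : 0 ≤ Real.log (1 + β^2*(y-Rs)^2) :=
      Real.log_nonneg (by nlinarith only [sq_nonneg (β*(y-Rs))])
    have h2 : 0 < Real.pi*Rs/(2*β) := by
      have := Real.pi_pos
      positivity
    have h3 : 0 ≤ Real.log (1 + β^2*(y-Rs)^2)/(2*β^2) := by positivity
    simp only [hLf]
    linarith
  have hL' : ∀ y : ℝ, HasDerivAt Lf ((y - Rs)/(1 + β^2*(y-Rs)^2)) y := by
    intro y
    have h0 : HasDerivAt (fun z : ℝ => (z - Rs)^2) (2*(y-Rs)) y := by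
      simpa using ((hasDerivAt_id y).sub_const Rs).fun_pow 2
    have h1 : HasDerivAt (fun z : ℝ => 1 + β^2*(z - Rs)^2) (β^2*(2*(y-Rs))) y := by
      simpa using (h0.const_mul (β^2)).const_add 1
    have h2 : HasDerivAt (fun z : ℝ => Real.log (1 + β^2*(z-Rs)^2))
        ((1 + β^2*(y-Rs)^2)⁻¹ * (β^2*(2*(y-Rs)))) y :=
      by have := (Real.hasDerivAt_log (ne_of_gt (hargpos y))).comp y h1; exact this
    have h3 := (h2.div_const (2*β^2)).add_const (Real.pi*Rs/(2*β))
    refine h3.congr_deriv ?_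
    have := hargpos y
    field_simp
  have hsqL : ∀ y : ℝ, HasDerivAt (fun z => Real.sqrt (Lf z))
      (1/(2*Real.sqrt (Lf y)) * ((y - Rs)/(1 + β^2*(y-Rs)^2))) y :=
    fun y => (Real.hasDerivAt_sqrt (ne_of_gt (hLpos y))).comp y (hL' y)
  have hG : ∀ y : ℝ, HasDerivAt (fun z => (z - Rs)/m - Real.sqrt (m/2) * Real.sqrt (Lf z))
      (1/m - Real.sqrt (m/2) * (1/(2*Real.sqrt (Lf y)) * ((y - Rs)/(1 + β^2*(y-Rs)^2)))) y := by
    intro y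
    have h1 : HasDerivAt (fun z : ℝ => (z - Rs)/m) (1/m) y := by
      simpa using ((hasDerivAt_id y).sub_const Rs).div_const m
    exact h1.sub ((hsqL y).const_mul (Real.sqrt (m/2)))
  -- Lemma 2 via fencing
  have main : ∀ z ∈ Set.Icc Rs r,
      (fun y => (y - Rs)/m - Real.sqrt (m/2) * Real.sqrt (Lf y)) z ≤ φ z := by
    intro z hz
    refine image_le_of_deriv_right_lt_deriv_boundary'
      (f := fun y => (y - Rs)/m - Real.sqrt (m/2) * Real.sqrt (Lf y))
      (f' := fun y => 1/m - Real.sqrt (m/2) * (1/(2*Real.sqrt (Lf y)) * ((y - Rs)/(1 + β^2*(y-Rs)^2))))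
      (B := φ) (B' := fun y => (1 + φ y ^ 2) * (1 - m * φ y / y))
      ?_ ?_ ?_ ?_ ?_ ?_ hz
    · exact fun y _ => (hG y).continuousAt.continuousWithinAt
    · exact fun y _ => (hG y).hasDerivWithinAt
    · have h1 : 0 ≤ Real.sqrt (m/2) * Real.sqrt (Lf Rs) := by positivity
      rw [hφRs]
      show (Rs - Rs)/m - Real.sqrt (m/2) * Real.sqrt (Lf Rs) ≤ 0
      have h2 : (Rs - Rs)/m = 0 := by simp
      rw [h2]
      linarith
    · exact fun y hy => (hode y hy.1).continuousAt.continuousWithinAt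
    · exact fun y hy => (hode y hy.1).hasDerivWithinAt
    · intro y hy heq
      obtain ⟨hy1, _⟩ := hy
      obtain ⟨s, rfl⟩ : ∃ s, y = Rs + s := ⟨y - Rs, by ring⟩
      have hs0 : 0 ≤ s := by linarith
      have hy0 : 0 < Rs + s := by linarith
      simp only [add_sub_cancel_left] at heq ⊢
      set u := Real.sqrt (m/2) * Real.sqrt (Lf (Rs+s)) with hu_def
      have hq : 0 < Real.sqrt (Lf (Rs+s)) := Real.sqrt_pos.mpr (hLpos _)
      have hu : 0 < u := by positivity
      have hφy : φ (Rs+s) = s/m - u := heq.symm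
      have hspos : 0 < s := by
        rcases hs0.lt_or_eq with h | h
        · exact h
        · exfalso
          rw [← h] at hφy
          simp at hφy
          rw [hφRs] at hφy
          linarith
      have hβs : β * s ≤ φ (Rs+s) := by simpa using lin (Rs+s) (by linarith)
      have hφ0 : 0 ≤ φ (Rs+s) := le_trans (by positivity) hβs
      -- rewrite the ODE side
      have hP : 1 - m * φ (Rs+s) / (Rs+s) = (Rs + m*u)/(Rs+s) := by
        rw [hφy]
        field_simp
        ring
      have hφsq : 1 + β^2*s^2 ≤ 1 + φ (Rs+s)^2 := by
        nlinarith only [hβs, mul_nonneg hβpos.le hspos.le]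
      have hPge : (1 + β^2*s^2) * ((Rs + m*u)/(Rs+s)) ≤
          (1 + φ (Rs+s)^2) * (1 - m * φ (Rs+s) / (Rs+s)) := by
        rw [hP]
        exact mul_le_mul_of_nonneg_right hφsq (by positivity)
      -- rewrite the barrier derivative term
      have ha2 : Real.sqrt (m/2) * Real.sqrt (m/2) = m/2 := Real.mul_self_sqrt (by positivity)
      have hT : Real.sqrt (m/2) * (1/(2*Real.sqrt (Lf (Rs+s))) * (s/(1 + β^2*s^2)))
          = m*s/(4*(Real.sqrt (m/2) * Real.sqrt (Lf (Rs+s)))*(1 + β^2*s^2)) :=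
        translator_aux_T _ _ _ m s (by positivity) hq (by positivity) ha2
      have core := translator_aux_core m u s Rs β hm hRs hspos hu
      rw [hT, ← hu_def]
      linarith only [core, hPge]
  have := main r ⟨hr, le_refl r⟩
  simpa [hLf] using this
end

section
/- Let n ≥ 2 be an integer, R* > 0, and let φ : [R*,∞) → ℝ be differentiable and satisfy the translator profile ODE φ'(r) = (1+φ(r)²)(1 − (n−1)φ(r)/r) for all r ≥ R*, with φ(R*) = 0. Set α_n = 1 − 1/√(2(n−1)). Then for every r ≥ R*: φ(r) ≥ (r−R*)/(n−1) − 2/(α_n²·r) − 3R*/(n−1) ≥ (r−4R*)/(n−1) − 24/r. -/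
open Set

lemma translator_aux (m Rs : ℝ) (hm : 1 ≤ m) (hRs : 0 < Rs) (φ : ℝ → ℝ)
    (hode : ∀ r, Rs ≤ r → HasDerivAt φ ((1 + φ r ^ 2) * (1 - m * φ r / r)) r)
    (hφRs : φ Rs = 0) (α : ℝ) (hα0 : 0 < α) (hαm : α ≤ (1 - α) * m) :
    ∀ r, Rs ≤ r → r / m - φ r ≤ 4 * Rs / m + (2 / α ^ 2) * r⁻¹ := by
  have hm0 : (0:ℝ) < m := lt_of_lt_of_le one_pos hm
  have hα1 : α < 1 := by nlinarith
  -- Step A : φ x ≥ α (x - Rs) / m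
  have stepA : ∀ x, Rs ≤ x → α * (x - Rs) / m ≤ φ x := by
    intro r hr
    have H := image_le_of_deriv_right_lt_deriv_boundary'
      (f := fun y => α * (y - Rs) / m) (f' := fun _ => α / m) (a := Rs) (b := r)
      (B := φ) (B' := fun y => (1 + φ y ^ 2) * (1 - m * φ y / y))
      (by fun_prop)
      (fun x hx => by
        have h : HasDerivAt (fun y => α * (y - Rs) / m) (α * 1 / m) x :=
          (((hasDerivAt_id x).sub_const Rs).const_mul α).div_const m
        simpa using h.hasDerivWithinAt)
      (by simp [hφRs])
      (fun x hx => ((hode x hx.1).continuousAt).continuousWithinAt)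
      (fun x hx => (hode x hx.1).hasDerivWithinAt)
      ?_
    · exact H ⟨hr, le_rfl⟩
    · intro x hx heq
      have hx0 : (0:ℝ) < x := lt_of_lt_of_le hRs hx.1
      rw [← heq]
      have hkey : m * (α * (x - Rs) / m) = α * (x - Rs) := by field_simp
      have h2 : 1 - m * (α * (x - Rs) / m) / x = 1 - α * (x - Rs) / x := by rw [hkey]
      rw [h2]
      have h3 : α * (x - Rs) / x < α := by rw [div_lt_iff₀ hx0]; nlinarith
      have h4 : 0 ≤ α * (x - Rs) / x :=
        div_nonneg (mul_nonneg hα0.le (by linarith [hx.1])) hx0.le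
      have h5 : α / m ≤ 1 - α := by rw [div_le_iff₀ hm0]; linarith
      calc α / m ≤ 1 - α := h5
        _ < 1 - α * (x - Rs) / x := by linarith
        _ ≤ (1 + (α * (x - Rs) / m) ^ 2) * (1 - α * (x - Rs) / x) :=
            le_mul_of_one_le_left (by linarith) (by nlinarith [sq_nonneg (α * (x - Rs) / m)])
  -- Step B
  intro r hr
  have hα2 : (0:ℝ) < α ^ 2 := by positivity
  have hBd : ∀ x : ℝ, Rs ≤ x →
      HasDerivAt (fun y => 4 * Rs / m + (2 / α ^ 2) * y⁻¹) ((2 / α ^ 2) * (-(x ^ 2)⁻¹)) x := by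
    intro x hx
    have hx0 : (0:ℝ) < x := lt_of_lt_of_le hRs hx
    exact ((hasDerivAt_inv hx0.ne').const_mul (2 / α ^ 2)).const_add (4 * Rs / m)
  have H := image_le_of_deriv_right_lt_deriv_boundary'
    (f := fun y => y / m - φ y)
    (f' := fun y => 1 / m - (1 + φ y ^ 2) * (1 - m * φ y / y)) (a := Rs) (b := r)
    (B := fun y => 4 * Rs / m + (2 / α ^ 2) * y⁻¹)
    (B' := fun y => (2 / α ^ 2) * (-(y ^ 2)⁻¹))
    (fun x hx => by
      exact (((hasDerivAt_id x).div_const m).sub (hode x hx.1)).continuousAt.continuousWithinAt)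
    (fun x hx => by
      have h : HasDerivAt (fun y => y / m - φ y)
          (1 / m - (1 + φ x ^ 2) * (1 - m * φ x / x)) x := by
        exact ((hasDerivAt_id x).div_const m).sub (hode x hx.1)
      exact h.hasDerivWithinAt)
    (by
      rw [hφRs]
      have h1 : Rs / m ≤ 4 * Rs / m := by gcongr <;> linarith
      have h2 : (0:ℝ) ≤ (2 / α ^ 2) * Rs⁻¹ := by positivity
      simp only [sub_zero]
      linarith)
    (fun x hx => ((hBd x hx.1).continuousAt).continuousWithinAt)
    (fun x hx => (hBd x hx.1).hasDerivWithinAt)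
    ?_
  · exact H ⟨hr, le_rfl⟩
  · intro x hx heq
    have hx0 : (0:ℝ) < x := lt_of_lt_of_le hRs hx.1
    set p := φ x with hp_def
    have hp : α * (x - Rs) / m ≤ p := stepA x hx.1
    have hp' : α * (x - Rs) ≤ m * p := by
      rw [div_le_iff₀ hm0] at hp; linarith [hp]
    have hA : (x - m * p) * (α ^ 2 * x) = 4 * Rs * (α ^ 2 * x) + 2 * m := by
      have h := heq
      field_simp at h
      nlinarith [h]
    have h1 : (α * (x - Rs)) ^ 2 ≤ (m * p) ^ 2 := by
      have hnn : 0 ≤ α * (x - Rs) := mul_nonneg hα0.le (by linarith [hx.1])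
      nlinarith [hp', hnn]
    have hfin : α ^ 2 * x ^ 2 + 2 * m < (1 + p ^ 2) * m * (4 * Rs * (α ^ 2 * x) + 2 * m) := by
      nlinarith [h1, sq_nonneg (α * x), sq_nonneg (α * Rs),
        mul_nonneg (by positivity : (0:ℝ) ≤ Rs * (α ^ 2 * x)) (by linarith : (0:ℝ) ≤ m - 1),
        mul_nonneg (hm0.le) (by linarith : (0:ℝ) ≤ m - 1),
        mul_nonneg (by positivity : (0:ℝ) ≤ Rs * (α ^ 2 * x)) (mul_nonneg hm0.le (sq_nonneg p)),
        mul_pos (mul_pos hα2 hRs) hRs]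
    have hpos : (0:ℝ) < m * (α ^ 2 * x ^ 2) := by positivity
    have key : (1 / m - (1 + p ^ 2) * (1 - m * p / x)) * (m * (α ^ 2 * x ^ 2))
        < ((2 / α ^ 2) * (-(x ^ 2)⁻¹)) * (m * (α ^ 2 * x ^ 2)) := by
      have lhs_eq : (1 / m - (1 + p ^ 2) * (1 - m * p / x)) * (m * (α ^ 2 * x ^ 2))
          = α ^ 2 * x ^ 2 - (1 + p ^ 2) * m * ((x - m * p) * (α ^ 2 * x)) := by
        field_simp
      have rhs_eq : ((2 / α ^ 2) * (-(x ^ 2)⁻¹)) * (m * (α ^ 2 * x ^ 2)) = -(2 * m) := by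
        field_simp
      rw [lhs_eq, rhs_eq, hA]
      nlinarith [hfin]
    exact lt_of_mul_lt_mul_right key hpos.le

set_option maxHeartbeats 1000000 in
/-- **Refined lower bound with `1/r` correction for the translator profile ODE.**
If `φ` solves `φ'(r) = (1+φ(r)²)(1 − (n−1)φ(r)/r)` on `[R*, ∞)` with `R* > 0` and
`φ(R*) = 0`, `αₙ = 1 − 1/√(2(n−1))`, then for all `r ≥ R*`:
`φ(r) ≥ (r−R*)/(n−1) − 2/(αₙ² r) − 3R*/(n−1) ≥ (r−4R*)/(n−1) − 24/r`. -/
theorem translator_profile_refined_bound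
    (n : ℕ) (hn : 2 ≤ n) (Rs : ℝ) (hRs : 0 < Rs) (φ : ℝ → ℝ)
    (hode : ∀ r, Rs ≤ r →
      HasDerivAt φ ((1 + φ r ^ 2) * (1 - ((n : ℝ) - 1) * φ r / r)) r)
    (hφRs : φ Rs = 0)
    (α : ℝ) (hα : α = 1 - 1 / Real.sqrt (2 * ((n : ℝ) - 1))) :
    ∀ r, Rs ≤ r →
      (r - Rs) / ((n : ℝ) - 1) - 2 / (α ^ 2 * r) - 3 * Rs / ((n : ℝ) - 1) ≤ φ r ∧
      (r - 4 * Rs) / ((n : ℝ) - 1) - 24 / r ≤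
        (r - Rs) / ((n : ℝ) - 1) - 2 / (α ^ 2 * r) - 3 * Rs / ((n : ℝ) - 1) := by
  have hn2 : (2:ℝ) ≤ (n:ℝ) := by exact_mod_cast hn
  set m : ℝ := (n:ℝ) - 1 with hm_def
  have hm : 1 ≤ m := by simp only [hm_def]; linarith
  have hm0 : (0:ℝ) < m := by linarith
  set s : ℝ := Real.sqrt (2 * m) with hs_def
  have h2m : (0:ℝ) < 2 * m := by linarith
  have hs0 : 0 < s := Real.sqrt_pos.mpr h2m
  have hs2 : s ^ 2 = 2 * m := Real.sq_sqrt h2m.le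
  have hs1 : 1 < s := by nlinarith
  have hαs : α = 1 - 1 / s := hα
  have hα0 : 0 < α := by
    rw [hαs]
    have : 1 / s < 1 := by rw [div_lt_one hs0]; exact hs1
    linarith
  have hαm : α ≤ (1 - α) * m := by
    have hs_le : s ≤ m + 1 := by nlinarith [sq_nonneg (m - 1)]
    rw [hαs]
    have hu : (1 / s) * s = 1 := by field_simp
    have hup : (0:ℝ) < 1 / s := by positivity
    nlinarith [mul_le_mul_of_nonneg_left hs_le hup.le, hu]
  -- bound α² ≥ 1/12
  have ht0 : (0:ℝ) < Real.sqrt 2 := Real.sqrt_pos.mpr (by norm_num)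
  have ht2 : Real.sqrt 2 ^ 2 = 2 := Real.sq_sqrt (by norm_num)
  have hts : Real.sqrt 2 ≤ s := Real.sqrt_le_sqrt (by linarith)
  have htb : Real.sqrt 2 ≤ 577 / 408 := by nlinarith [sq_nonneg (Real.sqrt 2 - 17/12)]
  have hαge : 1 - Real.sqrt 2 / 2 ≤ α := by
    rw [hαs]
    have h1 : 1 / s ≤ 1 / Real.sqrt 2 := one_div_le_one_div_of_le ht0 hts
    have h2 : 1 / Real.sqrt 2 = Real.sqrt 2 / 2 := by
      rw [div_eq_div_iff ht0.ne' (by norm_num : (2:ℝ) ≠ 0)]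
      nlinarith [ht2]
    linarith [h1, h2.symm.le]
  have hα12 : 1 / 12 ≤ α ^ 2 := by
    have hb0 : (0:ℝ) < 1 - Real.sqrt 2 / 2 := by nlinarith
    nlinarith [mul_self_le_mul_self hb0.le hαge, ht2, htb]
  have haux := translator_aux m Rs hm hRs φ hode hφRs α hα0 hαm
  intro r hr
  have hr0 : (0:ℝ) < r := lt_of_lt_of_le hRs hr
  have hu := haux r hr
  have e2 : 2 / (α ^ 2 * r) = (2 / α ^ 2) * r⁻¹ := by
    field_simp
  have e1 : (r - Rs) / m - 3 * Rs / m = r / m - 4 * Rs / m := by ring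
  constructor
  · have : r / m - φ r ≤ 4 * Rs / m + 2 / (α ^ 2 * r) := by rw [e2]; exact hu
    linarith
  · have hq : (0:ℝ) < α ^ 2 * r := by positivity
    have h24 : 2 / (α ^ 2 * r) ≤ 24 / r := by
      rw [div_le_div_iff₀ hq hr0]
      have hd : (1/12) * r ≤ α ^ 2 * r := mul_le_mul_of_nonneg_right hα12 hr0.le
      linarith
    have e3 : (r - 4 * Rs) / m = (r - Rs) / m - 3 * Rs / m := by ring
    rw [e3]
    linarith
end

section
/- Let n ≥ 2 be an integer, R* > 0, and let φ : [R*,∞) → ℝ be differentiable and satisfy the translator profile ODE φ'(r) = (1+φ(r)²)(1 − (n−1)φ(r)/r) for all r ≥ R*, with φ(R*) = 0. Set α_n = 1 − 1/√(2(n−1)) and V(r) = ∫_{R*}^{r} φ(t) dt. Then for every r ≥ R*: V(r) ≥ (r−R*)²/(2(n−1)) − (2/α_n²)·log(r/R*) − 9R*²/(2(n−1)) ≥ (r−R*)²/(2(n−1)) − 24·log(r/R*) − 9R*²/(2(n−1)). -/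
open Real Set Filter Topology

lemma barrier_aux {h h' : ℝ → ℝ} {a : ℝ}
    (hd : ∀ r, a ≤ r → HasDerivAt h (h' r) r)
    (ha : 0 ≤ h a)
    (hz : ∀ r, a ≤ r → h r = 0 → 0 < h' r) :
    ∀ r, a ≤ r → 0 ≤ h r := by
  intro r hr
  by_contra hneg
  push_neg at hneg
  set T : Set ℝ := {t | t ∈ Set.Icc a r ∧ h t < 0} with hT
  have hTr : r ∈ T := ⟨⟨hr, le_refl r⟩, hneg⟩
  have hTne : T.Nonempty := ⟨r, hTr⟩
  have hbdd : BddBelow T := ⟨a, fun t ht => ht.1.1⟩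
  set x := sInf T with hx
  have hax : a ≤ x := le_csInf hTne fun t ht => ht.1.1
  have hxr : x ≤ r := csInf_le hbdd hTr
  have h2 : ∀ t, a ≤ t → t < x → 0 ≤ h t := by
    intro t hat htx
    by_contra hht
    push_neg at hht
    exact absurd (csInf_le hbdd ⟨⟨hat, htx.le.trans hxr⟩, hht⟩) (not_le.2 htx)
  have h3 : ∀ ε : ℝ, 0 < ε → ∃ t ∈ T, t < x + ε := by
    intro ε hε
    exact exists_lt_of_csInf_lt hTne (by linarith)
  have hcont : ContinuousAt h x := (hd x hax).continuousAt
  have hx0 : h x = 0 := by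
    rcases lt_trichotomy (h x) 0 with hlt | heq | hgt
    · exfalso
      have hxa : a < x := by
        rcases hax.lt_or_eq with h' | h'
        · exact h'
        · exfalso; rw [← h'] at hlt; exact absurd hlt (not_lt.2 ha)
      have hev : ∀ᶠ t in 𝓝 x, h t < 0 := hcont.tendsto.eventually_lt_const hlt
      rw [Metric.eventually_nhds_iff] at hev
      obtain ⟨δ, hδ, hball⟩ := hev
      set t := max a (x - δ/2) with htdef
      have hta : a ≤ t := le_max_left _ _
      have htx : t < x := by
        apply max_lt hxa; linarith
      have hdist : dist t x < δ := by
        rw [Real.dist_eq, abs_of_nonpos (by linarith)]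
        have : x - δ/2 ≤ t := le_max_right _ _
        linarith
      exact absurd (h2 t hta htx) (not_le.2 (hball hdist))
    · exact heq
    · exfalso
      have hev : ∀ᶠ t in 𝓝 x, 0 < h t := hcont.eventually_const_lt hgt
      rw [Metric.eventually_nhds_iff] at hev
      obtain ⟨δ, hδ, hball⟩ := hev
      obtain ⟨t, htT, htlt⟩ := h3 δ hδ
      have hxt : x ≤ t := csInf_le hbdd htT
      have : 0 < h t := hball (by rw [Real.dist_eq]; rw [abs_of_nonneg (by linarith)]; linarith)
      linarith [htT.2]
  have hd' := hz x hax hx0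
  have hslope : ∀ᶠ t in 𝓝[>] x, 0 < slope h x t := by
    have h1 : ∀ᶠ t in 𝓝[≠] x, 0 < slope h x t :=
      (hasDerivAt_iff_tendsto_slope.1 (hd x hax)).eventually_const_lt hd'
    exact h1.filter_mono (nhdsWithin_mono x fun t ht => ne_of_gt ht)
  have hpos : ∀ᶠ t in 𝓝[>] x, 0 < h t := by
    filter_upwards [hslope, self_mem_nhdsWithin] with t hst (hxt : x < t)
    have hs : slope h x t = h t / (t - x) := by
      rw [slope_def_field, hx0]; ring
    rw [hs] at hst
    have h4 : 0 < t - x := by linarith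
    calc (0:ℝ) = (h t / (t-x)) * 0 := by ring
    _ < (h t / (t-x)) * (t - x) := by exact mul_lt_mul_of_pos_left h4 hst
    _ = h t := by field_simp
  rw [eventually_iff, mem_nhdsGT_iff_exists_Ioo_subset] at hpos
  obtain ⟨u, hu, hsub⟩ := hpos
  obtain ⟨t, htT, htlt⟩ := h3 (u - x) (by simpa using hu)
  have hxt : x ≤ t := csInf_le hbdd htT
  have hne : x ≠ t := by rintro rfl; linarith [htT.2]
  have : 0 < h t := hsub ⟨hxt.lt_of_ne hne, by linarith⟩
  linarith [htT.2]

lemma phi_nonneg {Rs N : ℝ} (hRs : 0 < Rs) {φ : ℝ → ℝ}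
    (hode : ∀ r, Rs ≤ r → HasDerivAt φ ((1 + φ r ^ 2) * (1 - N * φ r / r)) r)
    (hφRs : φ Rs = 0) : ∀ r, Rs ≤ r → 0 ≤ φ r := by
  refine barrier_aux hode (by rw [hφRs]) ?_
  intro r hr h0
  rw [h0]
  norm_num


lemma sqrt_facts {N : ℝ} (hN : 1 ≤ N) {α : ℝ} (hα : α = 1 - 1/Real.sqrt (2*N)) :
    0 < α ∧ α < 1 ∧ 2*N*(1-α)^2 = 1 ∧ 1 < (1-α)*(N+1) := by
  have hs0 : 0 < Real.sqrt (2*N) := Real.sqrt_pos.2 (by linarith)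
  have hs2 : Real.sqrt (2*N)^2 = 2*N := Real.sq_sqrt (by linarith)
  set s := Real.sqrt (2*N)
  have hs1 : 1 < s := by nlinarith
  have h1α : 1 - α = 1/s := by rw [hα]; ring
  refine ⟨?_, ?_, ?_, ?_⟩
  · have : 1/s < 1 := by rw [div_lt_one hs0]; exact hs1
    linarith
  · have : 0 < 1/s := by positivity
    linarith
  · rw [h1α]; field_simp; nlinarith
  · rw [h1α]
    have hsN : s < N + 1 := by nlinarith
    rw [show 1/s * (N+1) = (N+1)/s by ring]
    exact (one_lt_div hs0).2 hsN

lemma phi_lower_linear {Rs N α : ℝ} (hRs : 0 < Rs) (hN : 1 ≤ N)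
    (hα0 : 0 < α) (hα1 : α < 1) (hkey : 1 < (1-α)*(N+1)) {φ : ℝ → ℝ}
    (hode : ∀ r, Rs ≤ r → HasDerivAt φ ((1 + φ r ^ 2) * (1 - N * φ r / r)) r)
    (hφRs : φ Rs = 0) :
    ∀ r, Rs ≤ r → α * (r - Rs) / N ≤ φ r := by
  have hN0 : (0:ℝ) < N := by linarith
  have main : ∀ r, Rs ≤ r → 0 ≤ φ r - α * (r - Rs) / N := by
    refine barrier_aux (h' := fun t => (1 + φ t ^ 2) * (1 - N * φ t / t) - α * 1 / N) ?_ ?_ ?_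
    · intro r hr
      exact (hode r hr).sub ((((hasDerivAt_id r).sub_const Rs).const_mul α).div_const N)
    · rw [hφRs]; simp
    · intro r hr h0
      have hr0 : 0 < r := lt_of_lt_of_le hRs hr
      have hp : φ r = α * (r - Rs) / N := by linarith
      have h1 : N * φ r / r = α * (r - Rs) / r := by rw [hp]; field_simp
      have hw0 : 0 ≤ α * (r - Rs) / r :=
        div_nonneg (mul_nonneg hα0.le (by linarith)) hr0.le
      have hw1 : α * (r - Rs) / r ≤ α := by
        rw [div_le_iff₀ hr0]; nlinarith
      have hαN : α * 1 / N < 1 - α := by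
        rw [mul_one, div_lt_iff₀ hN0]; nlinarith
      have hsq : 0 ≤ φ r ^ 2 := sq_nonneg _
      show 0 < (1 + φ r ^ 2) * (1 - N * φ r / r) - α * 1 / N
      rw [h1]
      nlinarith [mul_nonneg hsq (by linarith : (0:ℝ) ≤ 1 - α * (r - Rs) / r)]
  intro r hr
  have := main r hr
  linarith

set_option maxHeartbeats 1000000 in
lemma phi_lower_sharp {Rs N α c : ℝ} (hRs : 0 < Rs) (hN : 1 ≤ N)
    (hα0 : 0 < α) (hα1 : α < 1) (hNβ : 2*N*(1-α)^2 = 1) (hc : c = 2/α^2)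
    (hb3 : 35*Rs^2*((1-α)^3*α^2) ≤ 4) {φ : ℝ → ℝ}
    (hode : ∀ r, Rs ≤ r → HasDerivAt φ ((1 + φ r ^ 2) * (1 - N * φ r / r)) r)
    (hlin : ∀ r, Rs ≤ r → α * (r - Rs) / N ≤ φ r) :
    ∀ t, 7*Rs/2 ≤ t → (t - Rs)/N - c/t ≤ φ t := by
  have hN0 : (0:ℝ) < N := by linarith
  have hc0 : 0 < c := by rw [hc]; positivity
  have hαc : α^2 * c = 2 := by rw [hc]; field_simp
  have hβ0 : 0 < 1 - α := by linarith
  have hr₀ : Rs < 7*Rs/2 := by linarith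
  have main : ∀ t, 7*Rs/2 ≤ t → 0 ≤ φ t - (t - Rs)/N + c/t := by
    refine barrier_aux
      (h' := fun t => (1 + φ t ^ 2) * (1 - N * φ t / t) - 1/N + c * (-(t^2)⁻¹)) ?_ ?_ ?_
    · intro t ht
      have ht0 : (0:ℝ) < t := by linarith
      have h2 : HasDerivAt (fun u => φ u - (u - Rs)/N + c * u⁻¹)
          ((1 + φ t ^ 2) * (1 - N * φ t / t) - 1/N + c * (-(t^2)⁻¹)) t :=
        ((hode t (by linarith)).sub ((hasDerivAt_id' t |>.sub_const Rs).div_const N)).add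
          ((hasDerivAt_inv ht0.ne').const_mul c)
      have heq : ∀ u : ℝ, φ u - (u - Rs)/N + c * u⁻¹ = φ u - (u - Rs)/N + c/u := by
        intro u; rw [div_eq_mul_inv c u]
      simpa only [heq] using h2
    · -- anchor at r₀ = 7Rs/2
      have ht0 : (0:ℝ) < 7*Rs/2 := by linarith
      have hφL := hlin (7*Rs/2) hr₀.le
      have h2N : 2*N = 1/(1-α)^2 := by
        rw [eq_div_iff (by positivity)]; linarith [hNβ]
      have hpoly2 : (1-α)*(35/4)*Rs^2*α^2 ≤ 2*N := by
        rw [h2N, le_div_iff₀ (by positivity)]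
        nlinarith [hb3]
      have hineq : (1-α)*(7*Rs/2 - Rs)/N ≤ c/(7*Rs/2) := by
        rw [div_le_div_iff₀ hN0 ht0, hc,
          show 2/α^2*N = 2*N/α^2 by ring, le_div_iff₀ (by positivity : (0:ℝ) < α^2)]
        nlinarith [hpoly2]
      have hexp : (7*Rs/2 - Rs)/N - α*(7*Rs/2 - Rs)/N = (1-α)*(7*Rs/2 - Rs)/N := by ring
      have : (7*Rs/2 - Rs)/N - c/(7*Rs/2) ≤ α*(7*Rs/2 - Rs)/N := by linarith
      linarith
    · intro t ht h0
      have htRs : Rs ≤ t := le_trans hr₀.le ht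
      have ht0 : (0:ℝ) < t := lt_of_lt_of_le hRs htRs
      have hp : φ t = (t - Rs)/N - c/t := by linarith
      have hq57 : 5*t ≤ 7*(t - Rs) := by linarith
      have hq0 : 0 < t - Rs := by linarith
      have hφL := hlin t htRs
      have hφsq : α^2*(t-Rs)^2 ≤ N^2 * φ t^2 := by
        have h1 : α*(t-Rs) ≤ N*φ t := by
          rw [div_le_iff₀ hN0] at hφL; linarith
        nlinarith [mul_nonneg hα0.le hq0.le]
      have hNp : 1 - N * φ t / t = Rs/t + N*c/t^2 := by
        rw [hp]; field_simp; ring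
      have h49 : 25*t^2 ≤ 49*(t-Rs)^2 := by
        nlinarith [mul_nonneg (sub_nonneg.2 hq57) (by linarith : (0:ℝ) ≤ 7*(t-Rs) + 5*t)]
      have key : t^2 + N*c < (1 + φ t^2) * (Rs*t*N + N^2*c) := by
        have hc1 : α^2*(t-Rs)^2*c ≤ N^2*φ t^2*c := mul_le_mul_of_nonneg_right hφsq hc0.le
        have hc2 : α^2*(t-Rs)^2*c = 2*(t-Rs)^2 := by
          rw [show α^2*(t-Rs)^2*c = (α^2*c)*(t-Rs)^2 by ring, hαc]
        nlinarith [mul_pos (mul_pos hRs ht0) hN0, sq_nonneg (φ t),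
          mul_nonneg (mul_nonneg (sq_nonneg (φ t)) hRs.le) (mul_nonneg ht0.le hN0.le),
          mul_nonneg (mul_nonneg (sub_nonneg.2 hN) hN0.le) hc0.le]
      show 0 < (1 + φ t ^ 2) * (1 - N * φ t / t) - 1/N + c * (-(t^2)⁻¹)
      rw [hNp]
      have expand : (1 + φ t^2)*(Rs/t + N*c/t^2) - 1/N + c * (-(t^2)⁻¹)
          = ((1 + φ t^2)*(Rs*t*N + N^2*c) - t^2 - N*c) / (N*t^2) := by
        field_simp; ring
      rw [expand]
      exact div_pos (by linarith) (by positivity)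
  intro t ht
  have := main t ht
  linarith

lemma height_identity {Rs N : ℝ} (hRs : 0 < Rs) (hN : 1 ≤ N) {φ : ℝ → ℝ}
    (hode : ∀ r, Rs ≤ r → HasDerivAt φ ((1 + φ r ^ 2) * (1 - N * φ r / r)) r)
    (hφRs : φ Rs = 0) :
    ∀ r, Rs ≤ r → N * (∫ t in Rs..r, φ t)
      = (r^2 - Rs^2)/2 - r * Real.arctan (φ r) + ∫ t in Rs..r, Real.arctan (φ t) := by
  intro r hr
  have hφc : ContinuousOn φ (Ici Rs) := fun x hx =>
    ((hode x hx).continuousAt).continuousWithinAt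
  have hφc' : ContinuousOn φ (Ioi Rs) := hφc.mono Ioi_subset_Ici_self
  have hAc : ContinuousOn (fun t => Real.arctan (φ t)) (Ici Rs) :=
    Real.continuous_arctan.comp_continuousOn hφc
  have hAc' : ContinuousOn (fun t => Real.arctan (φ t)) (Ioi Rs) :=
    hAc.mono Ioi_subset_Ici_self
  have hIcc : Icc Rs r ⊆ Ici Rs := Icc_subset_Ici_self
  have hφint : IntervalIntegrable φ MeasureTheory.volume Rs r := by
    apply ContinuousOn.intervalIntegrable
    rw [uIcc_of_le hr]; exact hφc.mono hIcc
  have hAint : IntervalIntegrable (fun t => Real.arctan (φ t)) MeasureTheory.volume Rs r := by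
    apply ContinuousOn.intervalIntegrable
    rw [uIcc_of_le hr]; exact hAc.mono hIcc
  set F : ℝ → ℝ := fun x => N * (∫ t in Rs..x, φ t) - (x^2 - Rs^2)/2
      + x * Real.arctan (φ x) - ∫ t in Rs..x, Real.arctan (φ t) with hF
  have hFr : (∫ y in Rs..r, (0:ℝ)) = F r - F Rs := by
    apply intervalIntegral.integral_eq_sub_of_hasDeriv_right_of_le hr
    · -- continuity of F on Icc
      have h1 : ContinuousOn (fun x => ∫ t in Rs..x, φ t) (Icc Rs r) := by
        have := intervalIntegral.continuousOn_primitive_interval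
          (f := φ) (a := Rs) (b := r) (μ := MeasureTheory.volume) ?_
        · rwa [uIcc_of_le hr] at this
        · rw [uIcc_of_le hr]
          exact (hφc.mono hIcc).integrableOn_compact isCompact_Icc
      have h2 : ContinuousOn (fun x => ∫ t in Rs..x, Real.arctan (φ t)) (Icc Rs r) := by
        have := intervalIntegral.continuousOn_primitive_interval
          (f := fun t => Real.arctan (φ t)) (a := Rs) (b := r) (μ := MeasureTheory.volume) ?_
        · rwa [uIcc_of_le hr] at this
        · rw [uIcc_of_le hr]
          exact (hAc.mono hIcc).integrableOn_compact isCompact_Icc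
      exact (((h1.const_smul N).sub
          (((continuous_pow 2).sub continuous_const).div_const 2).continuousOn).add
          (continuousOn_id.mul (hAc.mono hIcc))).sub h2
    · intro x hx
      have hxRs : Rs ≤ x := hx.1.le
      have hx0 : 0 < x := lt_of_lt_of_le hRs hxRs
      have hmem : x ∈ Ioi Rs := hx.1
      have d1 : HasDerivAt (fun u => ∫ t in Rs..u, φ t) (φ x) x := by
        apply intervalIntegral.integral_hasDerivAt_right
        · apply ContinuousOn.intervalIntegrable
          rw [uIcc_of_le hxRs]; exact hφc.mono Icc_subset_Ici_self
        · exact ContinuousOn.stronglyMeasurableAtFilter isOpen_Ioi hφc' x hmem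
        · exact (hode x hxRs).continuousAt
      have d2 : HasDerivAt (fun u => ∫ t in Rs..u, Real.arctan (φ t)) (Real.arctan (φ x)) x := by
        apply intervalIntegral.integral_hasDerivAt_right
        · apply ContinuousOn.intervalIntegrable
          rw [uIcc_of_le hxRs]; exact hAc.mono Icc_subset_Ici_self
        · exact ContinuousOn.stronglyMeasurableAtFilter isOpen_Ioi hAc' x hmem
        · exact Real.continuous_arctan.continuousAt.comp (hode x hxRs).continuousAt
      have d3 : HasDerivAt (fun u : ℝ => (u^2 - Rs^2)/2) (x) x := by
        have := ((hasDerivAt_pow 2 x).sub_const (Rs^2)).div_const 2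
        exact this.congr_deriv (by norm_num)
      have d4 : HasDerivAt (fun u => u * Real.arctan (φ u))
          (1 * Real.arctan (φ x) + x * (1/(1 + φ x^2) * ((1 + φ x ^ 2) * (1 - N * φ x / x)))) x :=
        (hasDerivAt_id' x).mul ((Real.hasDerivAt_arctan (φ x)).comp x (hode x hxRs))
      have hd : HasDerivAt F (N * φ x - x
          + (1 * Real.arctan (φ x) + x * (1/(1 + φ x^2) * ((1 + φ x ^ 2) * (1 - N * φ x / x))))
          - Real.arctan (φ x)) x :=
        (((d1.const_mul N).sub d3).add d4).sub d2
      have hzero : N * φ x - x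
          + (1 * Real.arctan (φ x) + x * (1/(1 + φ x^2) * ((1 + φ x ^ 2) * (1 - N * φ x / x))))
          - Real.arctan (φ x) = 0 := by
        have h1 : (0:ℝ) < 1 + φ x^2 := by positivity
        field_simp
        ring
      rw [hzero] at hd
      exact hd.hasDerivWithinAt
    · exact intervalIntegrable_const
  have hF0 : F Rs = 0 := by
    rw [hF]
    simp [hφRs, Real.arctan_zero]
  rw [intervalIntegral.integral_zero, hF0, sub_zero] at hFr
  have : F r = 0 := hFr.symm
  rw [hF] at this
  linarith [this]

lemma poly_max {b : ℝ} (h0 : 0 ≤ b) (h1 : b ≤ 1) : b^3*(1-b)^2 ≤ 108/3125 := by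
  nlinarith [sq_nonneg (b - 3/5), sq_nonneg (b + 3/5), mul_nonneg h0 h0, sq_nonneg (1-b),
    mul_nonneg (mul_nonneg h0 h0) h0, sq_nonneg (b*(1-b)),
    mul_nonneg (mul_nonneg h0 h0) (sub_nonneg.2 h1),
    mul_nonneg (mul_nonneg (sub_nonneg.2 h1) (sub_nonneg.2 h1)) h0, sq_nonneg (b^2 - 3/5*b)]

lemma caseA {Rs N c : ℝ} (hRs : 0 < Rs) (hN : 1 ≤ N) (hc0 : 0 ≤ c) (hbig : Real.pi ≤ 2*Rs)
    {φ : ℝ → ℝ}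
    (hode : ∀ r, Rs ≤ r → HasDerivAt φ ((1 + φ r ^ 2) * (1 - N * φ r / r)) r)
    (hφRs : φ Rs = 0) :
    ∀ r, Rs ≤ r →
      (r - Rs)^2/(2*N) - c * Real.log (r/Rs) - 9*Rs^2/(2*N) ≤ ∫ t in Rs..r, φ t := by
  intro r hr
  have hid := height_identity hRs hN hode hφRs r hr
  have hφpos := phi_nonneg hRs hode hφRs
  have hr0 : 0 < r := lt_of_lt_of_le hRs hr
  have hintA : 0 ≤ ∫ t in Rs..r, Real.arctan (φ t) :=
    intervalIntegral.integral_nonneg hr (fun u hu => (by simpa [Real.arctan_zero] using Real.arctan_strictMono.monotone (hφpos u hu.1) : (0:ℝ) ≤ Real.arctan (φ u)))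
  have harc : Real.arctan (φ r) ≤ Real.pi/2 := (Real.arctan_lt_pi_div_two _).le
  have hNV : (r^2 - Rs^2)/2 - r*(Real.pi/2) ≤ N * ∫ t in Rs..r, φ t := by
    rw [hid]
    nlinarith [mul_le_mul_of_nonneg_left harc hr0.le]
  have hlog : 0 ≤ Real.log (r/Rs) := Real.log_nonneg ((one_le_div hRs).2 hr)
  have h2N : (0:ℝ) < 2*N := by linarith
  have key : (r - Rs)^2 - 9*Rs^2 ≤ (r^2 - Rs^2) - Real.pi*r := by nlinarith
  have hVlb : ((r^2 - Rs^2) - Real.pi*r)/(2*N) ≤ ∫ t in Rs..r, φ t := by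
    rw [div_le_iff₀ h2N]; nlinarith [hNV]
  have hmid : ((r - Rs)^2 - 9*Rs^2)/(2*N) ≤ ((r^2 - Rs^2) - Real.pi*r)/(2*N) := by
    rw [div_le_div_iff₀ h2N h2N]; nlinarith [key, h2N]
  have heq : ((r - Rs)^2 - 9*Rs^2)/(2*N) = (r - Rs)^2/(2*N) - 9*Rs^2/(2*N) := by ring
  have hclog : 0 ≤ c * Real.log (r/Rs) := mul_nonneg hc0 hlog
  linarith

set_option maxHeartbeats 1000000 in
lemma caseB {Rs N α c : ℝ} (hRs : 0 < Rs) (hN : 1 ≤ N) (hsmall : Rs < 8/5)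
    (hα0 : 0 < α) (hα1 : α < 1) (hNβ : 2*N*(1-α)^2 = 1) (hkey : 1 < (1-α)*(N+1))
    (hc : c = 2/α^2) {φ : ℝ → ℝ}
    (hode : ∀ r, Rs ≤ r → HasDerivAt φ ((1 + φ r ^ 2) * (1 - N * φ r / r)) r)
    (hφRs : φ Rs = 0) :
    ∀ r, Rs ≤ r →
      (r - Rs)^2/(2*N) - c * Real.log (r/Rs) - 9*Rs^2/(2*N) ≤ ∫ t in Rs..r, φ t := by
  have hN0 : (0:ℝ) < N := by linarith
  have h2N : (0:ℝ) < 2*N := by linarith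
  have hc0 : 0 < c := by rw [hc]; positivity
  have hb3 : 35*Rs^2*((1-α)^3*α^2) ≤ 4 := by
    have hp : (1-α)^3*(1-(1-α))^2 ≤ 108/3125 := poly_max (by linarith) (by linarith)
    have hp' : (1-α)^3*α^2 ≤ 108/3125 := by
      have : (1-(1-α)) = α := by ring
      rwa [this] at hp
    have hpos : (0:ℝ) ≤ (1-α)^3*α^2 :=
      mul_nonneg (pow_nonneg (by linarith) 3) (sq_nonneg α)
    have hRs2 : Rs^2 ≤ 64/25 := by nlinarith
    nlinarith [mul_le_mul_of_nonneg_right hRs2 hpos,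
      mul_le_mul_of_nonneg_left hp' (by norm_num : (0:ℝ) ≤ 64/25)]
  have hlin := phi_lower_linear hRs hN hα0 hα1 hkey hode hφRs
  have hsharp := phi_lower_sharp hRs hN hα0 hα1 hNβ hc hb3 hode hlin
  have hφpos := phi_nonneg hRs hode hφRs
  have hφc : ContinuousOn φ (Ici Rs) := fun x hx =>
    ((hode x hx).continuousAt).continuousWithinAt
  intro r hr
  have hr0 : 0 < r := lt_of_lt_of_le hRs hr
  have hlog : 0 ≤ Real.log (r/Rs) := Real.log_nonneg ((one_le_div hRs).2 hr)
  have hclog : 0 ≤ c * Real.log (r/Rs) := mul_nonneg hc0.le hlog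
  rcases le_or_gt r (7*Rs/2) with hcase | hcase
  · have hV0 : 0 ≤ ∫ t in Rs..r, φ t :=
      intervalIntegral.integral_nonneg hr (fun u hu => hφpos u hu.1)
    have hsq : (r - Rs)^2 ≤ 9*Rs^2 := by nlinarith
    have h1 : (r - Rs)^2/(2*N) ≤ 9*Rs^2/(2*N) := by
      rw [div_le_div_iff₀ h2N h2N]; nlinarith
    linarith
  · set r₀ : ℝ := 7*Rs/2 with hr₀def
    have hRr₀ : Rs ≤ r₀ := by rw [hr₀def]; linarith
    have hr₀r : r₀ ≤ r := hcase.le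
    have hr₀0 : 0 < r₀ := by rw [hr₀def]; linarith
    have hint1 : IntervalIntegrable φ MeasureTheory.volume Rs r₀ := by
      apply ContinuousOn.intervalIntegrable
      rw [uIcc_of_le hRr₀]
      exact hφc.mono Icc_subset_Ici_self
    have hint2 : IntervalIntegrable φ MeasureTheory.volume r₀ r := by
      apply ContinuousOn.intervalIntegrable
      rw [uIcc_of_le hr₀r]
      exact hφc.mono (fun x hx => le_trans hRr₀ hx.1)
    have hsplit := intervalIntegral.integral_add_adjacent_intervals hint1 hint2
    have h1 : 0 ≤ ∫ t in Rs..r₀, φ t :=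
      intervalIntegral.integral_nonneg hRr₀ (fun u hu => hφpos u hu.1)
    have hLc : ContinuousOn (fun t : ℝ => (t - Rs)/N - c/t) (Icc r₀ r) := by
      apply ContinuousOn.sub
      · exact ((continuous_id.sub continuous_const).div_const N).continuousOn
      · exact continuousOn_const.div continuousOn_id
          (fun x hx => ne_of_gt (lt_of_lt_of_le hr₀0 hx.1))
    have hintL : IntervalIntegrable (fun t : ℝ => (t - Rs)/N - c/t) MeasureTheory.volume r₀ r := by
      apply ContinuousOn.intervalIntegrable
      rwa [uIcc_of_le hr₀r]
    have hftc : ∫ t in r₀..r, ((t - Rs)/N - c/t)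
        = ((r - Rs)^2/(2*N) - c*Real.log r) - ((r₀ - Rs)^2/(2*N) - c*Real.log r₀) := by
      apply intervalIntegral.integral_eq_sub_of_hasDerivAt
      · intro x hx
        rw [uIcc_of_le hr₀r] at hx
        have hx0 : 0 < x := lt_of_lt_of_le hr₀0 hx.1
        have d5 : HasDerivAt (fun u : ℝ => (u - Rs)^2/(2*N)) ((x - Rs)/N) x := by
          have := (((hasDerivAt_id' x).sub_const Rs).pow 2).div_const (2*N)
          refine this.congr_deriv ?_
          field_simp
          ring
        have d6 : HasDerivAt (fun u : ℝ => c * Real.log u) (c * x⁻¹) x :=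
          (Real.hasDerivAt_log hx0.ne').const_mul c
        have := d5.sub d6
        exact this.congr_deriv (by ring)
      · exact hintL
    have hmono : (∫ t in r₀..r, ((t - Rs)/N - c/t)) ≤ ∫ t in r₀..r, φ t := by
      apply intervalIntegral.integral_mono_on hr₀r hintL hint2
      intro x hx
      exact hsharp x hx.1
    have hlogs : Real.log Rs ≤ Real.log r₀ := by
      apply Real.log_le_log hRs
      linarith
    have hlogdiv : c * Real.log (r/Rs) = c * Real.log r - c * Real.log Rs := by
      rw [Real.log_div hr0.ne' hRs.ne']; ring
    have hcl : c * Real.log Rs ≤ c * Real.log r₀ := mul_le_mul_of_nonneg_left hlogs hc0.le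
    have hsq25 : (r₀ - Rs)^2/(2*N) ≤ 9*Rs^2/(2*N) := by
      rw [div_le_div_iff₀ h2N h2N]
      have : (r₀ - Rs)^2 = 25*Rs^2/4 := by rw [hr₀def]; ring
      nlinarith
    linarith

/-- **Sharp quadratic lower bound on the height function of the translator profile.**
If `φ` solves `φ'(r) = (1+φ(r)²)(1 − (n−1)φ(r)/r)` on `[R*, ∞)` with `R* > 0` and
`φ(R*) = 0`, `αₙ = 1 − 1/√(2(n−1))`, `V(r) = ∫_{R*}^r φ`, then for all `r ≥ R*`:
`V(r) ≥ (r−R*)²/(2(n−1)) − (2/αₙ²) log(r/R*) − 9R*²/(2(n−1))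
      ≥ (r−R*)²/(2(n−1)) − 24 log(r/R*) − 9R*²/(2(n−1))`. -/
theorem translator_profile_height_sharp_bound
    (n : ℕ) (hn : 2 ≤ n) (Rs : ℝ) (hRs : 0 < Rs) (φ : ℝ → ℝ)
    (hode : ∀ r, Rs ≤ r →
      HasDerivAt φ ((1 + φ r ^ 2) * (1 - ((n : ℝ) - 1) * φ r / r)) r)
    (hφRs : φ Rs = 0)
    (α : ℝ) (hα : α = 1 - 1 / Real.sqrt (2 * ((n : ℝ) - 1)))
    (V : ℝ → ℝ) (hV : ∀ r, V r = ∫ t in Rs..r, φ t) :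
    ∀ r, Rs ≤ r →
      (r - Rs) ^ 2 / (2 * ((n : ℝ) - 1)) - (2 / α ^ 2) * Real.log (r / Rs)
          - 9 * Rs ^ 2 / (2 * ((n : ℝ) - 1)) ≤ V r ∧
      (r - Rs) ^ 2 / (2 * ((n : ℝ) - 1)) - 24 * Real.log (r / Rs)
          - 9 * Rs ^ 2 / (2 * ((n : ℝ) - 1)) ≤
        (r - Rs) ^ 2 / (2 * ((n : ℝ) - 1)) - (2 / α ^ 2) * Real.log (r / Rs)
          - 9 * Rs ^ 2 / (2 * ((n : ℝ) - 1)) := by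
  intro r hr
  have hn2 : (2:ℝ) ≤ (n:ℝ) := by exact_mod_cast hn
  have hN : (1:ℝ) ≤ (n:ℝ) - 1 := by linarith
  obtain ⟨hα0, hα1, hNβ, hkey⟩ := sqrt_facts hN hα
  have hlog : 0 ≤ Real.log (r/Rs) := Real.log_nonneg ((one_le_div hRs).2 hr)
  constructor
  · rw [hV r]
    rcases le_or_gt Real.pi (2*Rs) with hbig | hsmall
    · exact caseA hRs hN (by positivity : (0:ℝ) ≤ 2/α^2) hbig hode hφRs r hr
    · have hpi : Real.pi < 3.15 := Real.pi_lt_d2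
      have hsm : Rs < 8/5 := by linarith
      exact caseB hRs hN hsm hα0 hα1 hNβ hkey rfl hode hφRs r hr
  · -- numeric: 2/α² ≤ 24
    have hs2 : Real.sqrt 2 ≤ Real.sqrt (2*((n:ℝ)-1)) := Real.sqrt_le_sqrt (by linarith)
    have h141 : (1.41:ℝ) < Real.sqrt 2 := by
      rw [show (1.41:ℝ) < Real.sqrt 2 ↔ (1.41:ℝ)^2 < 2 from Real.lt_sqrt (by norm_num)]
      norm_num
    have hs141 : (1.41:ℝ) < Real.sqrt (2*((n:ℝ)-1)) := lt_of_lt_of_le h141 hs2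
    have hspos : (0:ℝ) < Real.sqrt (2*((n:ℝ)-1)) := by linarith
    have hinv : 1 / Real.sqrt (2*((n:ℝ)-1)) < 1/1.41 :=
      one_div_lt_one_div_of_lt (by norm_num) hs141
    have hα29 : (29:ℝ)/100 ≤ α := by
      rw [hα]
      have : (1:ℝ)/1.41 ≤ 71/100 := by norm_num
      linarith
    have hα2 : (1:ℝ)/12 ≤ α^2 := by nlinarith
    have h24 : 2/α^2 ≤ 24 := by
      rw [div_le_iff₀ (by positivity)]
      nlinarith
    have := mul_le_mul_of_nonneg_right h24 hlog
    linarith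
end

section
/- Let n ≥ 2 be an integer, R > 0, and let ρ : [0,∞) → ℝ be twice differentiable with ρ(x) > 0 for all x ≥ 0, ρ(0) = R, ρ'(0) = 0, satisfying the inverse-profile translator ODE ρ''(x) + (1+ρ'(x)²)·ρ'(x) = (n−1)(1+ρ'(x)²)/ρ(x) for all x ≥ 0. Then for every x ≥ 0: ρ'(x) ≥ ((n−1)/ρ(x))·(1 − e^{−x}). -/
/-- **Derivative lower bound for the upper-branch radius of a winglike translator.**
If `ρ > 0` solves `ρ'' + (1+ρ'²)ρ' = (n−1)(1+ρ'²)/ρ` on `[0, ∞)` with `ρ(0) = R > 0`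
and `ρ'(0) = 0`, then `ρ'(x) ≥ ((n−1)/ρ(x))(1 − e^{−x})` for all `x ≥ 0`. -/
theorem winglike_upper_branch_derivative_bound
    (n : ℕ) (hn : 2 ≤ n) (R : ℝ) (hR : 0 < R) (ρ ρ' : ℝ → ℝ)
    (hpos : ∀ x, 0 ≤ x → 0 < ρ x)
    (hρ : ∀ x, 0 ≤ x → HasDerivAt ρ (ρ' x) x)
    (hode : ∀ x, 0 ≤ x →
      HasDerivAt ρ' (((n : ℝ) - 1) * (1 + ρ' x ^ 2) / ρ x - (1 + ρ' x ^ 2) * ρ' x) x)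
    (hρ0 : ρ 0 = R) (hρ'0 : ρ' 0 = 0) :
    ∀ x, 0 ≤ x → ((n : ℝ) - 1) / ρ x * (1 - Real.exp (-x)) ≤ ρ' x := by
  have hn1 : (1 : ℝ) ≤ (n : ℝ) - 1 := by
    have : (2 : ℝ) ≤ (n : ℝ) := by exact_mod_cast hn
    linarith
  have hcont : ∀ t, 0 ≤ t → ContinuousAt ρ' t := fun t ht => (hode t ht).continuousAt
  set f : ℝ → ℝ := fun t => 1 + ρ' (max t 0) ^ 2 with hf_def
  have hfc : Continuous f := by
    rw [continuous_iff_continuousAt]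
    intro t
    have h1 : ContinuousAt (fun s : ℝ => max s 0) t :=
      (continuous_id.max continuous_const).continuousAt
    have h2 : ContinuousAt ρ' (max t 0) := hcont _ (le_max_right _ _)
    have h12 : ContinuousAt (fun s : ℝ => ρ' (max s 0)) t :=
      ContinuousAt.comp (f := fun s : ℝ => max s 0) h2 h1
    exact continuousAt_const.add (h12.pow 2)
  set E : ℝ → ℝ := fun u => ∫ t in (0:ℝ)..u, f t with hE_def
  have hE : ∀ t : ℝ, HasDerivAt E (f t) t := fun t =>
    intervalIntegral.integral_hasDerivAt_right (hfc.intervalIntegrable 0 t)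
      (hfc.stronglyMeasurableAtFilter _ _) hfc.continuousAt
  set w : ℝ → ℝ := fun t => ρ t * ρ' t - ((n : ℝ) - 1) * (1 - Real.exp (-t)) with hw_def
  have hw : ∀ t, 0 ≤ t → HasDerivAt w
      (ρ' t * ρ' t + ρ t * (((n : ℝ) - 1) * (1 + ρ' t ^ 2) / ρ t - (1 + ρ' t ^ 2) * ρ' t)
        - ((n : ℝ) - 1) * Real.exp (-t)) t := by
    intro t ht
    have h1 := (hρ t ht).mul (hode t ht)
    have h3 : HasDerivAt (fun s : ℝ => Real.exp (-s)) (-Real.exp (-t)) t := by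
      simpa [Function.comp_def] using (Real.hasDerivAt_exp (-t)).comp t (hasDerivAt_id t).neg
    have h2 : HasDerivAt (fun s => ((n : ℝ) - 1) * (1 - Real.exp (-s)))
        (((n : ℝ) - 1) * Real.exp (-t)) t := by
      have h4 := ((hasDerivAt_const t (1 : ℝ)).sub h3).const_mul ((n : ℝ) - 1)
      simpa using h4
    exact h1.sub h2
  set W : ℝ → ℝ := fun t => w t * Real.exp (E t) with hW_def
  have hW : ∀ t, 0 ≤ t → HasDerivAt W
      ((ρ' t * ρ' t + ρ t * (((n : ℝ) - 1) * (1 + ρ' t ^ 2) / ρ t - (1 + ρ' t ^ 2) * ρ' t)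
        - ((n : ℝ) - 1) * Real.exp (-t)) * Real.exp (E t)
        + w t * (Real.exp (E t) * f t)) t := fun t ht => (hw t ht).mul (hE t).exp
  have hWderiv_nonneg : ∀ t, 0 ≤ t →
      0 ≤ (ρ' t * ρ' t + ρ t * (((n : ℝ) - 1) * (1 + ρ' t ^ 2) / ρ t - (1 + ρ' t ^ 2) * ρ' t)
        - ((n : ℝ) - 1) * Real.exp (-t)) * Real.exp (E t)
        + w t * (Real.exp (E t) * f t) := by
    intro t ht
    have hft : f t = 1 + ρ' t ^ 2 := by simp [hf_def, max_eq_left ht]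
    have hρt : ρ t ≠ 0 := (hpos t ht).ne'
    have key : (ρ' t * ρ' t + ρ t * (((n : ℝ) - 1) * (1 + ρ' t ^ 2) / ρ t - (1 + ρ' t ^ 2) * ρ' t)
        - ((n : ℝ) - 1) * Real.exp (-t)) + w t * (1 + ρ' t ^ 2)
        = ρ' t ^ 2 * (1 + ((n : ℝ) - 1) * Real.exp (-t)) := by
      simp only [hw_def]
      field_simp
      ring
    have hrhs : 0 ≤ ρ' t ^ 2 * (1 + ((n : ℝ) - 1) * Real.exp (-t)) := by
      have := Real.exp_pos (-t)
      have h1 : (0:ℝ) ≤ 1 + ((n : ℝ) - 1) * Real.exp (-t) := by nlinarith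
      positivity
    calc (0:ℝ) ≤ ρ' t ^ 2 * (1 + ((n : ℝ) - 1) * Real.exp (-t)) * Real.exp (E t) := by positivity
    _ = ((ρ' t * ρ' t + ρ t * (((n : ℝ) - 1) * (1 + ρ' t ^ 2) / ρ t - (1 + ρ' t ^ 2) * ρ' t)
        - ((n : ℝ) - 1) * Real.exp (-t)) + w t * (1 + ρ' t ^ 2)) * Real.exp (E t) := by
        rw [key]
    _ = _ := by rw [hft]; ring
  intro x hx
  have hmono : MonotoneOn W (Set.Icc 0 x) := by
    apply monotoneOn_of_deriv_nonneg (convex_Icc 0 x)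
    · exact fun t ht => ((hW t ht.1).continuousAt).continuousWithinAt
    · intro t ht
      rw [interior_Icc] at ht
      exact ((hW t ht.1.le).differentiableAt).differentiableWithinAt
    · intro t ht
      rw [interior_Icc] at ht
      rw [(hW t ht.1.le).deriv]
      exact hWderiv_nonneg t ht.1.le
  have hW0 : W 0 = 0 := by
    simp [hW_def, hw_def, hρ'0]
  have hWx : 0 ≤ W x := by
    have := hmono (Set.left_mem_Icc.2 hx) (Set.mem_Icc.2 ⟨hx, le_refl x⟩) hx
    rwa [hW0] at this
  have hwx : 0 ≤ w x := by
    have h := hWx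
    simp only [hW_def] at h
    by_contra hneg
    push_neg at hneg
    nlinarith [Real.exp_pos (E x)]
  rw [div_mul_eq_mul_div, div_le_iff₀ (hpos x hx)]
  simp only [hw_def] at hwx
  nlinarith
end

section
/- Let n ≥ 2 be an integer, R > 0, and let ρ : [0,∞) → ℝ be twice differentiable with ρ(x) > 0 for all x ≥ 0, ρ(0) = R, ρ'(0) = 0, satisfying the inverse-profile translator ODE ρ''(x) + (1+ρ'(x)²)·ρ'(x) = (n−1)(1+ρ'(x)²)/ρ(x) for all x ≥ 0. Then for every x ≥ 0: ρ(x) ≥ √( 2(n−1)(x − 1 + e^{−x}) + R² ); consequently x ≤ (ρ(x)² − R²)/(2(n−1)) + 1. -/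
open Set MeasureTheory intervalIntegral

/-- **Radius lower bound and height bound for the upper branch of a winglike translator.**
If `ρ > 0` solves `ρ'' + (1+ρ'²)ρ' = (n−1)(1+ρ'²)/ρ` on `[0, ∞)` with `ρ(0) = R > 0`
and `ρ'(0) = 0`, then `ρ(x) ≥ √(2(n−1)(x−1+e^{−x}) + R²)` and consequently
`x ≤ (ρ(x)² − R²)/(2(n−1)) + 1`, for all `x ≥ 0`. -/
theorem winglike_upper_branch_radius_bound
    (n : ℕ) (hn : 2 ≤ n) (R : ℝ) (hR : 0 < R) (ρ ρ' : ℝ → ℝ)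
    (hpos : ∀ x, 0 ≤ x → 0 < ρ x)
    (hρ : ∀ x, 0 ≤ x → HasDerivAt ρ (ρ' x) x)
    (hode : ∀ x, 0 ≤ x →
      HasDerivAt ρ' (((n : ℝ) - 1) * (1 + ρ' x ^ 2) / ρ x - (1 + ρ' x ^ 2) * ρ' x) x)
    (hρ0 : ρ 0 = R) (hρ'0 : ρ' 0 = 0) :
    ∀ x, 0 ≤ x →
      Real.sqrt (2 * ((n : ℝ) - 1) * (x - 1 + Real.exp (-x)) + R ^ 2) ≤ ρ x ∧
      x ≤ (ρ x ^ 2 - R ^ 2) / (2 * ((n : ℝ) - 1)) + 1 := by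
  have h2n : (2:ℝ) ≤ (n:ℝ) := by exact_mod_cast hn
  have hn1 : (1:ℝ) ≤ (n:ℝ) - 1 := by linarith
  have hnpos : (0:ℝ) < (n:ℝ) - 1 := by linarith
  set c : ℝ → ℝ := fun t => 1 + ρ' t ^ 2 with hcdef
  have hccont : ∀ x ∈ Set.Ici (0:ℝ), ContinuousAt c x := fun x hx =>
    continuousAt_const.add ((hode x hx).continuousAt.pow 2)
  have hcOnIci : ContinuousOn c (Set.Ici 0) := fun x hx => (hccont x hx).continuousWithinAt
  have hcone : ∀ t, (1:ℝ) ≤ c t := fun t => by simp [hcdef]; positivity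
  have hcOnIoi : ContinuousOn c (Set.Ioi 0) :=
    hcOnIci.mono (Set.Ioi_subset_Ici le_rfl)
  set P : ℝ → ℝ := fun x => ∫ t in (0:ℝ)..x, c t with hPdef
  have hint : ∀ x : ℝ, 0 ≤ x → IntervalIntegrable c volume 0 x := fun x hx =>
    (hcOnIci.mono (by rw [Set.uIcc_of_le hx]; exact Set.Icc_subset_Ici_self)).intervalIntegrable
  have hPderiv : ∀ x : ℝ, 0 < x → HasDerivAt P (c x) x := fun x hx =>
    integral_hasDerivAt_right (hint x hx.le)
      (hcOnIoi.stronglyMeasurableAtFilter isOpen_Ioi x hx)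
      (hccont x hx.le)
  -- P ≥ id on Ici 0
  have hPge : ∀ x : ℝ, 0 ≤ x → x ≤ P x := by
    intro x hx
    have h1 : (∫ t in (0:ℝ)..x, (1:ℝ)) ≤ ∫ t in (0:ℝ)..x, c t := by
      apply intervalIntegral.integral_mono_on hx (intervalIntegrable_const) (hint x hx)
      intro t _; exact hcone t
    simpa using h1
  -- continuity of P on Ici 0
  have hPcont : ContinuousOn P (Set.Ici 0) := by
    intro x hx
    rcases eq_or_lt_of_le (Set.mem_Ici.mp hx : (0:ℝ) ≤ x) with h0 | h0
    · have hI : IntegrableOn c (Set.uIcc (0:ℝ) 1) volume := by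
        rw [Set.uIcc_of_le zero_le_one]
        exact (hcOnIci.mono Set.Icc_subset_Ici_self).integrableOn_compact isCompact_Icc
      have := (intervalIntegral.continuousOn_primitive_interval hI) 0 (by
        rw [Set.uIcc_of_le zero_le_one]; exact ⟨le_rfl, zero_le_one⟩)
      rw [← h0]
      refine (this.mono_of_mem_nhdsWithin ?_)
      rw [Set.uIcc_of_le zero_le_one]
      have : Set.Icc (0:ℝ) 1 = Set.Ici 0 ∩ Set.Iic 1 := (Set.Ici_inter_Iic).symm
      rw [this]
      exact inter_mem_nhdsWithin _ (Iic_mem_nhds zero_lt_one)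
    · exact ((hPderiv x h0).continuousAt).continuousWithinAt
  -- the function D with D' = exp(P) * ρ'^2 ≥ 0 on Ioi 0
  set D : ℝ → ℝ := fun x => Real.exp (P x) * (ρ x * ρ' x - ((n:ℝ) - 1)) + ((n:ℝ) - 1)
    with hDdef
  have hvderiv : ∀ x : ℝ, 0 ≤ x → HasDerivAt (fun y => ρ y * ρ' y)
      (ρ' x * ρ' x + ρ x * (((n : ℝ) - 1) * (1 + ρ' x ^ 2) / ρ x - (1 + ρ' x ^ 2) * ρ' x)) x :=
    fun x hx => (hρ x hx).mul (hode x hx)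
  have hDderiv : ∀ x : ℝ, 0 < x → HasDerivAt D (Real.exp (P x) * ρ' x ^ 2) x := by
    intro x hx
    have h1 := (((hPderiv x hx).exp).mul (((hvderiv x hx.le)).sub_const ((n:ℝ)-1))).add_const
      ((n:ℝ) - 1)
    convert h1 using 1
    any_goals rfl
    have hρx : ρ x ≠ 0 := (hpos x hx.le).ne'
    field_simp [hcdef]
    ring
  have hDmono : MonotoneOn D (Set.Ici 0) := by
    apply monotoneOn_of_hasDerivWithinAt_nonneg (f' := fun x => Real.exp (P x) * ρ' x ^ 2)
      (convex_Ici 0)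
    · apply ContinuousOn.add _ continuousOn_const
      apply ContinuousOn.mul (Real.continuous_exp.comp_continuousOn hPcont)
      apply ContinuousOn.sub _ continuousOn_const
      exact fun x hx => (((hρ x hx).continuousAt.mul (hode x hx).continuousAt)).continuousWithinAt
    · intro x hx
      rw [interior_Ici] at hx
      exact ((hDderiv x hx).hasDerivWithinAt)
    · intro x hx
      positivity
  have hP0 : P 0 = 0 := intervalIntegral.integral_same
  have hD0 : D 0 = 0 := by
    simp only [hDdef, hρ'0, hP0, Real.exp_zero, mul_zero, zero_sub, one_mul]
    ring
  -- v x ≥ (n-1)(1 - exp (-x))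
  have hv_lb : ∀ x : ℝ, 0 ≤ x → ((n:ℝ) - 1) * (1 - Real.exp (-x)) ≤ ρ x * ρ' x := by
    intro x hx
    have hDx : 0 ≤ D x := by
      rw [← hD0]; exact hDmono Set.self_mem_Ici hx hx
    have hP1 : Real.exp (-P x) ≤ Real.exp (-x) := Real.exp_le_exp.2 (by linarith [hPge x hx])
    have hE : Real.exp (P x) * Real.exp (-P x) = 1 := by
      rw [← Real.exp_add]; simp
    simp only [hDdef] at hDx
    have h2 : -((n:ℝ)-1) * Real.exp (-P x) ≤ ρ x * ρ' x - ((n:ℝ)-1) := by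
      have h3 : -((n:ℝ)-1) ≤ Real.exp (P x) * (ρ x * ρ' x - ((n:ℝ)-1)) := by linarith
      calc -((n:ℝ)-1) * Real.exp (-P x)
          ≤ (Real.exp (P x) * (ρ x * ρ' x - ((n:ℝ)-1))) * Real.exp (-P x) :=
            mul_le_mul_of_nonneg_right h3 (Real.exp_pos (-P x)).le
        _ = ρ x * ρ' x - ((n:ℝ)-1) := by
            rw [mul_comm (Real.exp (P x)), mul_assoc, hE, mul_one]
    nlinarith [mul_nonneg hnpos.le (sub_nonneg.2 hP1)]
  -- monotone comparison for F = ρ²/2 - (n-1)(x-1+exp(-x))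
  set F : ℝ → ℝ := fun x => ρ x ^ 2 / 2 - ((n:ℝ) - 1) * (x - 1 + Real.exp (-x)) with hFdef
  have hFderiv : ∀ x : ℝ, 0 ≤ x →
      HasDerivAt F (ρ x * ρ' x - ((n:ℝ) - 1) * (1 - Real.exp (-x))) x := by
    intro x hx
    have h1 : HasDerivAt (fun y => ρ y ^ 2 / 2) (ρ x * ρ' x) x := by
      have := ((hρ x hx).pow 2).div_const 2
      convert this using 1
      any_goals rfl
      all_goals ring
    have h2 : HasDerivAt (fun y : ℝ => y - 1 + Real.exp (-y)) (1 - Real.exp (-x)) x := by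
      have he : HasDerivAt (fun y : ℝ => Real.exp (-y)) (-Real.exp (-x)) x := by
        have := (Real.hasDerivAt_exp (-x)).comp x ((hasDerivAt_id x).neg)
        convert this using 1
        any_goals rfl
        all_goals ring
      have := ((hasDerivAt_id x).sub_const 1).add he
      convert this using 1
      any_goals rfl
      all_goals ring
    have := h1.sub (h2.const_mul ((n:ℝ) - 1))
    convert this using 1
    any_goals rfl
    all_goals ring
  have hFmono : MonotoneOn F (Set.Ici 0) := by
    apply monotoneOn_of_hasDerivWithinAt_nonneg
      (f' := fun x => ρ x * ρ' x - ((n:ℝ) - 1) * (1 - Real.exp (-x))) (convex_Ici 0)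
    · exact fun x hx => ((hFderiv x hx).continuousAt).continuousWithinAt
    · intro x hx
      rw [interior_Ici] at hx
      exact (hFderiv x hx.le).hasDerivWithinAt
    · intro x hx
      rw [interior_Ici] at hx
      linarith [hv_lb x hx.le]
  have hF0 : F 0 = R ^ 2 / 2 := by simp [hFdef, hρ0]
  -- main square bound
  have hsq : ∀ x : ℝ, 0 ≤ x →
      2 * ((n:ℝ) - 1) * (x - 1 + Real.exp (-x)) + R ^ 2 ≤ ρ x ^ 2 := by
    intro x hx
    have := hFmono Set.self_mem_Ici hx hx
    rw [hF0] at this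
    rw [hFdef] at this
    simp only at this
    linarith
  intro x hx
  have hsqx := hsq x hx
  constructor
  · calc Real.sqrt (2 * ((n:ℝ) - 1) * (x - 1 + Real.exp (-x)) + R ^ 2)
        ≤ Real.sqrt (ρ x ^ 2) := Real.sqrt_le_sqrt hsqx
      _ = ρ x := Real.sqrt_sq (hpos x hx).le
  · have h5 : x - 1 ≤ (ρ x ^ 2 - R ^ 2) / (2 * ((n:ℝ) - 1)) := by
      rw [le_div_iff₀ (by linarith : (0:ℝ) < 2 * ((n:ℝ) - 1))]
      nlinarith [mul_pos hnpos (Real.exp_pos (-x))]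
    linarith
end

section
/- Let n ≥ 5 be an integer and R* > 0, and define τ : [R*,∞) → ℝ by τ(r) = (r−R*)²/(2(n−1)) − (1/2)·log(1 + (r−R*)²). Then τ is a subsolution of the translator profile equation on [R*,∞); that is, for every r ≥ R*: τ''(r) ≤ (1 + τ'(r)²)·(1 − (n−1)·τ'(r)/r). -/
private lemma subsol_aux (m s r : ℝ) (hm : 4 ≤ m) (hs : 0 ≤ s) (hsr : s < r) :
    1/m - (1 - s^2)/(1 + s^2)^2 ≤
      (1 + (s/m - s/(1 + s^2))^2) * (1 - m*(s/m - s/(1 + s^2))/r) := by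
  set u : ℝ := 1 + s^2 with hu
  have hu1 : 1 ≤ u := by nlinarith [sq_nonneg s]
  have hu0 : 0 < u := by linarith
  have hm0 : 0 < m := by linarith
  have hr0 : 0 < r := lt_of_le_of_lt hs hsr
  have hC : 0 ≤ m*(m-1)*u^2 - m^2*(u-2) + s^2*(u-m)^2 := by
    nlinarith [sq_nonneg (2*(m-1)*u - m), sq_nonneg (s*(u-m)), hm0.le]
  have hb : 0 ≤ m^2*u^2 + s^2*(u-m)^2 := by positivity
  have hN : 0 ≤ r*(u*(m*(m-1)*u^2 - m^2*(u-2) + s^2*(u-m)^2))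
      - s*((u-m)*(m^2*u^2 + s^2*(u-m)^2)) := by
    rcases le_or_gt u m with h | h
    · nlinarith [mul_nonneg (mul_nonneg hr0.le hu0.le) hC,
        mul_nonneg (mul_nonneg hs (sub_nonneg.2 h)) hb]
    · have hD : 0 ≤ (m^2 - 3*m - 1)*u^2 + (m^2 + 4*m)*u - m^2 := by
        have hc1 : (0:ℝ) ≤ m^2 - 3*m - 1 := by nlinarith
        have hc2 : m^2 ≤ (m^2 + 4*m)*u := by nlinarith
        nlinarith [mul_nonneg hc1 (sq_nonneg u)]
      have hid : u*(m*(m-1)*u^2 - m^2*(u-2) + s^2*(u-m)^2)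
          - (u-m)*(m^2*u^2 + s^2*(u-m)^2)
          = m*((m^2 - 3*m - 1)*u^2 + (m^2 + 4*m)*u - m^2) := by
        rw [hu]; ring
      have h1 : s*(u*(m*(m-1)*u^2 - m^2*(u-2) + s^2*(u-m)^2))
          ≤ r*(u*(m*(m-1)*u^2 - m^2*(u-2) + s^2*(u-m)^2)) :=
        mul_le_mul_of_nonneg_right hsr.le (mul_nonneg hu0.le hC)
      have h3 : 0 ≤ s*(m*((m^2 - 3*m - 1)*u^2 + (m^2 + 4*m)*u - m^2)) :=
        mul_nonneg hs (mul_nonneg hm0.le hD)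
      nlinarith [h1, h3, hid]
  have key : (1 + (s/m - s/u)^2) * (1 - m*(s/m - s/u)/r) - (1/m - (1 - s^2)/u^2)
      = (r*(u*(m*(m-1)*u^2 - m^2*(u-2) + s^2*(u-m)^2))
          - s*((u-m)*(m^2*u^2 + s^2*(u-m)^2))) / (m^2*u^3*r) := by
    have h1 : u ≠ 0 := hu0.ne'
    have h2 : m ≠ 0 := hm0.ne'
    have h3 : r ≠ 0 := hr0.ne'
    rw [hu] at h1 ⊢
    field_simp
    ring
  have hpos : 0 ≤ (r*(u*(m*(m-1)*u^2 - m^2*(u-2) + s^2*(u-m)^2))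
      - s*((u-m)*(m^2*u^2 + s^2*(u-m)^2))) / (m^2*u^3*r) :=
    div_nonneg hN (by positivity)
  linarith [key, hpos]

/-- **The model asymptotics function is a subsolution in dimensions `n ≥ 5`.**
For `n ≥ 5`, `R* > 0` and `τ(r) = (r−R*)²/(2(n−1)) − (1/2)log(1+(r−R*)²)`, one has
`τ''(r) ≤ (1+τ'(r)²)(1 − (n−1)τ'(r)/r)` for all `r ≥ R*`. -/
theorem subsolution_high_dimension
    (n : ℕ) (hn : 5 ≤ n) (Rs : ℝ) (hRs : 0 < Rs)
    (τ : ℝ → ℝ)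
    (hτ : ∀ r, τ r = (r - Rs) ^ 2 / (2 * ((n : ℝ) - 1))
        - (1 / 2) * Real.log (1 + (r - Rs) ^ 2)) :
    ∀ r, Rs ≤ r →
      deriv (deriv τ) r ≤
        (1 + deriv τ r ^ 2) * (1 - ((n : ℝ) - 1) * deriv τ r / r) := by
  have hn5 : (5:ℝ) ≤ (n:ℝ) := by exact_mod_cast hn
  set m : ℝ := (n:ℝ) - 1 with hmdef
  have hm : 4 ≤ m := by linarith
  have hm0 : m ≠ 0 := by linarith
  clear_value m
  have hτfun : τ = fun y => (y - Rs)^2/(2*m) - (1/2)*Real.log (1 + (y - Rs)^2) :=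
    funext hτ
  have hderiv : ∀ x : ℝ, HasDerivAt τ ((x - Rs)/m - (x - Rs)/(1 + (x - Rs)^2)) x := by
    intro x
    have hune : (1 + (x - Rs)^2) ≠ 0 := by positivity
    have h1 : HasDerivAt (fun y : ℝ => y - Rs) 1 x := (hasDerivAt_id x).sub_const Rs
    have h2 : HasDerivAt (fun y : ℝ => (y - Rs)^2) (2*(x - Rs)) x := by
      simpa using h1.fun_pow 2
    have h3 : HasDerivAt (fun y : ℝ => 1 + (y - Rs)^2) (2*(x - Rs)) x := h2.const_add 1
    have h4 : HasDerivAt (fun y : ℝ => Real.log (1 + (y - Rs)^2))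
        ((2*(x - Rs))/(1 + (x - Rs)^2)) x := h3.log hune
    have h5 := (h2.div_const (2*m)).sub (h4.const_mul (1/2))
    rw [hτfun]
    refine h5.congr_deriv ?_
    field_simp
  have hd1 : deriv τ = fun x => (x - Rs)/m - (x - Rs)/(1 + (x - Rs)^2) :=
    funext fun x => (hderiv x).deriv
  intro r hr
  have hune : (1 + (r - Rs)^2) ≠ 0 := by positivity
  have hdd : HasDerivAt (deriv τ)
      (1/m - (1 - (r - Rs)^2)/(1 + (r - Rs)^2)^2) r := by
    rw [hd1]
    have h1 : HasDerivAt (fun y : ℝ => y - Rs) 1 r := (hasDerivAt_id r).sub_const Rs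
    have h2 : HasDerivAt (fun y : ℝ => (y - Rs)^2) (2*(r - Rs)) r := by
      simpa using h1.fun_pow 2
    have h3 : HasDerivAt (fun y : ℝ => 1 + (y - Rs)^2) (2*(r - Rs)) r := h2.const_add 1
    have h5 := (h1.div_const m).sub (h1.div h3 hune)
    refine h5.congr_deriv ?_
    ring
  rw [hdd.deriv, (hderiv r).deriv]
  have hs : 0 ≤ r - Rs := by linarith
  have hsr : r - Rs < r := by linarith
  exact subsol_aux m (r - Rs) r hm hs hsr
end

section
/- Let n ≥ 2 be an integer and R* ≥ 2, and define τ : [R*,∞) → ℝ by τ(r) = (r−R*)²/(2(n−1)) − (1/2)·log(1 + (r−R*)²). Then τ is a subsolution of the translator profile equation on [R*,∞); that is, for every r ≥ R*: τ''(r) ≤ (1 + τ'(r)²)·(1 − (n−1)·τ'(r)/r). -/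
set_option maxHeartbeats 1000000

private lemma polyA_aux (s m : ℝ) (hs : 0 ≤ s) (hm : 1 ≤ m) :
    0 ≤ - m + 2*m^2 + s^2 - 5*s^2*m + 4*s^2*m^2 + 3*s^4 - 7*s^4*m + 3*s^4*m^2
      + 3*s^6 - 3*s^6*m + s^6*m^2 + s^8 := by
  nlinarith [sq_nonneg (s^2*m - s^2), sq_nonneg (s^3*m - s^3), sq_nonneg (s^2 - m),
    sq_nonneg (s^4 - m), sq_nonneg (s^2*(s^2-1)), sq_nonneg (m-1), mul_nonneg hs hs,
    sq_nonneg (s^3 - s), sq_nonneg (s*m - s), sq_nonneg (s^4 - s^2),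
    sq_nonneg (s^4 + s^2 - m)]

private lemma polyC_big_aux (s m : ℝ) (hs : 0 ≤ s) (hm : 7/2 ≤ m) :
    0 ≤ - 2*m + 4*m^2 - s*m + s*m^2 + s*m^3 + 2*s^2 - 10*s^2*m + 8*s^2*m^2
      - 2*s^3*m - 2*s^3*m^2 + 3*s^3*m^3 + 6*s^4 - 14*s^4*m + 6*s^4*m^2
      - s^5*m - 3*s^5*m^2 + s^5*m^3 + 6*s^6 - 6*s^6*m + 2*s^6*m^2 + 2*s^8 := by
  have h0 : (0:ℝ) ≤ 4*m^2 - 2*m := by nlinarith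
  have h1 : (0:ℝ) ≤ m^3 + m^2 - m := by nlinarith
  have h2 : (0:ℝ) ≤ 8*m^2 - 10*m + 2 := by nlinarith
  have h3 : (0:ℝ) ≤ 3*m^3 - 2*m^2 - 2*m := by nlinarith
  have h4 : (0:ℝ) ≤ 6*m^2 - 14*m + 6 := by nlinarith
  have h5 : (0:ℝ) ≤ m^3 - 3*m^2 - m := by nlinarith
  have h6 : (0:ℝ) ≤ 2*m^2 - 6*m + 6 := by nlinarith
  nlinarith [mul_nonneg hs h1, mul_nonneg (pow_nonneg hs 2) h2,
    mul_nonneg (pow_nonneg hs 3) h3, mul_nonneg (pow_nonneg hs 4) h4,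
    mul_nonneg (pow_nonneg hs 5) h5, mul_nonneg (pow_nonneg hs 6) h6,
    pow_nonneg hs 8]

private lemma polyC_small_aux (s m : ℝ) (hs : 0 ≤ s) (hm : 1 ≤ m) (hm2 : m ≤ 7/2) :
    0 ≤ - 2*m + 4*m^2 - s*m + s*m^2 + s*m^3 + 2*s^2 - 10*s^2*m + 8*s^2*m^2
      - 2*s^3*m - 2*s^3*m^2 + 3*s^3*m^3 + 6*s^4 - 14*s^4*m + 6*s^4*m^2
      - s^5*m - 3*s^5*m^2 + s^5*m^3 + 6*s^6 - 6*s^6*m + 2*s^6*m^2 + 2*s^8 := by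
  have hu : (0:ℝ) ≤ m - 1 := by linarith
  have hw : (0:ℝ) ≤ 7/2 - m := by linarith
  have hu2 : (0:ℝ) ≤ (m-1)^2 := sq_nonneg _
  have hu3 : (0:ℝ) ≤ (m-1)^3 := by positivity
  linarith [mul_nonneg (sq_nonneg (s^3 - s)) hw,
    mul_nonneg (sq_nonneg (3 - s)) hu,
    hu2,
    mul_nonneg (mul_nonneg (sq_nonneg (3*s - s^3)) hs) hu,
    mul_nonneg (sq_nonneg (s - 1)) hw,
    mul_nonneg (mul_nonneg (sq_nonneg (1 - s)) hs) hw,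
    mul_nonneg hs hu2,
    mul_nonneg hs hu3,
    mul_nonneg (sq_nonneg ((m-1)*s^4 - s^3)) hu,
    mul_nonneg (pow_nonneg hs 2) hu2,
    mul_nonneg (pow_nonneg hs 6) hu2,
    mul_nonneg (mul_nonneg (sq_nonneg (2*s - s^3)) hs) hu,
    mul_nonneg (sq_nonneg (s^2 - s)) hw,
    mul_nonneg (pow_nonneg hs 3) hu2,
    mul_nonneg (pow_nonneg hs 3) hu3,
    mul_nonneg (sq_nonneg (3 - 2*s^4)) hw,
    mul_nonneg (sq_nonneg (s^4 - s^3)) hu,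
    mul_nonneg (pow_nonneg hs 4) hu2,
    mul_nonneg (sq_nonneg (2 - s)) hu,
    mul_nonneg (mul_nonneg (sq_nonneg (3 - s)) hs) hu,
    mul_nonneg (pow_nonneg hs 5) hu3,
    mul_nonneg (sq_nonneg (3*s - s^3)) hu,
    mul_nonneg (sq_nonneg (s^4 - s)) hw,
    sq_nonneg ((m-1)*s^3 - s^4),
    mul_nonneg (mul_nonneg (sq_nonneg (s^4 - s^2)) hu) hw,
    mul_nonneg (pow_nonneg hs 6) hu3,
    mul_nonneg (sq_nonneg (2*s - s^2)) hu,
    mul_nonneg (sq_nonneg ((m-1)*s^3 - s^4)) hw,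
    mul_nonneg (sq_nonneg (s^3 - s^2)) hw,
    mul_nonneg (sq_nonneg ((m-1)*s^4 - s^4)) hw]

private lemma polyC_aux (s m : ℝ) (hs : 0 ≤ s) (hm : 1 ≤ m) :
    0 ≤ - 2*m + 4*m^2 - s*m + s*m^2 + s*m^3 + 2*s^2 - 10*s^2*m + 8*s^2*m^2
      - 2*s^3*m - 2*s^3*m^2 + 3*s^3*m^3 + 6*s^4 - 14*s^4*m + 6*s^4*m^2
      - s^5*m - 3*s^5*m^2 + s^5*m^3 + 6*s^6 - 6*s^6*m + 2*s^6*m^2 + 2*s^8 := by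
  rcases le_total m (7/2) with h | h
  · exact polyC_small_aux s m hs hm h
  · exact polyC_big_aux s m hs h

/-- **The model asymptotics function is a subsolution for base radius `R* ≥ 2`.**
For `n ≥ 2`, `R* ≥ 2` and `τ(r) = (r−R*)²/(2(n−1)) − (1/2)log(1+(r−R*)²)`, one has
`τ''(r) ≤ (1+τ'(r)²)(1 − (n−1)τ'(r)/r)` for all `r ≥ R*`. -/
theorem subsolution_large_base
    (n : ℕ) (hn : 2 ≤ n) (Rs : ℝ) (hRs : 2 ≤ Rs)
    (τ : ℝ → ℝ)
    (hτ : ∀ r, τ r = (r - Rs) ^ 2 / (2 * ((n : ℝ) - 1))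
        - (1 / 2) * Real.log (1 + (r - Rs) ^ 2)) :
    ∀ r, Rs ≤ r →
      deriv (deriv τ) r ≤
        (1 + deriv τ r ^ 2) * (1 - ((n : ℝ) - 1) * deriv τ r / r) := by
  set m : ℝ := (n : ℝ) - 1 with hm_def
  have hn2 : (2:ℝ) ≤ (n:ℝ) := by exact_mod_cast hn
  have hm : 1 ≤ m := by simp only [hm_def]; linarith
  have hm0 : m ≠ 0 := by linarith
  have hτfun : τ = fun r => (r - Rs) ^ 2 / (2 * m) - (1 / 2) * Real.log (1 + (r - Rs) ^ 2) :=
    funext hτ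
  -- positivity of the inner function
  have hpos : ∀ x : ℝ, (0:ℝ) < 1 + (x - Rs) ^ 2 := fun x => by positivity
  -- first derivative
  have hD1 : ∀ x : ℝ, HasDerivAt τ ((x - Rs) / m - (x - Rs) / (1 + (x - Rs) ^ 2)) x := by
    intro x
    rw [hτfun]
    have hbase : HasDerivAt (fun y : ℝ => y - Rs) 1 x := (hasDerivAt_id x).sub_const Rs
    have hsq : HasDerivAt (fun y : ℝ => (y - Rs) ^ 2) (2 * (x - Rs)) x := by
      have := hbase.fun_pow 2
      simpa using this
    have h1 : HasDerivAt (fun y : ℝ => (y - Rs) ^ 2 / (2 * m)) ((2 * (x - Rs)) / (2 * m)) x :=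
      hsq.div_const (2 * m)
    have hinner : HasDerivAt (fun y : ℝ => 1 + (y - Rs) ^ 2) (2 * (x - Rs)) x :=
      hsq.const_add 1
    have hlog : HasDerivAt (fun y : ℝ => Real.log (1 + (y - Rs) ^ 2))
        ((2 * (x - Rs)) / (1 + (x - Rs) ^ 2)) x :=
      hinner.log (ne_of_gt (hpos x))
    have h2 := hlog.const_mul (1/2 : ℝ)
    have h := h1.fun_sub h2
    refine h.congr_deriv ?_
    have hden := ne_of_gt (hpos x)
    field_simp
  have hderiv1 : deriv τ = fun x => (x - Rs) / m - (x - Rs) / (1 + (x - Rs) ^ 2) :=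
    funext fun x => (hD1 x).deriv
  -- second derivative
  have hD2 : ∀ x : ℝ, HasDerivAt (deriv τ)
      (1 / m - (1 - (x - Rs) ^ 2) / (1 + (x - Rs) ^ 2) ^ 2) x := by
    intro x
    rw [hderiv1]
    have hbase : HasDerivAt (fun y : ℝ => y - Rs) 1 x := (hasDerivAt_id x).sub_const Rs
    have hsq : HasDerivAt (fun y : ℝ => (y - Rs) ^ 2) (2 * (x - Rs)) x := by
      have := hbase.fun_pow 2
      simpa using this
    have hinner : HasDerivAt (fun y : ℝ => 1 + (y - Rs) ^ 2) (2 * (x - Rs)) x :=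
      hsq.const_add 1
    have h1 : HasDerivAt (fun y : ℝ => (y - Rs) / m) (1 / m) x := by
      simpa using hbase.div_const m
    have h2 : HasDerivAt (fun y : ℝ => (y - Rs) / (1 + (y - Rs) ^ 2))
        ((1 * (1 + (x - Rs) ^ 2) - (x - Rs) * (2 * (x - Rs))) / (1 + (x - Rs) ^ 2) ^ 2) x :=
      hbase.div hinner (ne_of_gt (hpos x))
    have h := h1.sub h2
    have hnum : 1 * (1 + (x - Rs) ^ 2) - (x - Rs) * (2 * (x - Rs)) = 1 - (x - Rs) ^ 2 := by
      ring
    rw [hnum] at h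
    exact h
  intro r hr
  have hr0 : (0:ℝ) < r := by linarith
  set s : ℝ := r - Rs with hs_def
  have hs : 0 ≤ s := by simp only [hs_def]; linarith
  have ha : (0:ℝ) < 1 + s ^ 2 := by positivity
  have e1 : deriv τ r = s / m - s / (1 + s ^ 2) := by
    rw [hderiv1]
  have e2 : deriv (deriv τ) r = 1 / m - (1 - s ^ 2) / (1 + s ^ 2) ^ 2 := (hD2 r).deriv
  rw [e1, e2]
  have hA := polyA_aux s m hs hm
  have hC := polyC_aux s m hs hm
  have hRs2 : (0:ℝ) ≤ r - s - 2 := by simp only [hs_def]; linarith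
  have hE : 0 ≤ (r - s - 2) *
      (- m + 2*m^2 + s^2 - 5*s^2*m + 4*s^2*m^2 + 3*s^4 - 7*s^4*m + 3*s^4*m^2
        + 3*s^6 - 3*s^6*m + s^6*m^2 + s^8)
      + (- 2*m + 4*m^2 - s*m + s*m^2 + s*m^3 + 2*s^2 - 10*s^2*m + 8*s^2*m^2
        - 2*s^3*m - 2*s^3*m^2 + 3*s^3*m^3 + 6*s^4 - 14*s^4*m + 6*s^4*m^2
        - s^5*m - 3*s^5*m^2 + s^5*m^3 + 6*s^6 - 6*s^6*m + 2*s^6*m^2 + 2*s^8) :=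
    add_nonneg (mul_nonneg hRs2 hA) hC
  have id1 : 1 + (s / m - s / (1 + s ^ 2)) ^ 2
      = (m^2*(1+s^2)^2 + s^2*((1+s^2) - m)^2) / (m^2*(1+s^2)^2) := by
    have hane : (1 + s ^ 2) ≠ 0 := ne_of_gt ha
    field_simp
  have id2 : 1 - m * (s / m - s / (1 + s ^ 2)) / r
      = ((1+s^2)*(r - s) + m*s) / ((1+s^2)*r) := by
    have hane : (1 + s ^ 2) ≠ 0 := ne_of_gt ha
    have hrne : r ≠ 0 := ne_of_gt hr0
    field_simp
    ring
  have id3 : 1 / m - (1 - s ^ 2) / (1 + s ^ 2) ^ 2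
      = ((1+s^2)^2 - m*(1 - s^2)) / (m*(1+s^2)^2) := by
    have hane : (1 + s ^ 2) ≠ 0 := ne_of_gt ha
    field_simp
  rw [id1, id2, id3, div_mul_div_comm]
  rw [div_le_div_iff₀ (by positivity) (by positivity)]
  have hE2 : 0 ≤ m*(1+s^2)^2 * ((r - s - 2) *
      (- m + 2*m^2 + s^2 - 5*s^2*m + 4*s^2*m^2 + 3*s^4 - 7*s^4*m + 3*s^4*m^2
        + 3*s^6 - 3*s^6*m + s^6*m^2 + s^8)
      + (- 2*m + 4*m^2 - s*m + s*m^2 + s*m^3 + 2*s^2 - 10*s^2*m + 8*s^2*m^2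
        - 2*s^3*m - 2*s^3*m^2 + 3*s^3*m^3 + 6*s^4 - 14*s^4*m + 6*s^4*m^2
        - s^5*m - 3*s^5*m^2 + s^5*m^3 + 6*s^6 - 6*s^6*m + 2*s^6*m^2 + 2*s^8)) :=
    mul_nonneg (by positivity) hE
  nlinarith [hE2]
end

section
/- Let n ≥ 2 be an integer, λ > 1, and for R ≥ 0 let F_R ⊆ ℝ^{n+1} denote the solid parabolic funnel of aperture R, i.e. the set of points x = (x₁,…,x_{n+1}) such that, writing q = √(x₁²+⋯+x_n²), one has q ≥ R and f₋^R(q) ≤ x_{n+1} ≤ f₊(q), where f₊(q) = q²/(2(n−1)) + 1 and f₋^R(q) = (q−R−2)²/(2(n−1)) − (λ/2)·log(1 + (q−R−2)²) − (π(R+π/2)+4)/(2(n−1)). Then for every R₀ > 0 the set ⋃_{R ∈ [0,R₀]} F_R \ F_{R₀} is a bounded subset of ℝ^{n+1}; consequently its closure is compact. -/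
lemma g_mono (m lam a b : ℝ) (hm : 1 ≤ m) (hlam : 1 < lam)
    (ha : m * lam ≤ a ^ 2) (h0 : 0 ≤ a) (hab : a ≤ b) :
    a ^ 2 / (2 * m) - lam / 2 * Real.log (1 + a ^ 2) ≤
      b ^ 2 / (2 * m) - lam / 2 * Real.log (1 + b ^ 2) := by
  have h1a : (0:ℝ) < 1 + a ^ 2 := by positivity
  have h1b : (0:ℝ) < 1 + b ^ 2 := by positivity
  have hba : a ^ 2 ≤ b ^ 2 := by nlinarith
  have hlog : Real.log (1 + b ^ 2) - Real.log (1 + a ^ 2) ≤ (b ^ 2 - a ^ 2) / (1 + a ^ 2) := by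
    rw [← Real.log_div (ne_of_gt h1b) (ne_of_gt h1a)]
    have h := Real.log_le_sub_one_of_pos (div_pos h1b h1a)
    have e : (1 + b ^ 2) / (1 + a ^ 2) - 1 = (b ^ 2 - a ^ 2) / (1 + a ^ 2) := by
      field_simp
      ring
    linarith [e ▸ h]
  have hm0 : (0:ℝ) < m := by linarith
  have key : lam / 2 * ((b ^ 2 - a ^ 2) / (1 + a ^ 2)) ≤ (b ^ 2 - a ^ 2) / (2 * m) := by
    have e : lam / 2 * ((b ^ 2 - a ^ 2) / (1 + a ^ 2)) = lam * (b ^ 2 - a ^ 2) / (2 * (1 + a ^ 2)) := by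
      field_simp
    rw [e, div_le_div_iff₀ (by positivity) (by positivity : (0:ℝ) < 2 * m)]
    nlinarith [mul_nonneg (sub_nonneg.mpr hba) (sub_nonneg.mpr (le_of_lt hlam))]
  have h2 : lam / 2 * (Real.log (1 + b ^ 2) - Real.log (1 + a ^ 2)) ≤ (b ^ 2 - a ^ 2) / (2 * m) :=
    le_trans (mul_le_mul_of_nonneg_left hlog (by linarith : (0:ℝ) ≤ lam / 2)) key
  have e2 : a ^ 2 / (2 * m) + (b ^ 2 - a ^ 2) / (2 * m) = b ^ 2 / (2 * m) := by ring
  nlinarith [h2, e2]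

set_option maxHeartbeats 1000000 in

/-- **Compactness property of the family of parabolic funnels.**
For `n ≥ 2` and `λ > 1`, let `F R ⊆ ℝ^{n+1}` be the solid parabolic funnel of
aperture `R`: the set of `x` with `q ≥ R` and `f₋^R(q) ≤ x_{n+1} ≤ f₊(q)`, where
`q = √(x₁²+⋯+x_n²)`, `f₊(q) = q²/(2(n−1)) + 1` and
`f₋^R(q) = (q−R−2)²/(2(n−1)) − (λ/2)log(1+(q−R−2)²) − (π(R+π/2)+4)/(2(n−1))`.
Then for every `R₀ > 0` the set `⋃_{R ∈ [0,R₀]} F R \ F R₀` is bounded, and hence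
its closure is compact. -/
theorem funnel_family_compactness
    (n : ℕ) (hn : 2 ≤ n) (lam : ℝ) (hlam : 1 < lam)
    (q : EuclideanSpace ℝ (Fin (n + 1)) → ℝ)
    (hq : ∀ x, q x = Real.sqrt (∑ i : Fin n, x (Fin.castSucc i) ^ 2))
    (fplus : ℝ → ℝ) (hfplus : ∀ s, fplus s = s ^ 2 / (2 * ((n : ℝ) - 1)) + 1)
    (fminus : ℝ → ℝ → ℝ)
    (hfminus : ∀ R s, fminus R s =
      (s - R - 2) ^ 2 / (2 * ((n : ℝ) - 1))
        - (lam / 2) * Real.log (1 + (s - R - 2) ^ 2)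
        - (Real.pi * (R + Real.pi / 2) + 4) / (2 * ((n : ℝ) - 1)))
    (F : ℝ → Set (EuclideanSpace ℝ (Fin (n + 1))))
    (hF : ∀ R, F R = {x | R ≤ q x ∧ fminus R (q x) ≤ x (Fin.last n) ∧
      x (Fin.last n) ≤ fplus (q x)}) :
    ∀ R₀ : ℝ, 0 < R₀ →
      Bornology.IsBounded ((⋃ R ∈ Set.Icc (0 : ℝ) R₀, F R) \ F R₀) ∧
      IsCompact (closure ((⋃ R ∈ Set.Icc (0 : ℝ) R₀, F R) \ F R₀)) := by
  intro R₀ hR₀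
  obtain ⟨m, hm_def⟩ : ∃ m : ℝ, m = (n : ℝ) - 1 := ⟨_, rfl⟩
  rw [← hm_def] at hfplus hfminus
  have hm : 1 ≤ m := by
    have : (2 : ℝ) ≤ (n : ℝ) := by exact_mod_cast hn
    rw [hm_def]; linarith
  have hm0 : (0 : ℝ) < m := by linarith
  have hml : 0 ≤ m * lam := by positivity
  obtain ⟨u₀, hu₀_def⟩ : ∃ u : ℝ, u = Real.sqrt (m * lam) := ⟨_, rfl⟩
  have hu₀ : 0 ≤ u₀ := hu₀_def ▸ Real.sqrt_nonneg _
  have hu₀sq : u₀ ^ 2 = m * lam := hu₀_def ▸ Real.sq_sqrt hml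
  obtain ⟨M, hM_def⟩ : ∃ M : ℝ, M = R₀ + 2 + u₀ := ⟨_, rfl⟩
  have hM0 : 0 < M := by rw [hM_def]; positivity
  have hpi : (0:ℝ) < Real.pi := Real.pi_pos
  obtain ⟨C, hC_def⟩ : ∃ C : ℝ, C = M ^ 2 / (2 * m) + 1
      + lam / 2 * Real.log (1 + (M + R₀ + 2) ^ 2)
      + (Real.pi * (R₀ + Real.pi / 2) + 4) / (2 * m) := ⟨_, rfl⟩
  have hlog0 : 0 ≤ Real.log (1 + (M + R₀ + 2) ^ 2) := Real.log_nonneg (by nlinarith)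
  have hC0 : 0 < C := by
    have h1 : 0 ≤ M ^ 2 / (2 * m) := by positivity
    have h2 : 0 ≤ lam / 2 * Real.log (1 + (M + R₀ + 2) ^ 2) := by
      apply mul_nonneg (by linarith) hlog0
    have h3 : 0 ≤ (Real.pi * (R₀ + Real.pi / 2) + 4) / (2 * m) := by positivity
    rw [hC_def]; linarith
  have hbdd : (⋃ R ∈ Set.Icc (0 : ℝ) R₀, F R) \ F R₀ ⊆ Metric.closedBall 0 (M + C) := by
    intro x hx
    obtain ⟨hx1, hx2⟩ := hx
    rw [Set.mem_iUnion₂] at hx1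
    obtain ⟨R, hR, hxR⟩ := hx1
    obtain ⟨hR0, hRR₀⟩ := hR
    rw [hF] at hxR hx2
    obtain ⟨hqR, hlo, hhi⟩ := hxR
    have hq0 : 0 ≤ q x := by rw [hq]; exact Real.sqrt_nonneg _
    obtain ⟨t, ht_def⟩ : ∃ t : ℝ, t = x (Fin.last n) := ⟨_, rfl⟩
    rw [← ht_def] at hlo hhi
    -- Step 1 : q x ≤ M
    have hqM : q x ≤ M := by
      by_contra h
      push_neg at h
      apply hx2
      have hMge : R₀ ≤ M := by rw [hM_def]; linarith
      refine ⟨by linarith, ?_, ht_def ▸ hhi⟩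
      -- fminus R₀ (q x) ≤ fminus R (q x) ≤ t
      have ha : u₀ ≤ q x - R₀ - 2 := by rw [hM_def] at h; linarith
      have ha0 : 0 ≤ q x - R₀ - 2 := le_trans hu₀ ha
      have hab : q x - R₀ - 2 ≤ q x - R - 2 := by linarith
      have hasq : m * lam ≤ (q x - R₀ - 2) ^ 2 := by
        rw [← hu₀sq]; exact pow_le_pow_left₀ hu₀ ha 2
      have hg := g_mono m lam (q x - R₀ - 2) (q x - R - 2) hm hlam hasq ha0 hab
      have hc : (Real.pi * (R + Real.pi / 2) + 4) / (2 * m)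
          ≤ (Real.pi * (R₀ + Real.pi / 2) + 4) / (2 * m) :=
        div_le_div_of_nonneg_right (by nlinarith) (by positivity)
      rw [hfminus] at hlo ⊢
      rw [← ht_def]
      linarith
    -- Step 2 : bounds on t
    have hdiff : (q x - R - 2) ^ 2 ≤ (M + R₀ + 2) ^ 2 := by
      apply sq_le_sq'
      · linarith
      · linarith
    have hlogle : Real.log (1 + (q x - R - 2) ^ 2) ≤ Real.log (1 + (M + R₀ + 2) ^ 2) := by
      apply Real.log_le_log (by positivity)
      linarith
    have hc2 : (Real.pi * (R + Real.pi / 2) + 4) / (2 * m)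
        ≤ (Real.pi * (R₀ + Real.pi / 2) + 4) / (2 * m) :=
      div_le_div_of_nonneg_right (by nlinarith) (by positivity)
    have htlo : -C ≤ t := by
      rw [hfminus] at hlo
      have hsq : 0 ≤ (q x - R - 2) ^ 2 / (2 * m) := by positivity
      have hlam2 : lam / 2 * Real.log (1 + (q x - R - 2) ^ 2)
          ≤ lam / 2 * Real.log (1 + (M + R₀ + 2) ^ 2) :=
        mul_le_mul_of_nonneg_left hlogle (by linarith)
      rw [hC_def]
      have h1 : 0 ≤ M ^ 2 / (2 * m) := by positivity
      linarith
    have hthi : t ≤ C := by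
      rw [hfplus] at hhi
      have h2 : 0 ≤ lam / 2 * Real.log (1 + (M + R₀ + 2) ^ 2) :=
        mul_nonneg (by linarith) hlog0
      have h3 : 0 ≤ (Real.pi * (R₀ + Real.pi / 2) + 4) / (2 * m) := by positivity
      have hq2 : (q x) ^ 2 ≤ M ^ 2 := pow_le_pow_left₀ hq0 hqM 2
      have h4 : (q x) ^ 2 / (2 * m) ≤ M ^ 2 / (2 * m) :=
        div_le_div_of_nonneg_right hq2 (by positivity)
      rw [hC_def]
      linarith
    -- Step 3 : norm bound
    have hnorm : ‖x‖ ^ 2 = (q x) ^ 2 + t ^ 2 := by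
      have hsum : 0 ≤ ∑ i : Fin n, x (Fin.castSucc i) ^ 2 :=
        Finset.sum_nonneg fun i _ => sq_nonneg _
      have hq2 : (q x) ^ 2 = ∑ i : Fin n, x (Fin.castSucc i) ^ 2 := by
        rw [hq]; exact Real.sq_sqrt hsum
      have hn2 : ‖x‖ ^ 2 = ∑ i : Fin (n+1), x i ^ 2 := by
        rw [EuclideanSpace.norm_eq]
        rw [Real.sq_sqrt (Finset.sum_nonneg fun i _ => sq_nonneg _)]
        congr 1; ext i; rw [Real.norm_eq_abs, sq_abs]
      rw [hn2, Fin.sum_univ_castSucc, hq2, ht_def]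
    rw [Metric.mem_closedBall, dist_zero_right]
    have habs : |t| ≤ C := abs_le.mpr ⟨htlo, hthi⟩
    have hMC : 0 ≤ M + C := by linarith
    have hsq : ‖x‖ ^ 2 ≤ (M + C) ^ 2 := by
      rw [hnorm]
      have h1 : (q x) ^ 2 ≤ M ^ 2 := pow_le_pow_left₀ hq0 hqM 2
      have h2 : t ^ 2 ≤ C ^ 2 := by rw [← sq_abs]; exact pow_le_pow_left₀ (abs_nonneg _) habs 2
      have h3 : 0 ≤ M * C := mul_nonneg hM0.le hC0.le
      calc (q x) ^ 2 + t ^ 2 ≤ M ^ 2 + C ^ 2 := add_le_add h1 h2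
        _ ≤ (M + C) ^ 2 := by nlinarith
    exact (pow_le_pow_iff_left₀ (norm_nonneg x) hMC two_ne_zero).mp hsq
  have hB : Bornology.IsBounded ((⋃ R ∈ Set.Icc (0 : ℝ) R₀, F R) \ F R₀) :=
    Metric.isBounded_closedBall.subset hbdd
  exact ⟨hB, hB.isCompact_closure⟩
end

section
/- Let n ≥ 2 be an integer, let 0 ≤ R < R*, and let φ : (R, R*] → ℝ be differentiable and satisfy the translator profile ODE φ'(r) = (1+φ(r)²)(1 − (n−1)φ(r)/r) for all r ∈ (R, R*], with φ(r) ≤ 0 for all r ∈ (R, R*]. Then R* − R ≤ π/2. -/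
/-- **Bound on the radius where the winglike profile turns vertical.**
If `φ` solves `φ'(r) = (1+φ(r)²)(1 − (n−1)φ(r)/r)` on `(R, R*]` with `0 ≤ R < R*`
and `φ ≤ 0` on `(R, R*]`, then `R* − R ≤ π/2`. -/
theorem winglike_neck_radius_bound
    (n : ℕ) (hn : 2 ≤ n) (R Rs : ℝ) (hR : 0 ≤ R) (hRRs : R < Rs) (φ : ℝ → ℝ)
    (hode : ∀ r, r ∈ Set.Ioc R Rs →
      HasDerivAt φ ((1 + φ r ^ 2) * (1 - ((n : ℝ) - 1) * φ r / r)) r)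
    (hφneg : ∀ r, r ∈ Set.Ioc R Rs → φ r ≤ 0) :
    Rs - R ≤ Real.pi / 2 := by
  set g : ℝ → ℝ := fun x => Real.arctan (φ x) - x with hg
  -- derivative of g on Ioc R Rs
  have hgderiv : ∀ x ∈ Set.Ioc R Rs,
      HasDerivAt g (-(((n : ℝ) - 1) * φ x / x)) x := by
    intro x hx
    have h1 : HasDerivAt (fun y => Real.arctan (φ y))
        ((1 / (1 + φ x ^ 2)) * ((1 + φ x ^ 2) * (1 - ((n : ℝ) - 1) * φ x / x))) x := by
      exact (Real.hasDerivAt_arctan (φ x)).comp x (hode x hx)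
    have hne : (1 : ℝ) + φ x ^ 2 ≠ 0 := by positivity
    have h2 : (1 / (1 + φ x ^ 2)) * ((1 + φ x ^ 2) * (1 - ((n : ℝ) - 1) * φ x / x))
        = 1 - ((n : ℝ) - 1) * φ x / x := by field_simp
    rw [h2] at h1
    have : HasDerivAt g (1 - ((n : ℝ) - 1) * φ x / x - 1) x := h1.sub (hasDerivAt_id x)
    convert this using 1
    ring
  -- g is monotone on any [r, Rs] with R < r
  have key : ∀ r ∈ Set.Ioo R Rs, Rs - r ≤ Real.arctan (φ Rs) - Real.arctan (φ r) := by
    intro r hr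
    have hsub : Set.Icc r Rs ⊆ Set.Ioc R Rs := fun x hx =>
      ⟨lt_of_lt_of_le hr.1 hx.1, hx.2⟩
    have hmono : MonotoneOn g (Set.Icc r Rs) := by
      apply monotoneOn_of_deriv_nonneg (convex_Icc r Rs)
      · exact fun x hx => ((hgderiv x (hsub hx)).continuousAt).continuousWithinAt
      · intro x hx
        rw [interior_Icc] at hx
        exact ((hgderiv x (hsub (Set.Ioo_subset_Icc_self hx))).differentiableAt).differentiableWithinAt
      · intro x hx
        rw [interior_Icc] at hx
        have hx' := hsub (Set.Ioo_subset_Icc_self hx)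
        rw [(hgderiv x hx').deriv]
        have hφ := hφneg x hx'
        have hxpos : 0 < x := lt_of_le_of_lt hR hx'.1
        have : ((n : ℝ) - 1) * φ x / x ≤ 0 := by
          apply div_nonpos_of_nonpos_of_nonneg _ hxpos.le
          apply mul_nonpos_of_nonneg_of_nonpos _ hφ
          have : (2 : ℝ) ≤ (n : ℝ) := by exact_mod_cast hn
          linarith
        linarith
    have := hmono ⟨le_refl r, (hr.2).le⟩ ⟨(hr.2).le, le_refl Rs⟩ hr.2.le
    simp only [hg] at this
    linarith
  -- conclude
  by_contra hc
  push_neg at hc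
  have hπ : 0 < Real.pi / 2 := by positivity
  have hrIoo : Rs - Real.pi / 2 ∈ Set.Ioo R Rs := ⟨by linarith, by linarith⟩
  have h1 := key _ hrIoo
  have h2 : Real.arctan (φ Rs) ≤ 0 := by
    have := Real.arctan_strictMono.monotone (hφneg Rs ⟨hRRs, le_refl Rs⟩)
    simpa using this
  have h3 : -(Real.pi / 2) < Real.arctan (φ (Rs - Real.pi / 2)) :=
    Real.neg_pi_div_two_lt_arctan _
  linarith
end

section
/- Let n ≥ 2 be an integer, d > 0, R* > 0, and let η : [0,d] → ℝ be twice differentiable with 0 < η(x) ≤ R* for all x ∈ [0,d], η'(0) = 0, η'(x) ≥ 0 for all x ∈ [0,d], and satisfying η''(x) = (1+η'(x)²)·(η'(x) + (n−1)/η(x)) for all x ∈ [0,d]. Then d ≤ (π/2)·R*/(n−1). -/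
/-- **Depth bound for the lower branch of a winglike translator.**
If `η` solves `η''(x) = (1+η'(x)²)(η'(x) + (n−1)/η(x))` on `[0, d]` with
`0 < η ≤ R*`, `η'(0) = 0` and `η' ≥ 0` on `[0, d]`, then `d ≤ (π/2)·R*/(n−1)`. -/
theorem winglike_lower_branch_depth_bound
    (n : ℕ) (hn : 2 ≤ n) (d Rs : ℝ) (hd : 0 < d) (hRs : 0 < Rs)
    (η η' : ℝ → ℝ)
    (hbound : ∀ x, x ∈ Set.Icc 0 d → 0 < η x ∧ η x ≤ Rs)
    (hη : ∀ x, x ∈ Set.Icc 0 d → HasDerivAt η (η' x) x)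
    (hode : ∀ x, x ∈ Set.Icc 0 d →
      HasDerivAt η' ((1 + η' x ^ 2) * (η' x + ((n : ℝ) - 1) / η x)) x)
    (hη'0 : η' 0 = 0)
    (hη'nonneg : ∀ x, x ∈ Set.Icc 0 d → 0 ≤ η' x) :
    d ≤ Real.pi / 2 * Rs / ((n : ℝ) - 1) := by
  have hn1 : (1 : ℝ) ≤ (n : ℝ) - 1 := by
    have : (2 : ℝ) ≤ (n : ℝ) := by exact_mod_cast hn
    linarith
  have hn1pos : (0 : ℝ) < (n : ℝ) - 1 := by linarith
  set C : ℝ := ((n : ℝ) - 1) / Rs with hC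
  have hCpos : 0 < C := div_pos hn1pos hRs
  set g : ℝ → ℝ := fun x => Real.arctan (η' x) - C * x with hg
  -- derivative of g on Icc
  have hg' : ∀ x ∈ Set.Icc (0:ℝ) d,
      HasDerivAt g (η' x + ((n : ℝ) - 1) / η x - C) x := by
    intro x hx
    have h1 : HasDerivAt (fun y => Real.arctan (η' y))
        ((1 / (1 + η' x ^ 2)) * ((1 + η' x ^ 2) * (η' x + ((n : ℝ) - 1) / η x))) x := by
      have := (Real.hasDerivAt_arctan (η' x)).comp x (hode x hx)
      simpa [mul_comm, Function.comp_def] using this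
    have hne : (1 + η' x ^ 2) ≠ 0 := by positivity
    have h1' : HasDerivAt (fun y => Real.arctan (η' y))
        (η' x + ((n : ℝ) - 1) / η x) x := by
      convert h1 using 1
      field_simp
    exact (h1'.sub ((hasDerivAt_id x).const_mul C)).congr_deriv (by simp)
  -- derivative nonneg
  have hg'nonneg : ∀ x ∈ Set.Icc (0:ℝ) d, 0 ≤ η' x + ((n : ℝ) - 1) / η x - C := by
    intro x hx
    have hpos := (hbound x hx).1
    have hle := (hbound x hx).2
    have h2 : C ≤ ((n : ℝ) - 1) / η x :=
      div_le_div_of_nonneg_left (le_of_lt hn1pos) hpos hle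
    have := hη'nonneg x hx
    linarith
  have hmono : MonotoneOn g (Set.Icc 0 d) := by
    apply monotoneOn_of_hasDerivWithinAt_nonneg (convex_Icc 0 d)
      (f' := fun x => η' x + ((n : ℝ) - 1) / η x - C)
    · exact fun x hx => (hg' x hx).continuousAt.continuousWithinAt
    · intro x hx
      exact (hg' x (interior_subset hx)).hasDerivWithinAt
    · intro x hx
      exact hg'nonneg x (interior_subset hx)
  have h0 : (0:ℝ) ∈ Set.Icc (0:ℝ) d := by constructor <;> [rfl; linarith]
  have hdmem : d ∈ Set.Icc (0:ℝ) d := by constructor <;> linarith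
  have hgle : g 0 ≤ g d := hmono h0 hdmem (le_of_lt hd)
  have hg0 : g 0 = 0 := by simp [hg, hη'0]
  have harct : Real.arctan (η' d) < Real.pi / 2 := Real.arctan_lt_pi_div_two _
  have hCd : C * d ≤ Real.pi / 2 := by
    have : C * d ≤ Real.arctan (η' d) := by
      have := hgle
      rw [hg0] at this
      simp only [hg] at this
      linarith
    linarith
  rw [le_div_iff₀ hn1pos]
  rw [hC, div_mul_eq_mul_div, div_le_iff₀ hRs] at hCd
  nlinarith
end
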